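/- arXiv:0707.0226 — 9 statements merged into one kernel-verified Lean document; each statement's English description precedes it below -/
import Mathlib

section
/- For a connected graph G with at least one edge, the maximum number of components over all star-factors of G equals the matching number ν(G) of G. -/
open SimpleGraph

/-- A subgraph is a star-factor if it is spanning, has no isolated vertices,
and every edge has an endpoint of degree one (equivalently, every component
is a star `K_{1,n}` with `n ≥ 1`). -/
def SimpleGraph.Subgraph.IsStarFactor {V : Type*} {G : SimpleGraph V}
    (H : G.Subgraph) : Prop :=
  H.IsSpanning ∧ (∀ v : V, ∃ w, H.Adj v w) ∧
    ∀ ⦃u v⦄, H.Adj u v → (∀ w, H.Adj u w → w = v) ∨ (∀ w, H.Adj v w → w = u)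

/-- The number of connected components of a subgraph. -/
noncomputable def SimpleGraph.Subgraph.numComponents {V : Type*} {G : SimpleGraph V}
    (H : G.Subgraph) : ℕ :=
  Nat.card H.coe.ConnectedComponent

/-- The matching number of a graph: the size of a maximum matching. -/
noncomputable def SimpleGraph.matchingNumber {V : Type*} (G : SimpleGraph V) : ℕ :=
  sSup {n | ∃ M : G.Subgraph, M.IsMatching ∧ M.edgeSet.ncard = n}

lemma count_components_eq {V : Type*} {G : SimpleGraph V} {H M : G.Subgraph}
    (hspan : H.IsSpanning) (m : V → Sym2 V)
    (ha : ∀ a b, H.Adj a b → m a = m b)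
    (hc : ∀ v, m v ∈ M.edgeSet)
    (he : ∀ a b, M.Adj a b → m a = s(a, b))
    (hd : ∀ a b, M.Adj a b → H.Adj a b)
    (hb : ∀ v : V, ∃ x : V, x ∈ m v ∧ H.coe.Reachable ⟨v, hspan v⟩ ⟨x, hspan x⟩) :
    Nat.card H.coe.ConnectedComponent = M.edgeSet.ncard := by
  have hwalk : ∀ (a b : H.verts) (p : H.coe.Walk a b), m a.1 = m b.1 := by
    intro a b p
    induction p with
    | nil => rfl
    | cons h q ih => exact (ha _ _ h).trans ih
  let f : H.coe.ConnectedComponent → M.edgeSet :=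
    ConnectedComponent.lift (fun v => ⟨m v.1, hc v.1⟩)
      (fun v w p _ => Subtype.ext (hwalk v w p))
  have hf : ∀ a : H.verts, f (H.coe.connectedComponentMk a) = ⟨m a.1, hc a.1⟩ := fun a => rfl
  have heta : ∀ (a : H.verts), (⟨a.1, hspan a.1⟩ : H.verts) = a := fun a => Subtype.ext rfl
  have hbij : Function.Bijective f := by
    constructor
    · intro C1 C2 hC
      induction C1 using ConnectedComponent.ind with
      | _ a =>
      induction C2 using ConnectedComponent.ind with
      | _ b =>
      have hab : m a.1 = m b.1 := congrArg Subtype.val hC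
      obtain ⟨x, hx, hrx⟩ := hb a.1
      obtain ⟨y, hy, hry⟩ := hb b.1
      rw [hab] at hx
      have hxy : H.coe.Reachable ⟨x, hspan x⟩ ⟨y, hspan y⟩ := by
        rcases eq_or_ne x y with rfl | hne
        · rfl
        · have hmem := hc b.1
          have hxyeq : m b.1 = s(x, y) := (Sym2.mem_and_mem_iff hne).mp ⟨hx, hy⟩
          rw [hxyeq, Subgraph.mem_edgeSet] at hmem
          exact (SimpleGraph.Subgraph.Adj.coe (hd _ _ hmem)).reachable
      apply ConnectedComponent.sound
      have h1 : H.coe.Reachable a ⟨x, hspan x⟩ := heta a ▸ hrx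
      have h2 : H.coe.Reachable b ⟨y, hspan y⟩ := heta b ▸ hry
      exact (h1.trans hxy).trans h2.symm
    · rintro ⟨e, heM⟩
      induction e with
      | _ p q =>
      have hpq : M.Adj p q := Subgraph.mem_edgeSet.mp heM
      refine ⟨H.coe.connectedComponentMk ⟨p, hspan p⟩, ?_⟩
      rw [hf]
      exact Subtype.ext (he p q hpq)
  rw [Nat.card_eq_of_bijective f hbij, Nat.card_coe_set_eq]


lemma matching_insert {V : Type*} [Fintype V] {G : SimpleGraph V} {M : G.Subgraph}
    (hM : M.IsMatching) {u w : V} (huw : G.Adj u w) (hu : u ∉ M.verts)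
    (hw : w ∉ M.verts) :
    ∃ M2 : G.Subgraph, M2.IsMatching ∧ M2.edgeSet.ncard = M.edgeSet.ncard + 1 := by
  have hne : u ≠ w := huw.ne
  have hadj : ∀ a b, (M.Adj a b ∨ (a = u ∧ b = w) ∨ (a = w ∧ b = u)) → G.Adj a b := by
    rintro a b (h | ⟨rfl, rfl⟩ | ⟨rfl, rfl⟩)
    exacts [M.adj_sub h, huw, huw.symm]
  have hvert : ∀ a b, (M.Adj a b ∨ (a = u ∧ b = w) ∨ (a = w ∧ b = u)) →
      a ∈ M.verts ∪ {u, w} := by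
    rintro a b (h | ⟨rfl, rfl⟩ | ⟨rfl, rfl⟩)
    exacts [Or.inl (M.edge_vert h), Or.inr (by simp), Or.inr (by simp)]
  have hsymm : ∀ a b, (M.Adj a b ∨ (a = u ∧ b = w) ∨ (a = w ∧ b = u)) →
      (M.Adj b a ∨ (b = u ∧ a = w) ∨ (b = w ∧ a = u)) := by
    rintro a b (h | ⟨rfl, rfl⟩ | ⟨rfl, rfl⟩)
    exacts [Or.inl h.symm, Or.inr (Or.inr ⟨rfl, rfl⟩), Or.inr (Or.inl ⟨rfl, rfl⟩)]
  set M2 : G.Subgraph :=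
    ⟨M.verts ∪ {u, w}, fun a b => M.Adj a b ∨ (a = u ∧ b = w) ∨ (a = w ∧ b = u),
      fun {a b} h => hadj a b h, fun {a b} h => hvert a b h,
      ⟨fun a b h => hsymm a b h⟩⟩ with hM2
  have hM2adj : ∀ a b, M2.Adj a b ↔ (M.Adj a b ∨ (a = u ∧ b = w) ∨ (a = w ∧ b = u)) :=
    fun a b => Iff.rfl
  refine ⟨M2, ?_, ?_⟩
  · rintro v (hv | hv)
    · obtain ⟨b, hb, hub⟩ := hM hv
      refine ⟨b, Or.inl hb, ?_⟩
      rintro y hy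
      rcases (hM2adj v y).mp hy with hy' | ⟨rfl, rfl⟩ | ⟨rfl, rfl⟩
      · exact hub y hy'
      · exact absurd hv hu
      · exact absurd hv hw
    · rcases hv with rfl | rfl
      · refine ⟨w, Or.inr (Or.inl ⟨rfl, rfl⟩), ?_⟩
        rintro y hy
        rcases (hM2adj v y).mp hy with hy' | ⟨_, rfl⟩ | ⟨h, rfl⟩
        · exact absurd (M.edge_vert hy') hu
        · rfl
        · exact absurd h hne
      · refine ⟨u, Or.inr (Or.inr ⟨rfl, rfl⟩), ?_⟩
        rintro y hy
        rcases (hM2adj v y).mp hy with hy' | ⟨h, rfl⟩ | ⟨_, rfl⟩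
        · exact absurd (M.edge_vert hy') hw
        · exact absurd h.symm hne
        · rfl
  · have hes : M2.edgeSet = insert s(u, w) M.edgeSet := by
      ext e
      induction e with
      | _ a b =>
        rw [Subgraph.mem_edgeSet, hM2adj, Set.mem_insert_iff, Subgraph.mem_edgeSet,
          Sym2.eq_iff]
        tauto
    have hnotmem : s(u, w) ∉ M.edgeSet := fun hmem => hu (M.edge_vert hmem)
    rw [hes, Set.ncard_insert_of_notMem hnotmem M.edgeSet.toFinite]


lemma matching_swap {V : Type*} [Fintype V] {G : SimpleGraph V} {M : G.Subgraph}
    (hM : M.IsMatching) {x y w1 w2 : V} (hxy : M.Adj x y)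
    (h1 : G.Adj w1 x) (h2 : G.Adj w2 y)
    (hw1 : w1 ∉ M.verts) (hw2 : w2 ∉ M.verts) (hw12 : w1 ≠ w2) :
    ∃ M2 : G.Subgraph, M2.IsMatching ∧ M2.edgeSet.ncard = M.edgeSet.ncard + 1 := by
  have hx : x ∈ M.verts := M.edge_vert hxy
  have hy : y ∈ M.verts := M.edge_vert hxy.symm
  have hxyne : x ≠ y := hxy.ne
  have hw1x : w1 ≠ x := fun h => hw1 (h ▸ hx)
  have hw1y : w1 ≠ y := fun h => hw1 (h ▸ hy)
  have hw2x : w2 ≠ x := fun h => hw2 (h ▸ hx)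
  have hw2y : w2 ≠ y := fun h => hw2 (h ▸ hy)
  set A : V → V → Prop := fun a b =>
    (M.Adj a b ∧ s(a, b) ≠ s(x, y)) ∨ s(a, b) = s(w1, x) ∨ s(a, b) = s(w2, y) with hA
  have hAsub : ∀ a b, A a b → G.Adj a b := by
    rintro a b (⟨h, -⟩ | h | h)
    · exact M.adj_sub h
    · rcases Sym2.eq_iff.mp h with ⟨rfl, rfl⟩ | ⟨rfl, rfl⟩
      exacts [h1, h1.symm]
    · rcases Sym2.eq_iff.mp h with ⟨rfl, rfl⟩ | ⟨rfl, rfl⟩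
      exacts [h2, h2.symm]
  have hAvert : ∀ a b, A a b → a ∈ M.verts ∪ {w1, w2} := by
    rintro a b (⟨h, -⟩ | h | h)
    · exact Or.inl (M.edge_vert h)
    · rcases Sym2.eq_iff.mp h with ⟨rfl, rfl⟩ | ⟨rfl, rfl⟩
      exacts [Or.inr (by simp), Or.inl hx]
    · rcases Sym2.eq_iff.mp h with ⟨rfl, rfl⟩ | ⟨rfl, rfl⟩
      exacts [Or.inr (by simp), Or.inl hy]
  have hAsymm : ∀ a b, A a b → A b a := by
    intro a b h
    show (M.Adj b a ∧ s(b, a) ≠ s(x, y)) ∨ s(b, a) = s(w1, x) ∨ s(b, a) = s(w2, y)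
    rw [Sym2.eq_swap]
    rcases h with ⟨h, hne⟩ | h | h
    exacts [Or.inl ⟨h.symm, hne⟩, Or.inr (Or.inl h), Or.inr (Or.inr h)]
  set M2 : G.Subgraph := ⟨M.verts ∪ {w1, w2}, A, fun {a b} h => hAsub a b h,
    fun {a b} h => hAvert a b h, ⟨fun a b h => hAsymm a b h⟩⟩ with hM2
  have hM2adj : ∀ a b, M2.Adj a b ↔ A a b := fun a b => Iff.rfl
  refine ⟨M2, ?_, ?_⟩
  · rintro v (hv | hv)
    · rcases eq_or_ne v x with rfl | hvx
      · refine ⟨w1, (hM2adj v w1).mpr (Or.inr (Or.inl Sym2.eq_swap)), ?_⟩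
        intro z hz
        rcases (hM2adj v z).mp hz with ⟨h, hne⟩ | h | h
        · obtain ⟨b, -, hub⟩ := hM hx
          have hzy : z = y := by rw [hub z h, ← hub y hxy]
          exact absurd (by rw [hzy]) hne
        · rcases Sym2.eq_iff.mp h with ⟨h', rfl⟩ | ⟨-, rfl⟩
          · exact absurd h' hw1x.symm
          · rfl
        · rcases Sym2.eq_iff.mp h with ⟨h', -⟩ | ⟨h', -⟩
          · exact absurd h' hw2x.symm
          · exact absurd h' hxyne
      · rcases eq_or_ne v y with rfl | hvy
        · refine ⟨w2, (hM2adj v w2).mpr (Or.inr (Or.inr Sym2.eq_swap)), ?_⟩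
          intro z hz
          rcases (hM2adj v z).mp hz with ⟨h, hne⟩ | h | h
          · obtain ⟨b, -, hub⟩ := hM hy
            have hzx : z = x := by
              rw [hub z h, ← hub x hxy.symm]
            exact absurd (by rw [hzx, Sym2.eq_swap]) hne
          · rcases Sym2.eq_iff.mp h with ⟨h', -⟩ | ⟨h', -⟩
            · exact absurd h' hw1y.symm
            · exact absurd h' hxyne.symm
          · rcases Sym2.eq_iff.mp h with ⟨h', rfl⟩ | ⟨-, rfl⟩
            · exact absurd h' hw2y.symm
            · rfl
        · obtain ⟨b, hb, hub⟩ := hM hv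
          have hsb : s(v, b) ≠ s(x, y) := by
            intro hcon
            rcases Sym2.eq_iff.mp hcon with ⟨h', -⟩ | ⟨h', -⟩
            exacts [hvx h', hvy h']
          refine ⟨b, (hM2adj v b).mpr (Or.inl ⟨hb, hsb⟩), ?_⟩
          intro z hz
          rcases (hM2adj v z).mp hz with ⟨h, -⟩ | h | h
          · exact hub z h
          · rcases Sym2.eq_iff.mp h with ⟨h', -⟩ | ⟨h', -⟩
            · exact absurd (h' ▸ hv) hw1
            · exact absurd h' hvx
          · rcases Sym2.eq_iff.mp h with ⟨h', -⟩ | ⟨h', -⟩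
            · exact absurd (h' ▸ hv) hw2
            · exact absurd h' hvy
    · rcases hv with rfl | rfl
      · refine ⟨x, (hM2adj v x).mpr (Or.inr (Or.inl rfl)), ?_⟩
        intro z hz
        rcases (hM2adj v z).mp hz with ⟨h, -⟩ | h | h
        · exact absurd (M.edge_vert h) hw1
        · rcases Sym2.eq_iff.mp h with ⟨-, rfl⟩ | ⟨h', rfl⟩
          · rfl
          · exact absurd h' hw1x
        · rcases Sym2.eq_iff.mp h with ⟨h', -⟩ | ⟨h', -⟩
          · exact absurd h' hw12
          · exact absurd h' hw1y
      · refine ⟨y, (hM2adj v y).mpr (Or.inr (Or.inr rfl)), ?_⟩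
        intro z hz
        rcases (hM2adj v z).mp hz with ⟨h, -⟩ | h | h
        · exact absurd (M.edge_vert h) hw2
        · rcases Sym2.eq_iff.mp h with ⟨h', -⟩ | ⟨h', -⟩
          · exact absurd h' hw12.symm
          · exact absurd h' hw2x
        · rcases Sym2.eq_iff.mp h with ⟨-, rfl⟩ | ⟨h', rfl⟩
          · rfl
          · exact absurd h' hw2y
  · have hes : M2.edgeSet = insert s(w1, x) (insert s(w2, y) (M.edgeSet \ {s(x, y)})) := by
      ext e
      induction e with
      | _ a b =>
        rw [Subgraph.mem_edgeSet, hM2adj, Set.mem_insert_iff, Set.mem_insert_iff,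
          Set.mem_diff, Set.mem_singleton_iff, Subgraph.mem_edgeSet]
        show A a b ↔ _
        rw [hA]
        tauto
    have hne1 : s(w1, x) ≠ s(w2, y) := by
      intro h
      rcases Sym2.eq_iff.mp h with ⟨h', -⟩ | ⟨h', -⟩
      exacts [hw12 h', hw1y h']
    have hm1 : s(w1, x) ∉ M.edgeSet := fun h => hw1 (M.edge_vert (Subgraph.mem_edgeSet.mp h))
    have hm2 : s(w2, y) ∉ M.edgeSet := fun h => hw2 (M.edge_vert (Subgraph.mem_edgeSet.mp h))
    have hnm1 : s(w1, x) ∉ insert s(w2, y) (M.edgeSet \ {s(x, y)}) := by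
      rintro (h | ⟨h, -⟩)
      exacts [hne1 h, hm1 h]
    have hnm2 : s(w2, y) ∉ M.edgeSet \ {s(x, y)} := fun h => hm2 h.1
    have hfin : (M.edgeSet \ {s(x, y)}).Finite := (M.edgeSet.toFinite).diff
    have hmemxy : s(x, y) ∈ M.edgeSet := Subgraph.mem_edgeSet.mpr hxy
    have hone : (M.edgeSet \ {s(x, y)}).ncard + 1 = M.edgeSet.ncard :=
      Set.ncard_diff_singleton_add_one hmemxy M.edgeSet.toFinite
    rw [hes, Set.ncard_insert_of_notMem hnm1 ((hfin.insert _)),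
      Set.ncard_insert_of_notMem hnm2 hfin]
    omega


lemma star_factor_le {V : Type*} [Fintype V] {G : SimpleGraph V} {H : G.Subgraph}
    (hspan : H.IsSpanning) (hiso : ∀ v : V, ∃ w, H.Adj v w) :
    ∃ M : G.Subgraph, M.IsMatching ∧
      M.edgeSet.ncard = Nat.card H.coe.ConnectedComponent := by
  classical
  have hg : ∀ v : H.verts, H.Adj v.1 (hiso v.1).choose := fun v => (hiso v.1).choose_spec
  set g : H.verts → V := fun v => (hiso v.1).choose with hgdef
  set eC : H.coe.ConnectedComponent → Sym2 V :=
    fun C => s((Quot.out C).1, g (Quot.out C)) with heC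
  have hout : ∀ C, H.coe.connectedComponentMk (Quot.out C) = C := fun C => Quot.out_eq C
  have heta : ∀ (a : H.verts), (⟨a.1, hspan a.1⟩ : H.verts) = a := fun a => Subtype.ext rfl
  have hend : ∀ (C) (v : V), v ∈ eC C → H.coe.connectedComponentMk ⟨v, hspan v⟩ = C := by
    intro C v hvC
    rcases Sym2.mem_iff.mp hvC with rfl | rfl
    · rw [heta]; exact hout C
    · have hadj : H.coe.Adj ⟨g (Quot.out C), hspan _⟩ (Quot.out C) :=
        (hg (Quot.out C)).symm
      rw [ConnectedComponent.connectedComponentMk_eq_of_adj hadj]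
      exact hout C
  have hAsub : ∀ a b, (∃ C, s(a, b) = eC C) → G.Adj a b := by
    rintro a b ⟨C, hC⟩
    rcases Sym2.eq_iff.mp hC with ⟨rfl, rfl⟩ | ⟨rfl, rfl⟩
    · exact H.adj_sub (hg (Quot.out C))
    · exact H.adj_sub (hg (Quot.out C)).symm
  set M : G.Subgraph := ⟨{v | ∃ C, v ∈ eC C}, fun a b => ∃ C, s(a, b) = eC C,
    fun {a b} h => hAsub a b h,
    fun {a b} h => by obtain ⟨C, hC⟩ := h; exact ⟨C, hC ▸ Sym2.mem_mk_left a b⟩,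
    ⟨fun a b h => h.imp (fun C hC => Sym2.eq_swap.trans hC)⟩⟩ with hMdef
  have hMadj : ∀ a b, M.Adj a b ↔ ∃ C, s(a, b) = eC C := fun a b => Iff.rfl
  have hHadj : ∀ a b, M.Adj a b → H.Adj a b := by
    rintro a b ⟨C, hC⟩
    rcases Sym2.eq_iff.mp hC with ⟨rfl, rfl⟩ | ⟨rfl, rfl⟩
    · exact hg (Quot.out C)
    · exact (hg (Quot.out C)).symm
  have huniq : ∀ v z, M.Adj v z → s(v, z) = eC (H.coe.connectedComponentMk ⟨v, hspan v⟩) := by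
    rintro v z ⟨C, hC⟩
    rw [hend C v (hC ▸ Sym2.mem_mk_left v z)]
    exact hC
  have hMmatch : M.IsMatching := by
    rintro v ⟨C0, hv0⟩
    have hC0 : H.coe.connectedComponentMk ⟨v, hspan v⟩ = C0 := hend C0 v hv0
    rcases Sym2.mem_iff.mp hv0 with h | h
    · refine ⟨g (Quot.out C0), ⟨C0, by rw [h, heC]⟩, ?_⟩
      intro z hz
      have h1 := huniq v z hz
      rw [hC0, heC] at h1
      rw [h] at h1
      exact Sym2.congr_right.mp h1
    · refine ⟨(Quot.out C0).1, ⟨C0, by rw [h, Sym2.eq_swap, heC]⟩, ?_⟩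
      intro z hz
      have h1 := huniq v z hz
      rw [hC0, heC] at h1
      rw [h] at h1
      rcases Sym2.eq_iff.mp h1 with ⟨he1, -⟩ | ⟨-, h2⟩
      · exact absurd he1.symm (H.adj_sub (hg (Quot.out C0))).ne
      · exact h2
  refine ⟨M, hMmatch, ?_⟩
  refine (count_components_eq hspan
    (fun v => eC (H.coe.connectedComponentMk ⟨v, hspan v⟩)) ?_ ?_ ?_ hHadj ?_).symm
  · intro a b hab
    have hco : H.coe.Adj ⟨a, hspan a⟩ ⟨b, hspan b⟩ := hab
    exact congrArg eC (ConnectedComponent.connectedComponentMk_eq_of_adj hco)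
  · intro v
    rw [heC]
    exact Subgraph.mem_edgeSet.mpr ⟨_, by rw [heC]⟩
  · intro a b hab
    exact (huniq a b hab).symm
  · intro v
    refine ⟨(Quot.out (H.coe.connectedComponentMk ⟨v, hspan v⟩)).1,
      Sym2.mem_mk_left _ _, ?_⟩
    apply ConnectedComponent.exact
    rw [heta]
    exact (hout _).symm


lemma exists_star_factor {V : Type*} [Fintype V] {G : SimpleGraph V} {M : G.Subgraph}
    (hM : M.IsMatching) (hnbr : ∀ v : V, ∃ w, G.Adj v w)
    (hmax : ∀ M2 : G.Subgraph, M2.IsMatching → M2.edgeSet.ncard ≤ M.edgeSet.ncard) :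
    ∃ H : G.Subgraph, (H.IsSpanning ∧ (∀ v : V, ∃ w, H.Adj v w) ∧
      ∀ ⦃u v⦄, H.Adj u v → (∀ w, H.Adj u w → w = v) ∨ (∀ w, H.Adj v w → w = u)) ∧
      Nat.card H.coe.ConnectedComponent = M.edgeSet.ncard := by
  classical
  set p : V → V := fun v =>
    if hv : v ∈ M.verts then (hM hv).choose else (hnbr v).choose with hpdef
  have hp1 : ∀ v (hv : v ∈ M.verts), M.Adj v (p v) ∧ ∀ z, M.Adj v z → z = p v := by
    intro v hv
    rw [hpdef]
    simp only [dif_pos hv]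
    exact ⟨(hM hv).choose_spec.1, fun z hz => (hM hv).choose_spec.2 z hz⟩
  have hp2 : ∀ v (hv : v ∉ M.verts), G.Adj v (p v) := by
    intro v hv
    rw [hpdef]
    simp only [dif_neg hv]
    exact (hnbr v).choose_spec
  have hp3 : ∀ v (hv : v ∉ M.verts), p v ∈ M.verts := by
    intro v hv
    by_contra hpv
    obtain ⟨M2, hM2, hc2⟩ := matching_insert hM (hp2 v hv) hv hpv
    have := hmax M2 hM2
    omega
  set A : V → V → Prop := fun a b =>
    M.Adj a b ∨ (a ∉ M.verts ∧ p a = b) ∨ (b ∉ M.verts ∧ p b = a) with hA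
  have hAsub : ∀ a b, A a b → G.Adj a b := by
    rintro a b (h | ⟨ha, rfl⟩ | ⟨hb, rfl⟩)
    exacts [M.adj_sub h, hp2 a ha, (hp2 b hb).symm]
  have hAsymm : ∀ a b, A a b → A b a := by
    rintro a b (h | h | h)
    exacts [Or.inl h.symm, Or.inr (Or.inr h), Or.inr (Or.inl h)]
  set H : G.Subgraph := ⟨Set.univ, A, fun {a b} h => hAsub a b h,
    fun {a b} _ => Set.mem_univ a, ⟨fun a b h => hAsymm a b h⟩⟩ with hH
  have hHadj : ∀ a b, H.Adj a b ↔ A a b := fun a b => Iff.rfl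
  have hspan : H.IsSpanning := fun v => Set.mem_univ v
  have hiso : ∀ v : V, ∃ w, H.Adj v w := by
    intro v
    by_cases hv : v ∈ M.verts
    · exact ⟨p v, Or.inl (hp1 v hv).1⟩
    · exact ⟨p v, Or.inr (Or.inl ⟨hv, rfl⟩)⟩
  have hstar : ∀ ⦃u v⦄, H.Adj u v →
      (∀ w, H.Adj u w → w = v) ∨ (∀ w, H.Adj v w → w = u) := by
    intro u v huv
    rcases (hHadj u v).mp huv with h | ⟨hu, rfl⟩ | ⟨hv, hpv⟩
    · -- matching edge
      have hu : u ∈ M.verts := M.edge_vert h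
      have hv : v ∈ M.verts := M.edge_vert h.symm
      have hpu : v = p u := (hp1 u hu).2 v h
      have hpv : u = p v := (hp1 v hv).2 u h.symm
      by_contra hcon
      push_neg at hcon
      obtain ⟨⟨z1, hz1, hz1v⟩, ⟨z2, hz2, hz2u⟩⟩ := hcon
      have hz1m : z1 ∉ M.verts ∧ p z1 = u := by
        rcases (hHadj u z1).mp hz1 with h' | ⟨h', -⟩ | h'
        · exact absurd ((hp1 u hu).2 z1 h' |>.trans hpu.symm) hz1v
        · exact absurd hu h'
        · exact h'
      have hz2m : z2 ∉ M.verts ∧ p z2 = v := by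
        rcases (hHadj v z2).mp hz2 with h' | ⟨h', -⟩ | h'
        · exact absurd ((hp1 v hv).2 z2 h' |>.trans hpv.symm) hz2u
        · exact absurd hv h'
        · exact h'
      have hz12 : z1 ≠ z2 := by
        rintro rfl
        exact h.ne (hz1m.2.symm.trans hz2m.2)
      have hg1 : G.Adj z1 u := hz1m.2 ▸ hp2 z1 hz1m.1
      have hg2 : G.Adj z2 v := hz2m.2 ▸ hp2 z2 hz2m.1
      obtain ⟨M2, hM2, hc2⟩ := matching_swap hM h hg1 hg2 hz1m.1 hz2m.1 hz12
      have := hmax M2 hM2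
      omega
    · -- pendant at u
      refine Or.inl ?_
      intro w hw
      rcases (hHadj u w).mp hw with h' | ⟨-, h'⟩ | ⟨hw', h'⟩
      · exact absurd (M.edge_vert h') hu
      · exact h'.symm
      · exact absurd (h' ▸ hp3 w hw') hu
    · -- pendant at v
      refine Or.inr ?_
      intro w hw
      rcases (hHadj v w).mp hw with h' | ⟨-, h'⟩ | ⟨hw', h'⟩
      · exact absurd (M.edge_vert h') hv
      · exact h'.symm.trans hpv
      · exact absurd (h' ▸ hp3 w hw') hv
  refine ⟨H, ⟨hspan, hiso, hstar⟩, ?_⟩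
  set m : V → Sym2 V := fun v =>
    if v ∈ M.verts then s(v, p v) else s(p v, p (p v)) with hm
  have hmmatched : ∀ v (hv : v ∈ M.verts), m v = s(v, p v) := by
    intro v hv; rw [hm]; simp only [if_pos hv]
  have hmun : ∀ v (hv : v ∉ M.verts), m v = s(p v, p (p v)) := by
    intro v hv; rw [hm]; simp only [if_neg hv]
  apply count_components_eq hspan m
  · -- ha
    intro a b hab
    rcases (hHadj a b).mp hab with h | ⟨ha', rfl⟩ | ⟨hb', h'⟩
    · have ha' := M.edge_vert h
      have hb' := M.edge_vert h.symm
      rw [hmmatched a ha', hmmatched b hb', ← (hp1 a ha').2 b h, ← (hp1 b hb').2 a h.symm,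
        Sym2.eq_swap]
    · rw [hmun a ha', hmmatched (p a) (hp3 a ha')]
    · rw [hmun b hb', h', hmmatched a (h' ▸ hp3 b hb')]
  · -- hc
    intro v
    by_cases hv : v ∈ M.verts
    · rw [hmmatched v hv]
      exact Subgraph.mem_edgeSet.mpr (hp1 v hv).1
    · rw [hmun v hv]
      exact Subgraph.mem_edgeSet.mpr (hp1 (p v) (hp3 v hv)).1
  · -- he
    intro a b hab
    rw [hmmatched a (M.edge_vert hab), ← (hp1 a (M.edge_vert hab)).2 b hab]
  · -- hd
    intro a b hab
    exact Or.inl hab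
  · -- hb
    intro v
    by_cases hv : v ∈ M.verts
    · refine ⟨v, ?_, Reachable.refl _⟩
      rw [hmmatched v hv]
      exact Sym2.mem_mk_left v (p v)
    · refine ⟨p v, ?_, ?_⟩
      · rw [hmun v hv]
        exact Sym2.mem_mk_left _ _
      · have : H.coe.Adj ⟨v, hspan v⟩ ⟨p v, hspan (p v)⟩ :=
          (Or.inr (Or.inl ⟨hv, rfl⟩) : A v (p v))
        exact this.reachable

theorem max_star_factor_components_eq_matchingNumber {V : Type*} [Fintype V]
    (G : SimpleGraph V) (hconn : G.Connected) (hedge : ∃ u v, G.Adj u v) :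
    IsGreatest {n | ∃ H : G.Subgraph, H.IsStarFactor ∧ H.numComponents = n}
      G.matchingNumber := by
  classical
  have hbot : (0 : ℕ) ∈ {n | ∃ M : G.Subgraph, M.IsMatching ∧ M.edgeSet.ncard = n} :=
    ⟨⊥, fun v hv => by simp [Subgraph.verts_bot] at hv, by simp [Subgraph.edgeSet_bot]⟩
  have hbdd : BddAbove {n | ∃ M : G.Subgraph, M.IsMatching ∧ M.edgeSet.ncard = n} := by
    refine ⟨G.edgeSet.ncard, ?_⟩
    rintro n ⟨M, hM, rfl⟩
    exact Set.ncard_le_ncard M.edgeSet_subset G.edgeSet.toFinite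
  have hmem : G.matchingNumber ∈
      {n | ∃ M : G.Subgraph, M.IsMatching ∧ M.edgeSet.ncard = n} :=
    Nat.sSup_mem ⟨0, hbot⟩ hbdd
  obtain ⟨M, hM, hMcard⟩ := hmem
  have hmax : ∀ M2 : G.Subgraph, M2.IsMatching → M2.edgeSet.ncard ≤ M.edgeSet.ncard := by
    intro M2 h2
    rw [hMcard]
    exact le_csSup hbdd ⟨M2, h2, rfl⟩
  have hnbr : ∀ v : V, ∃ w, G.Adj v w := by
    intro v
    obtain ⟨a, b, hab⟩ := hedge
    obtain ⟨q⟩ := hconn.preconnected v a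
    cases q with
    | nil => exact ⟨b, hab⟩
    | cons h q => exact ⟨_, h⟩
  constructor
  · obtain ⟨H, hsf, hcount⟩ := exists_star_factor hM hnbr hmax
    exact ⟨H, hsf, hcount.trans hMcard⟩
  · rintro n ⟨H, ⟨hspan, hiso, hstar⟩, rfl⟩
    obtain ⟨M2, hM2, hc2⟩ := star_factor_le hspan hiso
    have : H.numComponents = M2.edgeSet.ncard := hc2.symm
    rw [this]
    exact le_csSup hbdd ⟨M2, hM2, rfl⟩
end

section
/- For a connected graph G with at least one edge, the minimum number of components over all star-factors of G equals the domination number γ(G). -/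
open SimpleGraph

/-- The domination number of a graph: the least size of a dominating set. -/
noncomputable def SimpleGraph.dominationNumber {V : Type*} (G : SimpleGraph V) : ℕ :=
  sInf {n | ∃ s : Set V, s.ncard = n ∧ ∀ v, v ∈ s ∨ ∃ u ∈ s, G.Adj u v}

section Aux

variable {V : Type*} [Fintype V] {G : SimpleGraph V}

/-- In a connected graph with an edge, every vertex has a neighbor. -/
lemma aux_exists_adj (hconn : G.Connected) (hedge : ∃ u v, G.Adj u v) (x : V) :
    ∃ w, G.Adj x w := by
  obtain ⟨u, v, huv⟩ := hedge
  by_cases hxu : x = u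
  · exact ⟨v, hxu ▸ huv⟩
  · obtain ⟨p⟩ := hconn.preconnected x u
    cases p with
    | nil => exact absurd rfl hxu
    | cons h _ => exact ⟨_, h⟩

/-- In a star factor, a neighbor of a "center" is a leaf pointing back to it. -/
lemma aux_leaf {H : G.Subgraph}
    (hstar : ∀ ⦃u v⦄, H.Adj u v → (∀ w, H.Adj u w → w = v) ∨ (∀ w, H.Adj v w → w = u))
    {v w a : V} (hw : H.Adj v w) (hleaf : ∀ x, H.Adj w x → x = v)
    (ha : H.Adj v a) : ∀ x, H.Adj a x → x = v := by
  rcases hstar ha with h1 | h2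
  · have : w = a := h1 _ hw
    exact this ▸ hleaf
  · exact h2

/-- Everything reachable from a center is it or adjacent to it. -/
lemma aux_reach {H : G.Subgraph}
    (hstar : ∀ ⦃u v⦄, H.Adj u v → (∀ w, H.Adj u w → w = v) ∨ (∀ w, H.Adj v w → w = u))
    {v w : V} (hw : H.Adj v w) (hleaf : ∀ x, H.Adj w x → x = v) :
    ∀ {a b : H.verts} (_ : H.coe.Walk a b),
      (a.val = v ∨ H.Adj v a.val) → (b.val = v ∨ H.Adj v b.val) := by
  intro a b p
  induction p with
  | nil => exact id
  | @cons x y z h p ih =>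
    intro hx
    apply ih
    have hadj : H.Adj x.val y.val := h
    rcases hx with hx | hx
    · right; rwa [hx] at hadj
    · left; exact aux_leaf hstar hw hleaf hx _ hadj

/-- Lower bound: the domination number is at most the number of components of
any star factor. -/
lemma aux_lower (hconn : G.Connected) (hedge : ∃ u v, G.Adj u v)
    (H : G.Subgraph) (hs : H.IsStarFactor) :
    G.dominationNumber ≤ H.numComponents := by
  classical
  obtain ⟨hspan, hne, hstar⟩ := hs
  -- for every component, there is a center in it
  have hex : ∀ C : H.coe.ConnectedComponent, ∃ u : H.verts,
      H.coe.connectedComponentMk u = C ∧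
        ∃ w, H.Adj u.val w ∧ ∀ x, H.Adj w x → x = u.val := by
    refine SimpleGraph.ConnectedComponent.ind fun r => ?_
    obtain ⟨w, hw⟩ := hne r.val
    have hwv : w ∈ H.verts := hspan w
    rcases hstar hw with h1 | h2
    · -- r is a leaf; its neighbor w is a center
      refine ⟨⟨w, hwv⟩, ?_, ⟨r.val, hw.symm, h1⟩⟩
      have : H.coe.Adj ⟨w, hwv⟩ r := hw.symm
      exact SimpleGraph.ConnectedComponent.connectedComponentMk_eq_of_adj this
    · exact ⟨r, rfl, ⟨w, hw, h2⟩⟩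
  choose σ hσ1 hσ2 using hex
  set s : Set V := Set.range fun C => (σ C).val with hs_def
  have hdom : ∀ v, v ∈ s ∨ ∃ u ∈ s, G.Adj u v := by
    intro v
    have hv : v ∈ H.verts := hspan v
    set C := H.coe.connectedComponentMk ⟨v, hv⟩ with hC
    obtain ⟨w, hw, hleaf⟩ := hσ2 C
    obtain ⟨p⟩ := (SimpleGraph.ConnectedComponent.eq.mp (hσ1 C))
    have := aux_reach hstar hw hleaf p (Or.inl rfl)
    rcases this with h | h
    · left; exact ⟨C, h.symm⟩
    · right; exact ⟨(σ C).val, ⟨C, rfl⟩, H.adj_sub h⟩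
  have h1 : G.dominationNumber ≤ s.ncard := Nat.sInf_le ⟨s, rfl, hdom⟩
  have h2 : s.ncard ≤ H.numComponents := by
    rw [← Nat.card_coe_set_eq]
    exact Nat.card_le_card_of_surjective _ Set.rangeFactorization_surjective
  exact h1.trans h2

end Aux

theorem min_star_factor_components_eq_dominationNumber {V : Type*} [Fintype V]
    (G : SimpleGraph V) (hconn : G.Connected) (hedge : ∃ u v, G.Adj u v) :
    IsLeast {n | ∃ H : G.Subgraph, H.IsStarFactor ∧ H.numComponents = n}
      G.dominationNumber := by
  classical
  constructor
  swap
  · rintro n ⟨H, hs, rfl⟩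
    exact aux_lower hconn hedge H hs
  -- membership: construct a star factor with exactly γ components
  set Γ := G.dominationNumber with hΓ
  have hne_set : {n | ∃ s : Set V, s.ncard = n ∧ ∀ v, v ∈ s ∨ ∃ u ∈ s, G.Adj u v}.Nonempty :=
    ⟨(Set.univ : Set V).ncard, Set.univ, rfl, fun v => Or.inl trivial⟩
  have hattained : ∃ s : Set V, s.ncard = Γ ∧ ∀ v, v ∈ s ∨ ∃ u ∈ s, G.Adj u v :=
    Nat.sInf_mem hne_set
  obtain ⟨D, hDcard, hDdom⟩ := hattained
  have hlb : ∀ s : Set V, (∀ v, v ∈ s ∨ ∃ u ∈ s, G.Adj u v) → Γ ≤ s.ncard :=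
    fun s hs => Nat.sInf_le ⟨s, rfl, hs⟩
  -- every vertex of D has a neighbor outside D
  have hout : ∀ d ∈ D, ∃ w, G.Adj d w ∧ w ∉ D := by
    intro d hd
    by_contra hcon
    push_neg at hcon
    have hdom' : ∀ v, v ∈ D \ {d} ∨ ∃ u ∈ D \ {d}, G.Adj u v := by
      intro v
      by_cases hvD : v ∈ D
      · by_cases hvd : v = d
        · subst hvd
          obtain ⟨w, hw⟩ := aux_exists_adj hconn hedge v
          exact Or.inr ⟨w, ⟨hcon w hw, fun h => G.irrefl (h ▸ hw)⟩, hw.symm⟩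
        · exact Or.inl ⟨hvD, hvd⟩
      · rcases hDdom v with h | ⟨u, hu, hadj⟩
        · exact absurd h hvD
        · by_cases hud : u = d
          · exact absurd (hcon v (hud ▸ hadj)) hvD
          · exact Or.inr ⟨u, ⟨hu, hud⟩, hadj⟩
    have h1 := hlb _ hdom'
    have h2 : (D \ {d}).ncard < D.ncard :=
      Set.ncard_diff_singleton_lt_of_mem hd (Set.toFinite D)
    omega
  -- Hall's condition for matching each d ∈ D to a private outside neighbor
  set DF : Finset V := (Set.toFinite D).toFinset with hDF
  have hmemDF : ∀ x, x ∈ DF ↔ x ∈ D := fun x => Set.Finite.mem_toFinset _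
  have hDFcard : DF.card = Γ := by
    rw [← hDcard, hDF, ← Set.ncard_eq_toFinset_card D (Set.toFinite D)]

  set t : {x // x ∈ DF} → Finset V := fun d => G.neighborFinset d.val \ DF with ht
  have hall : ∀ A : Finset {x // x ∈ DF}, A.card ≤ (A.biUnion t).card := by
    intro A
    by_contra hlt
    push_neg at hlt
    set B := A.biUnion t with hB
    set D' : Finset V := (DF \ A.image Subtype.val) ∪ B with hD'
    have hdom' : ∀ v, v ∈ (D' : Set V) ∨ ∃ u ∈ (D' : Set V), G.Adj u v := by
      intro v
      by_cases hvD : v ∈ D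
      · have hvDF : v ∈ DF := (hmemDF v).mpr hvD
        by_cases hvA : (⟨v, hvDF⟩ : {x // x ∈ DF}) ∈ A
        · obtain ⟨w, hw, hwD⟩ := hout v hvD
          have hwB : w ∈ B := Finset.mem_biUnion.mpr ⟨⟨v, hvDF⟩, hvA,
            Finset.mem_sdiff.mpr ⟨(G.mem_neighborFinset v w).mpr hw, fun h => hwD ((hmemDF w).mp h)⟩⟩
          exact Or.inr ⟨w, Finset.mem_coe.mpr (Finset.mem_union_right _ hwB), hw.symm⟩
        · left
          refine Finset.mem_coe.mpr (Finset.mem_union_left _ (Finset.mem_sdiff.mpr ⟨hvDF, ?_⟩))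
          intro hmem
          obtain ⟨a, haA, hav⟩ := Finset.mem_image.mp hmem
          apply hvA
          have : a = ⟨v, hvDF⟩ := Subtype.ext hav
          exact this ▸ haA
      · rcases hDdom v with h | ⟨u, hu, hadj⟩
        · exact absurd h hvD
        · have huDF : u ∈ DF := (hmemDF u).mpr hu
          by_cases huA : (⟨u, huDF⟩ : {x // x ∈ DF}) ∈ A
          · left
            refine Finset.mem_coe.mpr (Finset.mem_union_right _ (Finset.mem_biUnion.mpr
              ⟨⟨u, huDF⟩, huA, Finset.mem_sdiff.mpr ⟨(G.mem_neighborFinset u v).mpr hadj,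
                fun h => hvD ((hmemDF v).mp h)⟩⟩))
          · refine Or.inr ⟨u, Finset.mem_coe.mpr (Finset.mem_union_left _
              (Finset.mem_sdiff.mpr ⟨huDF, ?_⟩)), hadj⟩
            intro hmem
            obtain ⟨a, haA, hav⟩ := Finset.mem_image.mp hmem
            have : a = ⟨u, huDF⟩ := Subtype.ext hav
            exact huA (this ▸ haA)
    have h1 := hlb _ hdom'
    rw [Set.ncard_coe_finset] at h1
    have h2 : D'.card ≤ (DF \ A.image Subtype.val).card + B.card := Finset.card_union_le _ _
    have h3 : (DF \ A.image Subtype.val).card = DF.card - A.card := by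
      rw [Finset.card_sdiff_of_subset]
      · rw [Finset.card_image_of_injective _ Subtype.val_injective]
      · intro x hx
        obtain ⟨a, _, hav⟩ := Finset.mem_image.mp hx
        exact hav ▸ a.property
    have h4 : A.card ≤ DF.card := by
      have := Finset.card_le_card (Finset.image_subset_iff.mpr
        (fun a _ => a.property) : A.image Subtype.val ⊆ DF)
      rwa [Finset.card_image_of_injective _ Subtype.val_injective] at this
    omega
  obtain ⟨m, hminj, hmt⟩ := (Finset.all_card_le_biUnion_card_iff_exists_injective t).mp hall
  have hmadj : ∀ d, G.Adj d.val (m d) := fun d =>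
    (G.mem_neighborFinset _ _).mp (Finset.mem_sdiff.mp (hmt d)).1
  have hmD : ∀ d, m d ∉ D := fun d h =>
    (Finset.mem_sdiff.mp (hmt d)).2 ((hmemDF _).mpr h)
  -- the center-assignment function
  have hcex : ∀ v : V, v ∉ D → ∃ u, u ∈ D ∧ G.Adj u v := by
    intro v hv
    rcases hDdom v with h | ⟨u, hu, ha⟩
    · exact absurd h hv
    · exact ⟨u, hu, ha⟩
  set f : V → V := fun v =>
    if hv : v ∈ D then v
    else if h : ∃ d : {x // x ∈ DF}, m d = v then (h.choose : {x // x ∈ DF}).val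
    else (hcex v hv).choose with hf
  have p1 : ∀ v, v ∉ D → f v ∈ D ∧ G.Adj (f v) v := by
    intro v hv
    rw [hf]
    simp only [dif_neg hv]
    by_cases h : ∃ d : {x // x ∈ DF}, m d = v
    · rw [dif_pos h]
      refine ⟨(hmemDF _).mp h.choose.property, ?_⟩
      have := hmadj h.choose
      rwa [h.choose_spec] at this
    · rw [dif_neg h]
      exact ⟨(hcex v hv).choose_spec.1, (hcex v hv).choose_spec.2⟩
  have p3 : ∀ d ∈ D, ∃ v, v ∉ D ∧ f v = d := by
    intro d hd
    have hdDF : d ∈ DF := (hmemDF d).mpr hd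
    refine ⟨m ⟨d, hdDF⟩, hmD _, ?_⟩
    rw [hf]
    have hnot : m ⟨d, hdDF⟩ ∉ D := hmD _
    simp only [dif_neg hnot]
    have h : ∃ d' : {x // x ∈ DF}, m d' = m ⟨d, hdDF⟩ := ⟨⟨d, hdDF⟩, rfl⟩
    rw [dif_pos h]
    have := hminj h.choose_spec
    rw [this]
  -- the star factor
  set H : G.Subgraph :=
    { verts := Set.univ
      Adj := fun x y => (x ∉ D ∧ f x = y) ∨ (y ∉ D ∧ f y = x)
      adj_sub := by
        rintro x y (⟨hx, rfl⟩ | ⟨hy, rfl⟩)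
        · exact ((p1 x hx).2).symm
        · exact (p1 y hy).2
      edge_vert := fun _ => Set.mem_univ _
      symm := ⟨by rintro x y (h | h); exacts [Or.inr h, Or.inl h]⟩ } with hH
  have hHadj : ∀ x y, H.Adj x y ↔ ((x ∉ D ∧ f x = y) ∨ (y ∉ D ∧ f y = x)) := fun x y => Iff.rfl
  have hspan : H.IsSpanning := fun v => Set.mem_univ v
  have hne : ∀ v : V, ∃ w, H.Adj v w := by
    intro v
    by_cases hv : v ∈ D
    · obtain ⟨u, hu, hfu⟩ := p3 v hv
      exact ⟨u, Or.inr ⟨hu, hfu⟩⟩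
    · exact ⟨f v, Or.inl ⟨hv, rfl⟩⟩
  have hstar : ∀ ⦃u v⦄, H.Adj u v → (∀ w, H.Adj u w → w = v) ∨ (∀ w, H.Adj v w → w = u) := by
    rintro u v (⟨hu, rfl⟩ | ⟨hv, hfv⟩)
    · left
      rintro w (⟨_, rfl⟩ | ⟨hw, hfw⟩)
      · rfl
      · exact absurd (hfw ▸ (p1 w hw).1) hu
    · right
      rintro w (⟨_, rfl⟩ | ⟨hw, hfw⟩)
      · exact hfv
      · exact absurd (hfw ▸ (p1 w hw).1) hv
  -- count the components
  have hcount : H.numComponents = Γ := by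
    have hFw : ∀ a b : H.verts, H.coe.Adj a b →
        (if ha : a.val ∈ D then (⟨a.val, ha⟩ : D) else ⟨f a.val, (p1 _ ha).1⟩) =
        (if hb : b.val ∈ D then (⟨b.val, hb⟩ : D) else ⟨f b.val, (p1 _ hb).1⟩) := by
      intro a b hab
      have hab' : H.Adj a.val b.val := hab
      rcases hab' with ⟨ha, hfa⟩ | ⟨hb, hfb⟩
      · have hbD : b.val ∈ D := hfa ▸ (p1 _ ha).1
        rw [dif_neg ha, dif_pos hbD]
        exact Subtype.ext hfa
      · have haD : a.val ∈ D := hfb ▸ (p1 _ hb).1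
        rw [dif_pos haD, dif_neg hb]
        exact Subtype.ext hfb.symm
    set F : H.verts → D := fun a =>
      if ha : a.val ∈ D then (⟨a.val, ha⟩ : D) else ⟨f a.val, (p1 _ ha).1⟩ with hFdef
    have hFwalk : ∀ (a b : H.verts) (p : H.coe.Walk a b), F a = F b := by
      intro a b p
      induction p with
      | nil => rfl
      | cons h _ ih => exact (hFw _ _ h).trans ih
    set φ : H.coe.ConnectedComponent → D :=
      SimpleGraph.ConnectedComponent.lift F (fun a b p _ => hFwalk a b p) with hφ
    set ψ : D → H.coe.ConnectedComponent :=
      fun d => H.coe.connectedComponentMk ⟨d.val, Set.mem_univ _⟩ with hψ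
    have hleft : ∀ d : D, φ (ψ d) = d := by
      intro d
      show F ⟨d.val, _⟩ = d
      rw [hFdef]
      simp only [dif_pos d.property]
    have hright : ∀ C, ψ (φ C) = C := by
      refine SimpleGraph.ConnectedComponent.ind fun a => ?_
      show ψ (F a) = _
      rw [hFdef]
      by_cases ha : a.val ∈ D
      · simp only [dif_pos ha]; rfl
      · simp only [dif_neg ha]
        refine SimpleGraph.ConnectedComponent.connectedComponentMk_eq_of_adj ?_
        show H.Adj (f a.val) a.val
        exact Or.inr ⟨ha, rfl⟩
    have hequiv : H.coe.ConnectedComponent ≃ D :=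
      ⟨φ, ψ, hright, hleft⟩
    rw [Subgraph.numComponents, Nat.card_congr hequiv, Nat.card_coe_set_eq, hDcard]
  exact ⟨H, ⟨hspan, hne, hstar⟩, hcount⟩
end

section
/- If a finite graph G has no isolated vertices, then its domination number satisfies γ(G) ≤ ⌊|V(G)|/2⌋. (Ore's theorem) -/
open SimpleGraph

/-- Ore's theorem: a graph with no isolated vertex has domination number
at most half of its order. -/
theorem ore_domination {V : Type*} [Fintype V] (G : SimpleGraph V)
    (h : ∀ v : V, ∃ w, G.Adj v w) :
    G.dominationNumber ≤ Fintype.card V / 2 := by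
  set P : Set ℕ := {n | ∃ s : Set V, s.ncard = n ∧ ∀ v, v ∈ s ∨ ∃ u ∈ s, G.Adj u v} with hP
  have hne : P.Nonempty := ⟨(Set.univ : Set V).ncard, Set.univ, rfl, fun v => Or.inl trivial⟩
  have hmem : G.dominationNumber ∈ P := Nat.sInf_mem hne
  obtain ⟨D, hDcard, hDdom⟩ := hmem
  -- the complement of D is dominating
  have hcompl : ∀ v, v ∈ Dᶜ ∨ ∃ u ∈ Dᶜ, G.Adj u v := by
    intro v
    by_cases hv : v ∈ D
    · right
      by_contra hno
      push_neg at hno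
      -- all neighbors of v lie in D
      have hnbr : ∀ u, G.Adj u v → u ∈ D := by
        intro u hu
        by_contra hu'
        exact hno u hu' hu
      -- then D \ {v} is dominating, contradicting minimality
      have hdom' : (D \ {v} : Set V).ncard ∈ P := by
        refine ⟨D \ {v}, rfl, fun u => ?_⟩
        by_cases huv : u = v
        · subst huv
          obtain ⟨w, hw⟩ := h u
          exact Or.inr ⟨w, ⟨hnbr w hw.symm, fun hwu => G.loopless.irrefl u (hwu ▸ hw)⟩, hw.symm⟩
        · rcases hDdom u with hu | ⟨w, hwD, hwadj⟩
          · exact Or.inl ⟨hu, huv⟩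
          · by_cases hwv : w = v
            · subst hwv
              exact Or.inl ⟨hnbr u hwadj.symm, huv⟩
            · exact Or.inr ⟨w, ⟨hwD, hwv⟩, hwadj⟩
      have hlt : (D \ {v} : Set V).ncard < D.ncard := by
        have : D.Finite := Set.toFinite D
        exact Set.ncard_lt_ncard (by
          constructor
          · exact Set.diff_subset
          · intro hsub
            exact (hsub hv).2 rfl) this
      rw [hDcard] at hlt
      have hγ : G.dominationNumber = sInf P := rfl
      have := Nat.sInf_le hdom'
      omega
    · exact Or.inl hv
  have h1 : G.dominationNumber ≤ (Dᶜ : Set V).ncard := Nat.sInf_le ⟨Dᶜ, rfl, hcompl⟩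
  have h2 : D.ncard + (Dᶜ : Set V).ncard = Fintype.card V := by
    rw [Set.ncard_add_ncard_compl, Nat.card_eq_fintype_card]
  omega
end

section
/- Let G be a connected bipartite graph with bipartition X ∪ Y such that |X| ≤ |Y|. If γ(G) = |X|, then G contains a matching of size |X| (i.e., a matching saturating X). -/
open SimpleGraph

theorem bipartite_domination_eq_side_matching {V : Type*} [Fintype V]
    (G : SimpleGraph V) (hconn : G.Connected) (X Y : Set V)
    (hunion : X ∪ Y = Set.univ) (hdisj : X ∩ Y = ∅)
    (hbip : ∀ u v, G.Adj u v → (u ∈ X ∧ v ∈ Y) ∨ (u ∈ Y ∧ v ∈ X))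
    (hcard : X.ncard ≤ Y.ncard) (hdom : G.dominationNumber = X.ncard) :
    ∃ M : G.Subgraph, M.IsMatching ∧ X ⊆ M.verts := by
  classical
  have hXY : ∀ a, a ∈ X → a ∈ Y → False := by
    intro a h1 h2
    have : a ∈ X ∩ Y := ⟨h1, h2⟩
    rw [hdisj] at this
    exact this
  -- Hall's condition
  have hall : ∀ s : Finset ↥X,
      s.card ≤ (s.biUnion fun x => (G.neighborSet x.val).toFinset).card := by
    intro s
    by_contra hlt
    push_neg at hlt
    set NS : Finset V := s.biUnion fun x => (G.neighborSet x.val).toFinset with hNS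
    set S' : Finset V := s.image Subtype.val with hS'
    have hcardS : S'.card = s.card := Finset.card_image_of_injective s Subtype.val_injective
    have hsub : (↑S' : Set V) ⊆ X := by
      intro a ha
      simp only [hS', Finset.coe_image, Set.mem_image, Finset.mem_coe] at ha
      obtain ⟨x, _, rfl⟩ := ha
      exact x.2
    have hs_pos : 0 < s.card := lt_of_le_of_lt (Nat.zero_le _) hlt
    obtain ⟨x0, hx0⟩ := Finset.card_pos.mp hs_pos
    have hX_ne : X.Nonempty := ⟨x0.val, x0.2⟩
    have hY_ne : Y.Nonempty := by
      rw [← Set.ncard_pos Y.toFinite]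
      calc 0 < X.ncard := (Set.ncard_pos X.toFinite).mpr hX_ne
        _ ≤ Y.ncard := hcard
    -- every vertex has a neighbor
    have hnbr : ∀ v, ∃ w, G.Adj v w := by
      intro v
      obtain ⟨xx, hxx⟩ := hX_ne
      obtain ⟨yy, hyy⟩ := hY_ne
      have hxy : xx ≠ yy := fun h => hXY xx hxx (h ▸ hyy)
      have hz : ∃ z, z ≠ v := by
        by_cases h : xx = v
        · exact ⟨yy, fun hh => hxy (h.trans hh.symm)⟩
        · exact ⟨xx, h⟩
      obtain ⟨z, hz⟩ := hz
      have hr : G.Reachable v z := hconn.preconnected v z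
      obtain ⟨p⟩ := hr
      have hnil : ¬ p.Nil := SimpleGraph.Walk.not_nil_of_ne (fun h => hz h.symm)
      exact ⟨_, (p.firstDart hnil).adj⟩
    -- the dominating set
    set D : Set V := (X \ ↑S') ∪ ↑NS with hD
    have hDdom : ∀ v, v ∈ D ∨ ∃ u ∈ D, G.Adj u v := by
      intro v
      by_cases hvX : v ∈ X
      · by_cases hvS : v ∈ S'
        · right
          obtain ⟨w, hw⟩ := hnbr v
          refine ⟨w, Or.inr ?_, hw.symm⟩
          simp only [hS', Finset.mem_image] at hvS
          obtain ⟨x, hx, hxv⟩ := hvS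
          exact Finset.mem_coe.mpr (Finset.mem_biUnion.mpr
            ⟨x, hx, Set.mem_toFinset.mpr (hxv ▸ hw)⟩)
        · exact Or.inl (Or.inl ⟨hvX, fun h => hvS (Finset.mem_coe.mp h)⟩)
      · have hvY : v ∈ Y := by
          have : v ∈ X ∪ Y := hunion ▸ Set.mem_univ v
          exact this.resolve_left hvX
        obtain ⟨w, hw⟩ := hnbr v
        have hwX : w ∈ X := by
          rcases hbip v w hw with ⟨h1, _⟩ | ⟨_, h2⟩
          · exact absurd h1 hvX
          · exact h2
        by_cases hwS : w ∈ S'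
        · left
          right
          simp only [hS', Finset.mem_image] at hwS
          obtain ⟨x, hx, hxw⟩ := hwS
          exact Finset.mem_coe.mpr (Finset.mem_biUnion.mpr
            ⟨x, hx, Set.mem_toFinset.mpr (hxw ▸ hw.symm)⟩)
        · exact Or.inr ⟨w, Or.inl ⟨hwX, fun h => hwS (Finset.mem_coe.mp h)⟩, hw.symm⟩
    -- cardinality bound
    have hsle : s.card ≤ X.ncard := by
      calc s.card = S'.card := hcardS.symm
        _ = (↑S' : Set V).ncard := (Set.ncard_coe_finset S').symm
        _ ≤ X.ncard := Set.ncard_le_ncard hsub X.toFinite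
    have hDlt : D.ncard < X.ncard := by
      calc D.ncard ≤ (X \ ↑S').ncard + (↑NS : Set V).ncard := Set.ncard_union_le _ _
        _ = (X.ncard - s.card) + NS.card := by
            rw [Set.ncard_diff hsub, Set.ncard_coe_finset, Set.ncard_coe_finset, hcardS]
        _ < (X.ncard - s.card) + s.card := by omega
        _ = X.ncard := Nat.sub_add_cancel hsle
    have hmem : D.ncard ∈ {n | ∃ t : Set V, t.ncard = n ∧ ∀ v, v ∈ t ∨ ∃ u ∈ t, G.Adj u v} :=
      ⟨D, rfl, hDdom⟩
    have hle : G.dominationNumber ≤ D.ncard := Nat.sInf_le hmem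
    rw [hdom] at hle
    omega
  -- apply Hall's theorem
  obtain ⟨f, hfinj, hfmem⟩ :=
    (Finset.all_card_le_biUnion_card_iff_exists_injective
      (fun x : ↥X => (G.neighborSet x.val).toFinset)).mp hall
  have hadj : ∀ x : ↥X, G.Adj x.val (f x) := fun x => Set.mem_toFinset.mp (hfmem x)
  have hfY : ∀ x : ↥X, f x ∈ Y := by
    intro x
    rcases hbip x.val (f x) (hadj x) with ⟨_, h2⟩ | ⟨h1, _⟩
    · exact h2
    · exact absurd h1 (fun h => hXY x.val x.2 h)
  refine ⟨{
    verts := X ∪ Set.range (fun x : ↥X => f x)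
    Adj := fun a b => (∃ x : ↥X, a = ↑x ∧ b = f x) ∨ (∃ x : ↥X, b = ↑x ∧ a = f x)
    adj_sub := by
      rintro a b (⟨x, rfl, rfl⟩ | ⟨x, rfl, rfl⟩)
      · exact hadj x
      · exact (hadj x).symm
    edge_vert := by
      rintro a b (⟨x, rfl, rfl⟩ | ⟨x, rfl, rfl⟩)
      · exact Or.inl x.2
      · exact Or.inr ⟨x, rfl⟩
    symm := by
      constructor
      rintro a b (⟨x, h1, h2⟩ | ⟨x, h1, h2⟩)
      · exact Or.inr ⟨x, h1, h2⟩
      · exact Or.inl ⟨x, h1, h2⟩ }, ?_, Set.subset_union_left⟩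
  intro v hv
  rcases hv with hvX | ⟨x, rfl⟩
  · refine ⟨f ⟨v, hvX⟩, Or.inl ⟨⟨v, hvX⟩, rfl, rfl⟩, ?_⟩
    rintro w' (⟨x, hvx, rfl⟩ | ⟨x, _, hvfx⟩)
    · have : (⟨v, hvX⟩ : ↥X) = x := Subtype.ext hvx
      rw [this]
    · exact absurd (hvfx ▸ hfY x) (fun h => hXY v hvX h)
  · refine ⟨x.val, Or.inr ⟨x, rfl, rfl⟩, ?_⟩
    rintro w' (⟨x', hvx', _⟩ | ⟨x', rfl, hfx'⟩)
    · exact absurd (hfY x) (fun h => hXY (f x) (by simp only [] at hvx'; rw [hvx']; exact x'.2) h)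
    · exact congrArg Subtype.val (hfinj hfx').symm
end

section
/- A connected graph G with at least one edge is star-uniform if and only if ν(G) = γ(G), where ν(G) is the matching number and γ(G) is the domination number. -/
open SimpleGraph

/-- A graph is star-uniform if all its star-factors have the same number
of components. -/
def SimpleGraph.IsStarUniform {V : Type*} (G : SimpleGraph V) : Prop :=
  ∀ H₁ H₂ : G.Subgraph, H₁.IsStarFactor → H₂.IsStarFactor →
    H₁.numComponents = H₂.numComponents

namespace StarAux

variable {V : Type*} {G : SimpleGraph V}

/-- star condition on edges -/
def SC (H : G.Subgraph) : Prop :=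
  ∀ ⦃u v⦄, H.Adj u v → (∀ w, H.Adj u w → w = v) ∨ (∀ w, H.Adj v w → w = u)

/-- all neighbors of `c` are leaves pointing back to `c` -/
def Ctr (H : G.Subgraph) (c : V) : Prop :=
  ∀ ⦃u⦄, H.Adj c u → ∀ ⦃w⦄, H.Adj u w → w = c

lemma exists_ctr {H : G.Subgraph} (h2 : ∀ v : V, ∃ w, H.Adj v w) (h3 : SC H) (v : V) :
    ∃ c, (c = v ∨ H.Adj c v) ∧ Ctr H c := by
  obtain ⟨w, hvw⟩ := h2 v
  by_cases hL : ∀ x, H.Adj v x → x = w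
  · refine ⟨w, Or.inr hvw.symm, ?_⟩
    intro u hwu x hux
    rcases h3 hwu with h | h
    · have hvu : v = u := h v hvw.symm
      subst hvu
      exact hL x hux
    · exact h x hux
  · refine ⟨v, Or.inl rfl, ?_⟩
    intro u hvu x hux
    rcases h3 hvu with h | h
    · exact absurd (fun x hx => (h x hx).trans (h w hvw).symm) hL
    · exact h x hux

lemma ctr_closed {H : G.Subgraph} {c x y : V} (hc : Ctr H c)
    (hx : x = c ∨ H.Adj c x) (hxy : H.Adj x y) : y = c ∨ H.Adj c y := by
  rcases hx with rfl | hx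
  · exact Or.inr hxy
  · exact Or.inl (hc hx hxy)

lemma ctr_reach {H : G.Subgraph} {c : V} (hc : Ctr H c) {x y : H.verts}
    (hr : H.coe.Reachable x y) (hx : (x : V) = c ∨ H.Adj c x) :
    (y : V) = c ∨ H.Adj c y := by
  obtain ⟨p⟩ := hr
  induction p with
  | nil => exact hx
  | cons h p ih => exact ih (ctr_closed hc hx h)

lemma reach_of_closed {H : G.Subgraph} {c : V} (hcv : c ∈ H.verts) {x : V} (hxv : x ∈ H.verts)
    (hx : x = c ∨ H.Adj c x) : H.coe.Reachable ⟨c, hcv⟩ ⟨x, hxv⟩ := by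
  rcases hx with rfl | hx
  · rfl
  · exact (SimpleGraph.Subgraph.Adj.coe (by exact hx) : H.coe.Adj ⟨c, hcv⟩ ⟨x, hxv⟩).reachable


section fintype
variable [Fintype V]

lemma bddAbove_matchset :
    BddAbove {n | ∃ M : G.Subgraph, M.IsMatching ∧ M.edgeSet.ncard = n} := by
  refine ⟨(Set.univ : Set (Sym2 V)).ncard, ?_⟩
  rintro n ⟨M, _, rfl⟩
  exact Set.ncard_le_ncard (Set.subset_univ _) (Set.toFinite _)

lemma le_matchingNumber {M : G.Subgraph} (hM : M.IsMatching) :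
    M.edgeSet.ncard ≤ G.matchingNumber :=
  le_csSup bddAbove_matchset ⟨M, hM, rfl⟩

lemma exists_max_matching :
    ∃ M : G.Subgraph, M.IsMatching ∧ M.edgeSet.ncard = G.matchingNumber := by
  have hne : {n | ∃ M : G.Subgraph, M.IsMatching ∧ M.edgeSet.ncard = n}.Nonempty := by
    refine ⟨0, ⊥, ?_, ?_⟩
    · intro v hv; simp [SimpleGraph.Subgraph.verts_bot] at hv
    · simp [SimpleGraph.Subgraph.edgeSet_bot]
  exact Nat.sSup_mem hne bddAbove_matchset

lemma dominationNumber_le {s : Set V} (hs : ∀ v, v ∈ s ∨ ∃ u ∈ s, G.Adj u v) :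
    G.dominationNumber ≤ s.ncard :=
  Nat.sInf_le ⟨s, rfl, hs⟩

lemma exists_min_dominating :
    ∃ s : Set V, s.ncard = G.dominationNumber ∧ ∀ v, v ∈ s ∨ ∃ u ∈ s, G.Adj u v := by
  have hne : {n | ∃ s : Set V, s.ncard = n ∧ ∀ v, v ∈ s ∨ ∃ u ∈ s, G.Adj u v}.Nonempty :=
    ⟨(Set.univ : Set V).ncard, Set.univ, rfl, fun v => Or.inl (Set.mem_univ v)⟩
  obtain ⟨s, h1, h2⟩ := Nat.sInf_mem hne
  exact ⟨s, h1, h2⟩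

lemma comp_rep_center {H : G.Subgraph} (hH : H.IsStarFactor)
    (C : H.coe.ConnectedComponent) : ∃ c, (∃ h : c ∈ H.verts,
      H.coe.connectedComponentMk ⟨c, h⟩ = C) ∧ Ctr H c := by
  obtain ⟨x, hx⟩ := C.exists_rep
  obtain ⟨c, hcov, hctr⟩ := exists_ctr hH.2.1 hH.2.2 (x : V)
  have hcv : c ∈ H.verts := by
    rcases hcov with rfl | h
    · exact x.2
    · exact H.edge_vert h
  refine ⟨c, ⟨hcv, ?_⟩, hctr⟩
  have hr : H.coe.Reachable ⟨c, hcv⟩ ⟨(x : V), x.2⟩ := reach_of_closed hcv x.2 (hcov.imp Eq.symm id)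
  rw [← hx]
  exact ConnectedComponent.sound hr

lemma finite_components (H : G.Subgraph) : Finite H.coe.ConnectedComponent := by
  haveI : Finite ↥H.verts := (Set.toFinite _).to_subtype
  exact Quot.finite _

lemma dom_le_numComponents {H : G.Subgraph} (hH : H.IsStarFactor) :
    G.dominationNumber ≤ H.numComponents := by
  classical
  haveI := finite_components H
  choose f hf hctr using comp_rep_center hH
  have hdom : ∀ v, v ∈ Set.range f ∨ ∃ u ∈ Set.range f, G.Adj u v := by
    intro v
    have hv : v ∈ H.verts := hH.1 v
    set C := H.coe.connectedComponentMk ⟨v, hv⟩ with hCdef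
    obtain ⟨hc, hC⟩ := hf C
    have hreach : H.coe.Reachable ⟨f C, hc⟩ ⟨v, hv⟩ := ConnectedComponent.exact (by rw [hC])
    have hcl := ctr_reach (hctr C) hreach (Or.inl rfl)
    rcases hcl with h | h
    · exact Or.inl ⟨C, h.symm⟩
    · exact Or.inr ⟨f C, ⟨C, rfl⟩, H.adj_sub h⟩
  calc G.dominationNumber ≤ (Set.range f).ncard := dominationNumber_le hdom
    _ ≤ H.numComponents := by
        rw [← Set.image_univ]
        calc (f '' Set.univ).ncard ≤ (Set.univ : Set H.coe.ConnectedComponent).ncard :=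
              Set.ncard_image_le (Set.toFinite _)
          _ = H.numComponents := by rw [Set.ncard_univ]; rfl

lemma numComponents_le_matching {H : G.Subgraph} (hH : H.IsStarFactor) :
    H.numComponents ≤ G.matchingNumber := by
  classical
  haveI := finite_components H
  choose a ha hactr using comp_rep_center hH
  choose b hb using fun C => hH.2.1 (a C)
  have hav : ∀ C, a C ∈ H.verts := fun C => (ha C).choose
  have hbv : ∀ C, b C ∈ H.verts := fun C => H.edge_vert (hb C).symm
  have hab : ∀ C, a C ≠ b C := fun C => (H.adj_sub (hb C)).ne
  have hmk : ∀ (x : V) (h : x ∈ H.verts) C, (x = a C ∨ x = b C) →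
      H.coe.connectedComponentMk ⟨x, h⟩ = C := by
    intro x h C hx
    obtain ⟨hca, hCa⟩ := ha C
    rcases hx with rfl | rfl
    · exact hCa
    · exact (ConnectedComponent.connectedComponentMk_eq_of_adj
        (show H.coe.Adj ⟨b C, h⟩ ⟨a C, hca⟩ from (hb C).symm)).trans hCa
  have hW : ∀ (x : V) (C C' : H.coe.ConnectedComponent), (x = a C ∨ x = b C) →
      (x = a C' ∨ x = b C') → C = C' := by
    intro x C C' h1 h2
    have hx : x ∈ H.verts := by rcases h1 with rfl | rfl; exacts [hav C, hbv C]
    rw [← hmk x hx C h1, hmk x hx C' h2]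
  let M : G.Subgraph :=
    { verts := {x | ∃ C, x = a C ∨ x = b C}
      Adj := fun x y => ∃ C, (x = a C ∧ y = b C) ∨ (x = b C ∧ y = a C)
      adj_sub := by rintro x y ⟨C, ⟨rfl, rfl⟩ | ⟨rfl, rfl⟩⟩
                    exacts [H.adj_sub (hb C), H.adj_sub (hb C).symm]
      edge_vert := by rintro x y ⟨C, ⟨rfl, _⟩ | ⟨rfl, _⟩⟩
                      exacts [⟨C, Or.inl rfl⟩, ⟨C, Or.inr rfl⟩]
      symm := by refine ⟨?_⟩; rintro x y ⟨C, ⟨rfl, rfl⟩ | ⟨rfl, rfl⟩⟩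
                 exacts [⟨C, Or.inr ⟨rfl, rfl⟩⟩, ⟨C, Or.inl ⟨rfl, rfl⟩⟩] }
  have hM : M.IsMatching := by
    rintro v ⟨C, hvC⟩
    rcases hvC with rfl | rfl
    · refine ⟨b C, ⟨C, Or.inl ⟨rfl, rfl⟩⟩, ?_⟩
      rintro y ⟨C', ⟨h1, rfl⟩ | ⟨h1, rfl⟩⟩
      · have := hW _ C C' (Or.inl rfl) (Or.inl h1); rw [this]
      · have hCC : C = C' := hW _ C C' (Or.inl rfl) (Or.inr h1)
        rw [← hCC] at h1; exact absurd h1 (hab C)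
    · refine ⟨a C, ⟨C, Or.inr ⟨rfl, rfl⟩⟩, ?_⟩
      rintro y ⟨C', ⟨h1, rfl⟩ | ⟨h1, rfl⟩⟩
      · have hCC : C = C' := hW _ C C' (Or.inr rfl) (Or.inl h1)
        rw [← hCC] at h1; exact absurd h1.symm (hab C)
      · have := hW _ C C' (Or.inr rfl) (Or.inr h1); rw [this]
  have hg : Function.Injective (fun C => (⟨s(a C, b C),
      by rw [SimpleGraph.Subgraph.mem_edgeSet]; exact ⟨C, Or.inl ⟨rfl, rfl⟩⟩⟩ :
      ↥M.edgeSet)) := by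
    intro C C' hCC
    have h : s(a C, b C) = s(a C', b C') := congrArg Subtype.val hCC
    rw [Sym2.eq_iff] at h
    rcases h with ⟨h1, _⟩ | ⟨h1, _⟩
    · exact hW _ C C' (Or.inl rfl) (Or.inl h1)
    · exact hW _ C C' (Or.inl rfl) (Or.inr h1)
  calc H.numComponents ≤ Nat.card ↥M.edgeSet := Nat.card_le_card_of_injective _ hg
    _ = M.edgeSet.ncard := Nat.card_coe_set_eq _
    _ ≤ G.matchingNumber := le_matchingNumber hM


lemma exists_nbr (hconn : G.Connected) (hedge : ∃ u v, G.Adj u v) (v : V) :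
    ∃ u, G.Adj v u := by
  obtain ⟨a, b, hab⟩ := hedge
  obtain ⟨pw⟩ := hconn.preconnected v a
  cases pw with
  | nil => exact ⟨b, hab⟩
  | cons h _ => exact ⟨_, h⟩

lemma matched_nbr_of_unmatched {M : G.Subgraph} (hM : M.IsMatching)
    (hmax : M.edgeSet.ncard = G.matchingNumber) (hconn : G.Connected)
    (hedge : ∃ u v, G.Adj u v) {v : V} (hv : v ∉ M.verts) :
    ∃ u, u ∈ M.verts ∧ G.Adj u v := by
  obtain ⟨u, hadj⟩ := exists_nbr hconn hedge v
  by_cases hu : u ∈ M.verts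
  · exact ⟨u, hu, hadj.symm⟩
  exfalso
  have hd : Disjoint M.support (G.subgraphOfAdj hadj).support := by
    rw [hM.support_eq_verts, support_subgraphOfAdj]
    rw [Set.disjoint_right]
    rintro x (rfl | rfl) <;> assumption
  have hM' : (M ⊔ G.subgraphOfAdj hadj).IsMatching :=
    hM.sup (Subgraph.IsMatching.subgraphOfAdj hadj) hd
  have hes : (M ⊔ G.subgraphOfAdj hadj).edgeSet = insert s(v, u) M.edgeSet := by
    rw [Subgraph.edgeSet_sup, edgeSet_subgraphOfAdj, Set.union_singleton]
  have hni : s(v, u) ∉ M.edgeSet := by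
    intro h
    exact hv (M.edge_vert (Subgraph.mem_edgeSet.mp h))
  have := le_matchingNumber hM'
  rw [hes, Set.ncard_insert_of_notMem hni, hmax] at this
  omega

lemma no_double_pendant {M : G.Subgraph} (hM : M.IsMatching)
    (hmax : M.edgeSet.ncard = G.matchingNumber) {a b x y : V}
    (hab : M.Adj a b) (hx : x ∉ M.verts) (hy : y ∉ M.verts) (hxy : x ≠ y)
    (hax : G.Adj a x) (hby : G.Adj b y) : False := by
  classical
  have hun : ∀ {p q r : V}, M.Adj p q → M.Adj p r → q = r :=
    fun h1 h2 => ((hM (M.edge_vert h1)).unique h1 h2)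
  have hav : a ∈ M.verts := M.edge_vert hab
  have hbv : b ∈ M.verts := M.edge_vert hab.symm
  have hne : a ≠ b := (M.adj_sub hab).ne
  set M0 := M.deleteVerts {a, b} with hM0def
  have hM0verts : M0.verts = M.verts \ {a, b} := rfl
  have hM0adj : ∀ {u v : V}, M0.Adj u v ↔
      u ∈ M.verts ∧ u ∉ ({a, b} : Set V) ∧ v ∈ M.verts ∧ v ∉ ({a, b} : Set V) ∧ M.Adj u v :=
    fun {u v} => Subgraph.deleteVerts_adj
  have hM0 : M0.IsMatching := by
    rintro v hv
    rw [hM0verts] at hv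
    obtain ⟨hv1, hv2⟩ := hv
    obtain ⟨w, hw, hwu⟩ := hM hv1
    have hwa : w ∉ ({a, b} : Set V) := by
      rintro (rfl | rfl)
      · exact hv2 (by simp [hun hab (hw.symm)])
      · exact hv2 (by simp [hun hab.symm (hw.symm)])
    refine ⟨w, hM0adj.mpr ⟨hv1, hv2, M.edge_vert hw.symm, hwa, hw⟩, ?_⟩
    intro z hz
    exact hwu z (hM0adj.mp hz).2.2.2.2
  -- first pendant edge
  have hd1 : Disjoint M0.support (G.subgraphOfAdj hax).support := by
    rw [support_subgraphOfAdj, Set.disjoint_right]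
    rintro z (rfl | rfl) hz <;> have hz' := M0.support_subset_verts hz <;>
      rw [hM0verts] at hz'
    · exact hz'.2 (by simp)
    · exact hx hz'.1
  set M1 := M0 ⊔ G.subgraphOfAdj hax with hM1def
  have hM1 : M1.IsMatching := hM0.sup (Subgraph.IsMatching.subgraphOfAdj hax) hd1
  have hM1verts : M1.verts = (M.verts \ {a, b}) ∪ {a, x} := rfl
  have hd2 : Disjoint M1.support (G.subgraphOfAdj hby).support := by
    rw [support_subgraphOfAdj, Set.disjoint_right]
    rintro z (rfl | rfl) hz <;> have hz' := M1.support_subset_verts hz <;>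
      rw [hM1verts] at hz' <;> rcases hz' with h | h
    · exact h.2 (by simp)
    · rcases h with rfl | rfl
      · exact hne rfl
      · exact hx hbv
    · exact hy h.1
    · rcases h with rfl | rfl
      · exact hy hav
      · exact hxy rfl
  set M2 := M1 ⊔ G.subgraphOfAdj hby with hM2def
  have hM2 : M2.IsMatching := hM1.sup (Subgraph.IsMatching.subgraphOfAdj hby) hd2
  -- edge sets
  have hE0 : M0.edgeSet = M.edgeSet \ {s(a, b)} := by
    refine Set.ext fun e => Sym2.ind (fun u v => ?_) e
    simp only [Subgraph.mem_edgeSet, Set.mem_diff, Set.mem_singleton_iff]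
    constructor
    · intro h
      obtain ⟨h1, h2, h3, h4, h5⟩ := hM0adj.mp h
      refine ⟨h5, fun hsab => ?_⟩
      rw [Sym2.eq_iff] at hsab
      rcases hsab with ⟨rfl, rfl⟩ | ⟨rfl, rfl⟩
      · exact h2 (by simp)
      · exact h2 (by simp)
    · rintro ⟨h1, h2⟩
      have hua : u ∉ ({a, b} : Set V) := by
        rintro (rfl | rfl)
        · exact h2 (by rw [hun h1 hab])
        · exact h2 (by rw [hun h1 hab.symm, Sym2.eq_swap])
      have hva : v ∉ ({a, b} : Set V) := by
        rintro (rfl | rfl)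
        · exact h2 (by rw [hun h1.symm hab, Sym2.eq_swap])
        · exact h2 (by rw [hun h1.symm hab.symm])
      exact hM0adj.mpr ⟨M.edge_vert h1, hua, M.edge_vert h1.symm, hva, h1⟩
  have habE : s(a, b) ∈ M.edgeSet := Subgraph.mem_edgeSet.mpr hab
  have hcard1 : 1 ≤ M.edgeSet.ncard := by
    have : M.edgeSet.Nonempty := ⟨_, habE⟩
    have := Set.ncard_pos (Set.toFinite _) |>.mpr this
    omega
  have hE2 : M2.edgeSet = insert s(b, y) (insert s(a, x) (M.edgeSet \ {s(a, b)})) := by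
    rw [hM2def, Subgraph.edgeSet_sup, hM1def, Subgraph.edgeSet_sup, hE0,
      edgeSet_subgraphOfAdj, edgeSet_subgraphOfAdj, Set.union_singleton,
      Set.union_singleton]
  have hax_ni : s(a, x) ∉ M.edgeSet \ {s(a, b)} := by
    rintro ⟨h1, -⟩
    exact hx (M.edge_vert (Subgraph.mem_edgeSet.mp h1).symm)
  have hby_ni : s(b, y) ∉ insert s(a, x) (M.edgeSet \ {s(a, b)}) := by
    rintro (h | ⟨h1, -⟩)
    · rw [Sym2.eq_iff] at h
      rcases h with ⟨rfl, rfl⟩ | ⟨rfl, rfl⟩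
      · exact hne rfl
      · exact hy hav
    · exact hy (M.edge_vert (Subgraph.mem_edgeSet.mp h1).symm)
  have hfin : (M.edgeSet \ {s(a, b)}).Finite := Set.toFinite _
  have := le_matchingNumber hM2
  rw [hE2, Set.ncard_insert_of_notMem hby_ni (hfin.insert _),
    Set.ncard_insert_of_notMem hax_ni hfin,
    Set.ncard_diff_singleton_of_mem habE, hmax] at this
  omega


lemma exists_starFactor_matching (hconn : G.Connected) (hedge : ∃ u v, G.Adj u v) :
    ∃ H : G.Subgraph, H.IsStarFactor ∧ H.numComponents = G.matchingNumber := by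
  classical
  obtain ⟨M, hM, hmax⟩ := exists_max_matching (G := G)
  have hun : ∀ {p q r : V}, M.Adj p q → M.Adj p r → q = r :=
    fun h1 h2 => ((hM (M.edge_vert h1)).unique h1 h2)
  have hpend : ∀ v, ∃ u, v ∉ M.verts → u ∈ M.verts ∧ G.Adj u v := by
    intro v
    by_cases hv : v ∈ M.verts
    · exact ⟨v, fun h => absurd hv h⟩
    · obtain ⟨u, hu⟩ := matched_nbr_of_unmatched hM hmax hconn hedge hv
      exact ⟨u, fun _ => hu⟩
  choose p hp using hpend
  let H : G.Subgraph :=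
    { verts := Set.univ
      Adj := fun x y => M.Adj x y ∨ (x ∉ M.verts ∧ p x = y) ∨ (y ∉ M.verts ∧ p y = x)
      adj_sub := by
        rintro x y (h | ⟨hx, rfl⟩ | ⟨hy, rfl⟩)
        · exact M.adj_sub h
        · exact ((hp x hx).2).symm
        · exact (hp y hy).2
      edge_vert := fun _ => Set.mem_univ _
      symm := by
        refine ⟨?_⟩; rintro x y (h | ⟨hx, rfl⟩ | ⟨hy, hpy⟩)
        · exact Or.inl h.symm
        · exact Or.inr (Or.inr ⟨hx, rfl⟩)
        · exact Or.inr (Or.inl ⟨hy, hpy⟩) }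
  have hHadj : ∀ {x y : V}, H.Adj x y ↔
      (M.Adj x y ∨ (x ∉ M.verts ∧ p x = y) ∨ (y ∉ M.verts ∧ p y = x)) := Iff.rfl
  have hSF : H.IsStarFactor := by
    refine ⟨fun v => Set.mem_univ v, ?_, ?_⟩
    · intro v
      by_cases hv : v ∈ M.verts
      · exact ⟨(hM hv).choose, Or.inl (hM hv).choose_spec.1⟩
      · exact ⟨p v, Or.inr (Or.inl ⟨hv, rfl⟩)⟩
    · rintro u v (huv | ⟨hu, rfl⟩ | ⟨hv', hpv⟩)
      · have hu : u ∈ M.verts := M.edge_vert huv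
        have hv : v ∈ M.verts := M.edge_vert huv.symm
        by_cases hPv : ∃ w, w ∉ M.verts ∧ p w = v
        · obtain ⟨w', hw', hpw'⟩ := hPv
          refine Or.inl fun w hw => ?_
          rcases hw with h | ⟨h, -⟩ | ⟨hwm, hpw⟩
          · exact hun h huv
          · exact absurd hu h
          · exfalso
            have hww' : w ≠ w' := by
              rintro rfl
              rw [hpw'] at hpw
              exact (M.adj_sub huv).ne hpw.symm
            exact no_double_pendant hM hmax huv hwm hw' hww'
              (hpw ▸ (hp w hwm).2.symm).symm (hpw' ▸ (hp w' hw').2.symm).symm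
        · refine Or.inr fun w hw => ?_
          rcases hw with h | ⟨h, -⟩ | ⟨hwm, hpw⟩
          · exact hun h huv.symm
          · exact absurd hv h
          · exact absurd ⟨w, hwm, hpw⟩ hPv
      · refine Or.inl fun w hw => ?_
        rcases hw with h | ⟨-, h⟩ | ⟨hwm, hpw⟩
        · exact absurd (M.edge_vert h) hu
        · exact h.symm ▸ rfl
        · exact absurd (hpw ▸ (hp w hwm).1) hu
      · refine Or.inr fun w hw => ?_
        rcases hw with h | ⟨h, hh⟩ | ⟨hwm, hpw⟩
        · exact absurd (M.edge_vert h) hv'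
        · exact hh ▸ hpv
        · exact absurd (hpw ▸ (hp w hwm).1) hv'
  haveI := finite_components H
  -- injection from edges of M into components of H
  have hend : ∀ e : ↥M.edgeSet, ∃ x y, (e : Sym2 V) = s(x, y) ∧ M.Adj x y := by
    rintro ⟨e, he⟩
    induction e with
    | _ x y => exact ⟨x, y, rfl, Subgraph.mem_edgeSet.mp he⟩
  choose f g hfg hadj using hend
  have hMH : ∀ {x y : V}, M.Adj x y → H.Adj x y := fun h => Or.inl h
  have hφinj : Function.Injective
      (fun e : ↥M.edgeSet => H.coe.connectedComponentMk ⟨f e, Set.mem_univ _⟩) := by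
    intro e e' hee
    obtain ⟨c, hcov, hctr⟩ := exists_ctr hSF.2.1 hSF.2.2 (f e)
    -- everything in e and e' is in the closed neighbourhood of c
    have hfe : f e = c ∨ H.Adj c (f e) := by
      rcases hcov with h | h
      · exact Or.inl h.symm
      · exact Or.inr h
    have hge : g e = c ∨ H.Adj c (g e) := ctr_closed hctr hfe (hMH (hadj e))
    have hreach : H.coe.Reachable ⟨c, Set.mem_univ _⟩ ⟨f e', Set.mem_univ _⟩ := by
      refine ConnectedComponent.exact ?_
      have h1 : H.coe.connectedComponentMk ⟨c, Set.mem_univ _⟩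
          = H.coe.connectedComponentMk ⟨f e, Set.mem_univ _⟩ :=
        ConnectedComponent.sound (reach_of_closed _ _ hfe)
      rw [h1]; exact hee
    have hfe' : f e' = c ∨ H.Adj c (f e') := ctr_reach hctr hreach (Or.inl rfl)
    have hge' : g e' = c ∨ H.Adj c (g e') := ctr_closed hctr hfe' (hMH (hadj e'))
    -- each M-edge inside N[c] is incident to c
    have key : ∀ x y : V, M.Adj x y → (x = c ∨ H.Adj c x) → (y = c ∨ H.Adj c y) →
        ∃ z, s(x, y) = s(c, z) ∧ M.Adj c z := by
      intro x y hxy hxc hyc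
      rcases hxc with rfl | hx
      · exact ⟨y, rfl, hxy⟩
      · have : y = c := hctr hx (hMH hxy)
        subst this
        exact ⟨x, Sym2.eq_swap, hxy.symm⟩
    obtain ⟨z, hz1, hz2⟩ := key _ _ (hadj e) hfe hge
    obtain ⟨z', hz1', hz2'⟩ := key _ _ (hadj e') hfe' hge'
    have : z = z' := hun hz2 hz2'
    apply Subtype.ext
    rw [hfg e, hfg e', hz1, hz1', this]
  have hle : G.matchingNumber ≤ H.numComponents := by
    calc G.matchingNumber = M.edgeSet.ncard := hmax.symm
      _ = Nat.card ↥M.edgeSet := (Nat.card_coe_set_eq _).symm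
      _ ≤ Nat.card H.coe.ConnectedComponent := Nat.card_le_card_of_injective _ hφinj
      _ = H.numComponents := rfl
  exact ⟨H, hSF, le_antisymm (numComponents_le_matching hSF) hle⟩


/-- a star subgraph with centre `c` and leaves `L` -/
def starSub (c : V) (L : Set V) (hL : ∀ v ∈ L, G.Adj c v) : G.Subgraph where
  verts := insert c L
  Adj x y := (x = c ∧ y ∈ L) ∨ (y = c ∧ x ∈ L)
  adj_sub := by
    rintro x y (⟨rfl, hy⟩ | ⟨rfl, hx⟩)
    · exact hL y hy
    · exact (hL x hx).symm
  edge_vert := by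
    rintro x y (⟨rfl, hy⟩ | ⟨rfl, hx⟩)
    · exact Set.mem_insert _ _
    · exact Set.mem_insert_of_mem _ hx
  symm := by
    refine ⟨?_⟩; rintro x y (⟨rfl, hy⟩ | ⟨rfl, hx⟩)
    · exact Or.inr ⟨rfl, hy⟩
    · exact Or.inl ⟨rfl, hx⟩

lemma starSub_SC {c : V} {L : Set V} {hL : ∀ v ∈ L, G.Adj c v} (hc : c ∉ L) :
    SC (starSub c L hL) := by
  rintro u v (⟨rfl, hv⟩ | ⟨rfl, hu⟩)
  · refine Or.inr fun w hw => ?_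
    rcases hw with ⟨rfl, -⟩ | ⟨rfl, -⟩
    · exact absurd hv hc
    · rfl
  · refine Or.inl fun w hw => ?_
    rcases hw with ⟨rfl, -⟩ | ⟨rfl, -⟩
    · exact absurd hu hc
    · rfl

lemma starSub_reach {c : V} {L : Set V} {hL : ∀ v ∈ L, G.Adj c v} {x : V}
    (hx : x ∈ (starSub c L hL).verts) :
    (starSub c L hL).coe.Reachable ⟨c, Set.mem_insert _ _⟩ ⟨x, hx⟩ := by
  rcases hx with rfl | hx
  · rfl
  · exact SimpleGraph.Adj.reachable
      (show (starSub c L hL).coe.Adj _ _ from Or.inl ⟨rfl, hx⟩)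

lemma SC_sup {H₁ H₂ : G.Subgraph} (hdis : Disjoint H₁.verts H₂.verts)
    (h1 : SC H₁) (h2 : SC H₂) : SC (H₁ ⊔ H₂) := by
  have aux : ∀ (K L : G.Subgraph), Disjoint K.verts L.verts → ∀ {u v : V}, K.Adj u v →
      (∀ w, K.Adj u w → w = v) → ∀ w, (K ⊔ L).Adj u w → w = v := by
    intro K L hd u v huv hl w hw
    rcases Subgraph.sup_adj.mp hw with h' | h'
    · exact hl w h'
    · exact absurd (L.edge_vert h')
        (Set.disjoint_left.mp hd (K.edge_vert huv))
  intro u v huv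
  rcases Subgraph.sup_adj.mp huv with h | h
  · rcases h1 h with hl | hl
    · exact Or.inl (aux H₁ H₂ hdis h hl)
    · exact Or.inr (aux H₁ H₂ hdis h.symm hl)
  · rcases h2 h with hl | hl
    · exact Or.inl fun w hw => aux H₂ H₁ hdis.symm h hl w
        (Subgraph.sup_adj.mpr (Subgraph.sup_adj.mp hw).symm)
    · exact Or.inr fun w hw => aux H₂ H₁ hdis.symm h.symm hl w
        (Subgraph.sup_adj.mpr (Subgraph.sup_adj.mp hw).symm)

lemma reach_le {K L : G.Subgraph} (hKL : K ≤ L) {u v : V} (hu : u ∈ K.verts)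
    (hv : v ∈ K.verts) (h : K.coe.Reachable ⟨u, hu⟩ ⟨v, hv⟩) :
    L.coe.Reachable ⟨u, hKL.1 hu⟩ ⟨v, hKL.1 hv⟩ :=
  h.map (Subgraph.inclusion hKL)


lemma star_forest_of_dominating :
    ∀ (n : ℕ) (R D : Set V), D.ncard ≤ n → D ⊆ R →
      (∀ v ∈ R, v ∈ D ∨ ∃ d ∈ D, G.Adj d v) →
      (∀ v ∈ R, ∃ u ∈ R, G.Adj u v) →
      ∃ H : G.Subgraph, H.verts = R ∧ (∀ v ∈ R, ∃ w, H.Adj v w) ∧ SC H ∧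
        ∀ C : H.coe.ConnectedComponent, ∃ d ∈ D, ∃ h : d ∈ H.verts,
          H.coe.connectedComponentMk ⟨d, h⟩ = C := by
  intro n
  induction n with
  | zero =>
    intro R D hcard hDR hdom hiso
    have hD : D = ∅ := (Set.ncard_eq_zero (Set.toFinite _)).mp (Nat.le_zero.mp hcard)
    subst hD
    have hR : R = ∅ := by
      by_contra h
      obtain ⟨v, hv⟩ := Set.nonempty_iff_ne_empty.mpr h
      rcases hdom v hv with h' | ⟨d, hd, -⟩
      · exact absurd h' (Set.notMem_empty v)
      · exact absurd hd (Set.notMem_empty d)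
    subst hR
    refine ⟨⊥, Subgraph.verts_bot, by simp, by rintro u v h; exact h.elim, ?_⟩
    intro C
    obtain ⟨x, -⟩ := C.exists_rep
    exact (Set.eq_empty_iff_forall_notMem.mp Subgraph.verts_bot (x : V) x.2).elim
  | succ n ih =>
    intro R D hcard hDR hdom hiso
    rcases Set.eq_empty_or_nonempty R with rfl | hRne
    · refine ⟨⊥, Subgraph.verts_bot, by simp, by rintro u v h; exact h.elim, ?_⟩
      intro C
      obtain ⟨x, -⟩ := C.exists_rep
      exact (Set.eq_empty_iff_forall_notMem.mp Subgraph.verts_bot (x : V) x.2).elim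
    obtain ⟨v0, hv0⟩ := hRne
    have hDne : D.Nonempty := by
      rcases hdom v0 hv0 with h | ⟨d, hd, -⟩
      exacts [⟨v0, h⟩, ⟨d, hd⟩]
    obtain ⟨d, hdD⟩ := hDne
    have hdR : d ∈ R := hDR hdD
    have hdomin : ∀ v, v ∈ R → v ∉ D → ∃ d₂ ∈ D, G.Adj d₂ v := by
      intro v hv hvD; rcases hdom v hv with h | h; exacts [absurd h hvD, h]
    set A : Set V := {v | v ∈ R ∧ v ∉ D ∧ G.Adj d v ∧ ∀ d₂ ∈ D, G.Adj d₂ v → d₂ = d}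
      with hA
    set B : Set V := {v | v ∈ D ∧ v ≠ d ∧ G.Adj d v ∧ ∀ u ∈ R, G.Adj u v → u = d}
      with hB
    have hmemA : ∀ {v}, v ∈ A ↔
        (v ∈ R ∧ v ∉ D ∧ G.Adj d v ∧ ∀ d₂ ∈ D, G.Adj d₂ v → d₂ = d) := fun {v} => by
      rw [hA]; exact Set.mem_setOf_eq ▸ Iff.rfl
    have hmemB : ∀ {v}, v ∈ B ↔
        (v ∈ D ∧ v ≠ d ∧ G.Adj d v ∧ ∀ u ∈ R, G.Adj u v → u = d) := fun {v} => by
      rw [hB]; exact Set.mem_setOf_eq ▸ Iff.rfl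
    have hdAB : d ∉ A ∪ B := by
      rintro (h | h)
      · exact (hmemA.mp h).2.1 hdD
      · exact (hmemB.mp h).2.1 rfl
    by_cases hAB : (A ∪ B).Nonempty
    · -- Case 1 : give `d` the star with leaves `A ∪ B`
      have hLadj : ∀ v ∈ A ∪ B, G.Adj d v := by
        rintro v (h | h)
        · exact (hmemA.mp h).2.2.1
        · exact (hmemB.mp h).2.2.1
      set H₁ := starSub d (A ∪ B) hLadj with hH₁
      set S : Set V := insert d (A ∪ B) with hS
      have hH₁verts : H₁.verts = S := rfl
      have hSR : S ⊆ R := by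
        rintro x (rfl | hx | hx)
        · exact hdR
        · exact (hmemA.mp hx).1
        · exact hDR (hmemB.mp hx).1
      have hdS : d ∈ S := Set.mem_insert _ _
      have hcard₂ : (D \ S).ncard ≤ n := by
        have hss : D \ S ⊂ D :=
          ⟨Set.diff_subset, fun hsub => (hsub hdD).2 hdS⟩
        have := Set.ncard_lt_ncard hss (Set.toFinite D)
        omega
      have hD₂R₂ : D \ S ⊆ R \ S := fun v hv => ⟨hDR hv.1, hv.2⟩
      have hkey : ∀ v, v ∈ R → v ∉ S → v ∉ D → ∃ d₂ ∈ D \ S, G.Adj d₂ v := by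
        intro v hvR hvS hvD
        by_contra hcon
        push_neg at hcon
        have hall : ∀ d₂ ∈ D, G.Adj d₂ v → d₂ = d := by
          intro d₂ hd₂ hadj
          have hd₂S : d₂ ∈ S := by
            by_contra h'
            exact hcon d₂ ⟨hd₂, h'⟩ hadj
          rcases hd₂S with rfl | h' | h'
          · rfl
          · exact absurd hd₂ (hmemA.mp h').2.1
          · exact absurd ((hmemB.mp h').2.2.2 v hvR hadj.symm ▸ hdS) hvS
        obtain ⟨d₂, hd₂, hadj⟩ := hdomin v hvR hvD
        have hvA : v ∈ A := hmemA.mpr ⟨hvR, hvD, hall d₂ hd₂ hadj ▸ hadj, hall⟩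
        exact hvS (Set.mem_insert_of_mem _ (Or.inl hvA))
      have hdom₂ : ∀ v ∈ R \ S, v ∈ D \ S ∨ ∃ d₂ ∈ D \ S, G.Adj d₂ v := by
        rintro v ⟨hvR, hvS⟩
        by_cases hvD : v ∈ D
        · exact Or.inl ⟨hvD, hvS⟩
        · exact Or.inr (hkey v hvR hvS hvD)
      have hiso₂ : ∀ v ∈ R \ S, ∃ u ∈ R \ S, G.Adj u v := by
        rintro v ⟨hvR, hvS⟩
        by_contra hcon
        push_neg at hcon
        have hnbrS : ∀ u, u ∈ R → G.Adj u v → u ∈ S := by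
          intro u huR hadj
          by_contra h'
          exact hcon u ⟨huR, h'⟩ hadj
        by_cases hvD : v ∈ D
        · have hud : ∀ u ∈ R, G.Adj u v → u = d := by
            intro u huR hadj
            rcases hnbrS u huR hadj with rfl | hu | hu
            · rfl
            · exact absurd ((hmemA.mp hu).2.2.2 v hvD hadj.symm ▸ hdS) hvS
            · exact absurd ((hmemB.mp hu).2.2.2 v hvR hadj.symm ▸ hdS) hvS
          obtain ⟨u, huR, hadj⟩ := hiso v hvR
          have hvB : v ∈ B := hmemB.mpr
            ⟨hvD, fun h => hvS (h ▸ hdS), hud u huR hadj ▸ hadj, hud⟩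
          exact hvS (Set.mem_insert_of_mem _ (Or.inr hvB))
        · obtain ⟨d₂, hd₂, hadj⟩ := hkey v hvR hvS hvD
          exact hcon d₂ (hD₂R₂ hd₂) hadj
      obtain ⟨H₂, hH₂verts, hH₂iso, hH₂SC, hH₂comp⟩ :=
        ih (R \ S) (D \ S) hcard₂ hD₂R₂ hdom₂ hiso₂
      have hvdisj : Disjoint H₁.verts H₂.verts := by
        rw [hH₁verts, hH₂verts]
        exact Set.disjoint_sdiff_right
      refine ⟨H₁ ⊔ H₂, ?_, ?_, ?_, ?_⟩
      · rw [Subgraph.verts_sup, hH₁verts, hH₂verts]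
        exact Set.union_diff_cancel hSR
      · intro v hvR
        by_cases hvS : v ∈ S
        · rcases hvS with rfl | hvL
          · obtain ⟨a, haL⟩ := hAB
            exact ⟨a, Subgraph.sup_adj.mpr (Or.inl (Or.inl ⟨rfl, haL⟩))⟩
          · exact ⟨d, Subgraph.sup_adj.mpr (Or.inl (Or.inr ⟨rfl, hvL⟩))⟩
        · obtain ⟨w, hw⟩ := hH₂iso v ⟨hvR, hvS⟩
          exact ⟨w, Subgraph.sup_adj.mpr (Or.inr hw)⟩
      · exact SC_sup hvdisj (starSub_SC hdAB) hH₂SC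
      · intro C
        obtain ⟨x, hx⟩ := C.exists_rep
        rcases (show (x : V) ∈ H₁.verts ∪ H₂.verts from x.2) with h | h
        · refine ⟨d, hdD, Set.mem_union_left _ hdS, ?_⟩
          rw [← hx]
          exact ConnectedComponent.sound
            (reach_le le_sup_left (Set.mem_insert _ _) h (starSub_reach h))
        · obtain ⟨d₂, hd₂D₂, hd₂v, hmk⟩ := hH₂comp (H₂.coe.connectedComponentMk ⟨x.1, h⟩)
          have hr : H₂.coe.Reachable ⟨d₂, hd₂v⟩ ⟨x.1, h⟩ := ConnectedComponent.exact hmk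
          refine ⟨d₂, hd₂D₂.1, Set.mem_union_right _ hd₂v, ?_⟩
          rw [← hx]
          exact ConnectedComponent.sound (reach_le le_sup_right hd₂v h hr)
    · -- A ∪ B is empty
      have hnAB : ∀ v, v ∉ A ∪ B := fun v hv => hAB ⟨v, hv⟩
      by_cases hdnbr : ∃ d₃ ∈ D, d₃ ≠ d ∧ G.Adj d₃ d
      · -- Case 2 : drop `d` from `D`
        have hcard' : (D \ {d}).ncard ≤ n := by
          have hss : D \ {d} ⊂ D := ⟨Set.diff_subset, fun hsub => (hsub hdD).2 rfl⟩
          have := Set.ncard_lt_ncard hss (Set.toFinite D)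
          omega
        have hdom' : ∀ v ∈ R, v ∈ D \ {d} ∨ ∃ d₂ ∈ D \ {d}, G.Adj d₂ v := by
          intro v hvR
          by_cases hvd : v = d
          · subst hvd
            obtain ⟨d₃, h1, h2, h3⟩ := hdnbr
            exact Or.inr ⟨d₃, ⟨h1, h2⟩, h3⟩
          · by_cases hvD : v ∈ D
            · exact Or.inl ⟨hvD, hvd⟩
            · refine Or.inr ?_
              by_contra hcon
              push_neg at hcon
              have hall : ∀ d₂ ∈ D, G.Adj d₂ v → d₂ = d := by
                intro d₂ h1 h2
                by_contra hne
                exact hcon d₂ ⟨h1, hne⟩ h2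
              obtain ⟨d₂, h1, h2⟩ := hdomin v hvR hvD
              exact hnAB v (Or.inl (hmemA.mpr ⟨hvR, hvD, hall d₂ h1 h2 ▸ h2, hall⟩))
        obtain ⟨H₂, h1, h2, h3, h4⟩ :=
          ih R (D \ {d}) hcard' (fun v hv => hDR hv.1) hdom' hiso
        refine ⟨H₂, h1, h2, h3, fun C => ?_⟩
        obtain ⟨d₂, hd₂, hv, hmk⟩ := h4 C
        exact ⟨d₂, hd₂.1, hv, hmk⟩
      · -- Case 3 : `d` has no neighbour in `D`
        obtain ⟨u', hu'R, hu'adj⟩ := hiso d hdR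
        have hu'D : u' ∉ D := fun h => hdnbr ⟨u', h, hu'adj.ne, hu'adj⟩
        set Bu : Set V := {v | v ∈ D ∧ G.Adj u' v ∧ ∀ w ∈ R, G.Adj w v → w = u'}
          with hBu
        have hmemBu : ∀ {v}, v ∈ Bu ↔
            (v ∈ D ∧ G.Adj u' v ∧ ∀ w ∈ R, G.Adj w v → w = u') := fun {v} => by
          rw [hBu]; exact Set.mem_setOf_eq ▸ Iff.rfl
        have hLadj : ∀ v ∈ insert d Bu, G.Adj u' v := by
          rintro v (rfl | hv)
          · exact hu'adj
          · exact (hmemBu.mp hv).2.1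
        have hu'L : u' ∉ insert d Bu := by
          rintro (rfl | h)
          · exact hu'adj.ne rfl
          · exact hu'D (hmemBu.mp h).1
        set H₁ := starSub u' (insert d Bu) hLadj with hH₁
        set S : Set V := insert u' (insert d Bu) with hS
        have hH₁verts : H₁.verts = S := rfl
        have hSR : S ⊆ R := by
          rintro x (rfl | rfl | hx)
          · exact hu'R
          · exact hdR
          · exact hDR (hmemBu.mp hx).1
        have hdS : d ∈ S := Set.mem_insert_of_mem _ (Set.mem_insert _ _)
        have hu'S : u' ∈ S := Set.mem_insert _ _
        have hcard₂ : (D \ S).ncard ≤ n := by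
          have hss : D \ S ⊂ D := ⟨Set.diff_subset, fun hsub => (hsub hdD).2 hdS⟩
          have := Set.ncard_lt_ncard hss (Set.toFinite D)
          omega
        have hD₂R₂ : D \ S ⊆ R \ S := fun v hv => ⟨hDR hv.1, hv.2⟩
        have hkey : ∀ v, v ∈ R → v ∉ S → v ∉ D → ∃ d₂ ∈ D \ S, G.Adj d₂ v := by
          intro v hvR hvS hvD
          by_contra hcon
          push_neg at hcon
          have hall : ∀ d₂ ∈ D, G.Adj d₂ v → d₂ = d := by
            intro d₂ hd₂ hadj
            have hd₂S : d₂ ∈ S := by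
              by_contra h'
              exact hcon d₂ ⟨hd₂, h'⟩ hadj
            rcases hd₂S with rfl | rfl | h'
            · exact absurd hd₂ hu'D
            · rfl
            · exact absurd ((hmemBu.mp h').2.2 v hvR hadj.symm ▸ hu'S) hvS
          obtain ⟨d₂, hd₂, hadj⟩ := hdomin v hvR hvD
          exact hnAB v (Or.inl (hmemA.mpr ⟨hvR, hvD, hall d₂ hd₂ hadj ▸ hadj, hall⟩))
        have hdom₂ : ∀ v ∈ R \ S, v ∈ D \ S ∨ ∃ d₂ ∈ D \ S, G.Adj d₂ v := by
          rintro v ⟨hvR, hvS⟩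
          by_cases hvD : v ∈ D
          · exact Or.inl ⟨hvD, hvS⟩
          · exact Or.inr (hkey v hvR hvS hvD)
        have hiso₂ : ∀ v ∈ R \ S, ∃ u ∈ R \ S, G.Adj u v := by
          rintro v ⟨hvR, hvS⟩
          by_contra hcon
          push_neg at hcon
          have hnbrS : ∀ u, u ∈ R → G.Adj u v → u ∈ S := by
            intro u huR hadj
            by_contra h'
            exact hcon u ⟨huR, h'⟩ hadj
          by_cases hvD : v ∈ D
          · have hwu : ∀ w ∈ R, G.Adj w v → w = u' := by
              intro w hwR hadj
              rcases hnbrS w hwR hadj with rfl | rfl | hwBu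
              · rfl
              · exact absurd ⟨v, hvD, fun h => hvS (h ▸ hdS), hadj.symm⟩ hdnbr
              · exact absurd ((hmemBu.mp hwBu).2.2 v hvR hadj.symm ▸ hu'S) hvS
            obtain ⟨u, huR, hadj⟩ := hiso v hvR
            have hvBu : v ∈ Bu := hmemBu.mpr ⟨hvD, hwu u huR hadj ▸ hadj, hwu⟩
            exact hvS (Set.mem_insert_of_mem _ (Set.mem_insert_of_mem _ hvBu))
          · obtain ⟨d₂, hd₂, hadj⟩ := hkey v hvR hvS hvD
            exact hcon d₂ (hD₂R₂ hd₂) hadj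
        obtain ⟨H₂, hH₂verts, hH₂iso, hH₂SC, hH₂comp⟩ :=
          ih (R \ S) (D \ S) hcard₂ hD₂R₂ hdom₂ hiso₂
        have hvdisj : Disjoint H₁.verts H₂.verts := by
          rw [hH₁verts, hH₂verts]
          exact Set.disjoint_sdiff_right
        refine ⟨H₁ ⊔ H₂, ?_, ?_, ?_, ?_⟩
        · rw [Subgraph.verts_sup, hH₁verts, hH₂verts]
          exact Set.union_diff_cancel hSR
        · intro v hvR
          by_cases hvS : v ∈ S
          · rcases hvS with rfl | hvL
            · exact ⟨d, Subgraph.sup_adj.mpr (Or.inl (Or.inl ⟨rfl, Set.mem_insert _ _⟩))⟩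
            · exact ⟨u', Subgraph.sup_adj.mpr (Or.inl (Or.inr ⟨rfl, hvL⟩))⟩
          · obtain ⟨w, hw⟩ := hH₂iso v ⟨hvR, hvS⟩
            exact ⟨w, Subgraph.sup_adj.mpr (Or.inr hw)⟩
        · exact SC_sup hvdisj (starSub_SC hu'L) hH₂SC
        · intro C
          obtain ⟨x, hx⟩ := C.exists_rep
          rcases (show (x : V) ∈ H₁.verts ∪ H₂.verts from x.2) with h | h
          · refine ⟨d, hdD, Set.mem_union_left _ hdS, ?_⟩
            rw [← hx]
            have h1 : H₁.coe.Reachable ⟨u', Set.mem_insert _ _⟩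
                ⟨d, Set.mem_insert_of_mem _ (Set.mem_insert _ _)⟩ :=
              starSub_reach (Set.mem_insert_of_mem _ (Set.mem_insert _ _))
            have h2 : H₁.coe.Reachable ⟨u', Set.mem_insert _ _⟩ ⟨x.1, h⟩ :=
              starSub_reach h
            exact ConnectedComponent.sound
              (reach_le le_sup_left (Set.mem_insert_of_mem _ (Set.mem_insert _ _)) h
                (h1.symm.trans h2))
          · obtain ⟨d₂, hd₂D₂, hd₂v, hmk⟩ :=
              hH₂comp (H₂.coe.connectedComponentMk ⟨x.1, h⟩)
            have hr : H₂.coe.Reachable ⟨d₂, hd₂v⟩ ⟨x.1, h⟩ := ConnectedComponent.exact hmk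
            refine ⟨d₂, hd₂D₂.1, Set.mem_union_right _ hd₂v, ?_⟩
            rw [← hx]
            exact ConnectedComponent.sound (reach_le le_sup_right hd₂v h hr)


lemma exists_starFactor_dom (hconn : G.Connected) (hedge : ∃ u v, G.Adj u v) :
    ∃ H : G.Subgraph, H.IsStarFactor ∧ H.numComponents = G.dominationNumber := by
  classical
  obtain ⟨D, hDcard, hDdom⟩ := exists_min_dominating (G := G)
  have hdom : ∀ v ∈ (Set.univ : Set V), v ∈ D ∨ ∃ d ∈ D, G.Adj d v := fun v _ => hDdom v
  have hiso : ∀ v ∈ (Set.univ : Set V), ∃ u ∈ (Set.univ : Set V), G.Adj u v := by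
    intro v _
    obtain ⟨u, hu⟩ := exists_nbr hconn hedge v
    exact ⟨u, Set.mem_univ _, hu.symm⟩
  obtain ⟨H, hverts, hisoH, hSC, hcomp⟩ :=
    star_forest_of_dominating D.ncard Set.univ D le_rfl (Set.subset_univ _) hdom hiso
  have hSF : H.IsStarFactor :=
    ⟨fun v => hverts ▸ Set.mem_univ v, fun v => hisoH v (Set.mem_univ v), hSC⟩
  refine ⟨H, hSF, le_antisymm ?_ (dom_le_numComponents hSF)⟩
  haveI := finite_components H
  choose f hfD hfv hfmk using hcomp
  have hinj : Function.Injective (fun C => (⟨f C, hfD C⟩ : ↥D)) := by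
    intro C C' h
    have hff : f C = f C' := congrArg Subtype.val h
    rw [← hfmk C, ← hfmk C']
    exact congrArg _ (Subtype.ext hff)
  calc H.numComponents ≤ Nat.card ↥D := Nat.card_le_card_of_injective _ hinj
    _ = D.ncard := Nat.card_coe_set_eq _
    _ = G.dominationNumber := hDcard

end fintype
end StarAux

theorem starUniform_iff_matching_eq_domination {V : Type*} [Fintype V]
    (G : SimpleGraph V) (hconn : G.Connected) (hedge : ∃ u v, G.Adj u v) :
    G.IsStarUniform ↔ G.matchingNumber = G.dominationNumber := by
  constructor
  · intro hU
    obtain ⟨Hm, hm, hmc⟩ := StarAux.exists_starFactor_matching hconn hedge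
    obtain ⟨Hd, hd, hdc⟩ := StarAux.exists_starFactor_dom hconn hedge
    rw [← hmc, ← hdc]
    exact hU Hm Hd hm hd
  · intro h H₁ H₂ h1 h2
    have l1 := StarAux.dom_le_numComponents h1
    have u1 := StarAux.numComponents_le_matching h1
    have l2 := StarAux.dom_le_numComponents h2
    have u2 := StarAux.numComponents_le_matching h2
    omega
end

section
/- Let G be a connected graph with minimum degree at least 2 that has a perfect matching. If G is star-uniform, then G is isomorphic to the 4-cycle C4. -/
open SimpleGraph

lemma aux_reach_s11 {V : Type*} {G : SimpleGraph V} {H : G.Subgraph} {a b : V}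
    (ha : a ∈ H.verts) (hb : b ∈ H.verts) (h : H.Adj a b) :
    H.coe.Reachable ⟨a, ha⟩ ⟨b, hb⟩ :=
  SimpleGraph.Adj.reachable (by simpa using h)

lemma numComponents_eq_card_range {V α : Type*} {G : SimpleGraph V} (H : G.Subgraph)
    (hs : H.IsSpanning) (f : V → α)
    (h1 : ∀ a b, H.Adj a b → f a = f b)
    (h2 : ∀ a b, f a = f b → H.coe.Reachable ⟨a, hs a⟩ ⟨b, hs b⟩) :
    H.numComponents = Nat.card (Set.range f) := by
  have hconst : ∀ (p q : H.verts) (w : H.coe.Walk p q), f p.1 = f q.1 := by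
    intro p q w
    induction w with
    | nil => rfl
    | cons h w ih => exact (h1 _ _ (by simpa using h)).trans ih
  let g : H.coe.ConnectedComponent → Set.range f :=
    ConnectedComponent.lift (fun p => ⟨f p.1, Set.mem_range_self _⟩)
      (fun p q w _ => Subtype.ext (hconst p q w))
  have hbij : Function.Bijective g := by
    constructor
    · refine ConnectedComponent.ind₂ (fun p q h => ?_)
      apply ConnectedComponent.sound
      exact h2 p.1 q.1 (congrArg Subtype.val h)
    · rintro ⟨-, a, rfl⟩
      exact ⟨H.coe.connectedComponentMk ⟨a, hs a⟩, rfl⟩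
  exact Nat.card_congr (Equiv.ofBijective g hbij)

lemma pairmem {α : Type*} {a b c d : α} (h : ({a, b} : Set α) = {c, d}) : a = c ∨ a = d := by
  have : a ∈ ({c, d} : Set α) := h ▸ Set.mem_insert a {b}
  simpa using this

lemma key_lemma {V : Type*} [Fintype V] {G : SimpleGraph V} (hsu : G.IsStarUniform)
    (M : G.Subgraph) (hM : M.IsPerfectMatching)
    (m : V → V) (hadj : ∀ v, M.Adj v (m v)) (huniq : ∀ v w, M.Adj v w → w = m v)
    {x y z : V} (hxy : G.Adj x y) (hyne : y ≠ m x) (hz : G.Adj (m x) z) :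
    z = x ∨ z = m y := by
  classical
  have hadjG : ∀ v, G.Adj v (m v) := fun v => M.adj_sub (hadj v)
  have hmm : ∀ v, m (m v) = v := fun v => ((huniq (m v) v (hadj v).symm)).symm
  have hmne : ∀ v, m v ≠ v := fun v => (hadjG v).ne'
  -- the matching as a star factor and its component count
  set f1 : V → Set V := fun a => {a, m a} with hf1
  have hMsf : M.IsStarFactor := ⟨hM.2, fun v => ⟨m v, hadj v⟩,
    fun u v huv => Or.inl (fun w hw => (huniq u w hw).trans (huniq u v huv).symm)⟩
  have hMcount : M.numComponents = Nat.card (Set.range f1) := by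
    apply numComponents_eq_card_range M hM.2 f1
    · intro a b hab
      have hb : b = m a := huniq a b hab
      have ha : a = m b := huniq b a hab.symm
      show ({a, m a} : Set V) = {b, m b}
      rw [← hb, ← ha]
      exact Set.pair_comm a b
    · intro a b hab
      have hb : b ∈ ({a, m a} : Set V) := by
        rw [show ({a, m a} : Set V) = f1 a from rfl, hab]
        exact Set.mem_insert _ _
      rcases hb with rfl | hb
      · exact Reachable.refl _
      · rw [Set.mem_singleton_iff] at hb
        subst hb
        exact aux_reach_s11 _ _ (hadj a)
  -- generic contradiction from a star factor whose label range drops {x, m x}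
  have hdrop : ∀ (H2 : G.Subgraph) (f2 : V → Set V), H2.IsStarFactor →
      H2.numComponents = Nat.card (Set.range f2) →
      Set.range f2 = Set.range f1 \ {({x, m x} : Set V)} → False := by
    intro H2 f2 hsf hcount hrange
    have heq := hsu M H2 hMsf hsf
    rw [hMcount, hcount, hrange, Nat.card_coe_set_eq, Nat.card_coe_set_eq] at heq
    have hlt := Set.ncard_diff_singleton_lt_of_mem
      (show ({x, m x} : Set V) ∈ Set.range f1 from ⟨x, rfl⟩) (Set.finite_range f1)
    omega
  by_contra hcon
  push_neg at hcon
  obtain ⟨hzx, hzmy⟩ := hcon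
  have hzmx : z ≠ m x := hz.ne'
  have hxmy : x ≠ m y := fun h => hyne (by rw [h, hmm])
  have hmxmy : m x ≠ m y := fun h => hxy.ne (by rw [← hmm x, h, hmm])
  by_cases hzy : z = y
  · -- Case A : m x is adjacent to y; one star with center y and leaves m y, x, m x
    have hzA : G.Adj (m x) y := hzy ▸ hz
    have hyx : y ≠ x := hxy.ne.symm
    set NS : V → Prop := fun a => a ≠ x ∧ a ≠ m x ∧ a ≠ y ∧ a ≠ m y with hNS
    have nsClosed : ∀ a, NS a → NS (m a) := by
      rintro a ⟨h1, h2, h3, h4⟩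
      refine ⟨fun h => h2 ?_, fun h => h1 ?_, fun h => h4 ?_, fun h => h3 ?_⟩
      · rw [← hmm a, h]
      · rw [← hmm a, h, hmm]
      · rw [← hmm a, h]
      · rw [← hmm a, h, hmm]
    set RA : V → V → Prop := fun a b =>
      (a = y ∧ (b = m y ∨ b = x ∨ b = m x)) ∨
      (b = y ∧ (a = m y ∨ a = x ∨ a = m x)) ∨
      (NS a ∧ NS b ∧ b = m a) with hRA
    have hsub : ∀ {a b : V}, RA a b → G.Adj a b := by
      rintro a b (⟨ha, hb | hb | hb⟩ | ⟨hb, ha | ha | ha⟩ | ⟨-, -, hb⟩)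
      · rw [ha, hb]; exact hadjG y
      · rw [ha, hb]; exact hxy.symm
      · rw [ha, hb]; exact hzA.symm
      · rw [ha, hb]; exact (hadjG y).symm
      · rw [ha, hb]; exact hxy
      · rw [ha, hb]; exact hzA
      · rw [hb]; exact hadjG a
    have hsymm : ∀ {a b : V}, RA a b → RA b a := by
      rintro a b (⟨rfl, hb⟩ | ⟨rfl, ha⟩ | ⟨hna, hnb, rfl⟩)
      · exact Or.inr (Or.inl ⟨rfl, hb⟩)
      · exact Or.inl ⟨rfl, ha⟩
      · exact Or.inr (Or.inr ⟨hnb, hna, (hmm a).symm⟩)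
    set H2 : G.Subgraph :=
      ⟨Set.univ, RA, fun h => hsub h, fun _ => trivial, ⟨fun _ _ h => hsymm h⟩⟩ with hH2
    have uniqY : ∀ a, (a = m y ∨ a = x ∨ a = m x) → ∀ c, RA a c → c = y := by
      rintro a ha c (⟨ha', -⟩ | ⟨hc, -⟩ | ⟨hna, -, -⟩)
      · rcases ha with h | h | h
        · exact absurd (ha'.symm.trans h) (hmne y).symm
        · exact absurd (ha'.symm.trans h) hyx
        · exact absurd (ha'.symm.trans h) hyne
      · exact hc
      · rcases ha with rfl | rfl | rfl
        exacts [absurd rfl hna.2.2.2, absurd rfl hna.1, absurd rfl hna.2.1]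
    have hsfA : H2.IsStarFactor := by
      refine ⟨fun a => trivial, ?_, ?_⟩
      · intro a
        by_cases h1 : a = y
        · exact ⟨m y, Or.inl ⟨h1, Or.inl rfl⟩⟩
        by_cases h2 : a = m y
        · exact ⟨y, Or.inr (Or.inl ⟨rfl, Or.inl h2⟩)⟩
        by_cases h3 : a = x
        · exact ⟨y, Or.inr (Or.inl ⟨rfl, Or.inr (Or.inl h3)⟩)⟩
        by_cases h4 : a = m x
        · exact ⟨y, Or.inr (Or.inl ⟨rfl, Or.inr (Or.inr h4)⟩)⟩
        · have ns : NS a := ⟨h3, h4, h1, h2⟩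
          exact ⟨m a, Or.inr (Or.inr ⟨ns, nsClosed a ns, rfl⟩)⟩
      · rintro a b (⟨rfl, hb⟩ | ⟨rfl, ha⟩ | ⟨hna, hnb, rfl⟩)
        · exact Or.inr (fun c hc => uniqY b hb c hc)
        · exact Or.inl (fun c hc => uniqY a ha c hc)
        · left
          rintro c (⟨ha', -⟩ | ⟨-, ha'⟩ | ⟨-, -, rfl⟩)
          · exact absurd ha' hna.2.2.1
          · rcases ha' with rfl | rfl | rfl
            exacts [absurd rfl hna.2.2.2, absurd rfl hna.1, absurd rfl hna.2.1]
          · rfl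
    set fA : V → Set V := fun a => if a = x ∨ a = m x then ({y, m y} : Set V) else {a, m a}
      with hfA
    have hfAeval : ∀ a, (a = x ∨ a = m x) → fA a = {y, m y} := by
      intro a ha
      simp only [hfA]
      rw [if_pos ha]
    have hfAeval' : ∀ a, ¬(a = x ∨ a = m x) → fA a = {a, m a} := by
      intro a ha
      simp only [hfA]
      rw [if_neg ha]
    have memA : ∀ a, (a = y ∨ a = m y ∨ a = x ∨ a = m x) → fA a = {y, m y} := by
      have e1 : fA y = {y, m y} := hfAeval' y (by rintro (h | h); exacts [hyx h, hyne h])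
      have e2 : fA (m y) = {y, m y} := by
        have hn : ¬(m y = x ∨ m y = m x) := by
          rintro (h | h); exacts [hxmy h.symm, hmxmy h.symm]
        rw [hfAeval' (m y) hn, hmm]
        exact Set.pair_comm _ _
      rintro a (ha | ha | ha | ha)
      · rw [ha]; exact e1
      · rw [ha]; exact e2
      · exact hfAeval a (Or.inl ha)
      · exact hfAeval a (Or.inr ha)
    have fibA : ∀ c, fA c = ({y, m y} : Set V) → (c = y ∨ c = m y ∨ c = x ∨ c = m x) := by
      intro c hc
      by_cases pc : c = x ∨ c = m x
      · tauto
      · rw [hfAeval' c pc] at hc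
        rcases pairmem hc with h | h
        exacts [Or.inl h, Or.inr (Or.inl h)]
    have h1A : ∀ a b, H2.Adj a b → fA a = fA b := by
      rintro a b (⟨rfl, hb⟩ | ⟨rfl, ha⟩ | ⟨hna, hnb, rfl⟩)
      · exact (memA a (Or.inl rfl)).trans (memA b (Or.inr hb)).symm
      · exact (memA a (Or.inr ha)).trans (memA b (Or.inl rfl)).symm
      · have n1 : ¬(a = x ∨ a = m x) := by rintro (h | h); exacts [hna.1 h, hna.2.1 h]
        have n2 : ¬(m a = x ∨ m a = m x) := by
          rintro (h | h)
          exacts [(nsClosed a hna).1 h, (nsClosed a hna).2.1 h]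
        rw [hfAeval' a n1, hfAeval' (m a) n2, hmm]
        exact Set.pair_comm _ _
    have hsA : H2.IsSpanning := fun a => trivial
    have hubA : ∀ a, (a = y ∨ a = m y ∨ a = x ∨ a = m x) →
        H2.coe.Reachable ⟨y, hsA y⟩ ⟨a, hsA a⟩ := by
      rintro a (rfl | ha)
      · exact Reachable.refl _
      · exact aux_reach_s11 _ _ (Or.inl ⟨rfl, ha⟩)
    have h2A : ∀ a b, fA a = fA b → H2.coe.Reachable ⟨a, hsA a⟩ ⟨b, hsA b⟩ := by
      intro a b heq
      by_cases ha : a = y ∨ a = m y ∨ a = x ∨ a = m x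
      · have hb : b = y ∨ b = m y ∨ b = x ∨ b = m x :=
          fibA b (heq.symm.trans (memA a ha))
        exact (hubA a ha).symm.trans (hubA b hb)
      · push_neg at ha
        obtain ⟨ha1, ha2, ha3, ha4⟩ := ha
        have hfa : fA a = {a, m a} := hfAeval' a (by rintro (h | h); exacts [ha3 h, ha4 h])
        by_cases hb : b = y ∨ b = m y ∨ b = x ∨ b = m x
        · exact absurd (fibA a (heq.trans (memA b hb))) (by tauto)
        · push_neg at hb
          obtain ⟨hb1, hb2, hb3, hb4⟩ := hb
          have hfb : fA b = {b, m b} := hfAeval' b (by rintro (h | h); exacts [hb3 h, hb4 h])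
          rw [hfa, hfb] at heq
          rcases pairmem heq.symm with rfl | rfl
          · exact Reachable.refl _
          · have ns : NS a := ⟨ha3, ha4, ha1, ha2⟩
            exact aux_reach_s11 _ _ (Or.inr (Or.inr ⟨ns, nsClosed a ns, rfl⟩))
    have hcountA : H2.numComponents = Nat.card (Set.range fA) :=
      numComponents_eq_card_range H2 hsA fA h1A h2A
    have hrangeA : Set.range fA = Set.range f1 \ {({x, m x} : Set V)} := by
      ext s
      constructor
      · rintro ⟨a, rfl⟩
        by_cases pa : a = x ∨ a = m x
        · refine ⟨⟨y, (hfAeval a pa).symm⟩, ?_⟩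
          rw [Set.mem_singleton_iff, hfAeval a pa]
          intro h
          rcases pairmem h with h' | h'
          exacts [hyx h', hyne h']
        · refine ⟨⟨a, (hfAeval' a pa).symm⟩, ?_⟩
          rw [Set.mem_singleton_iff, hfAeval' a pa]
          intro h
          exact pa (pairmem h)
      · rintro ⟨⟨a, rfl⟩, hnot⟩
        rw [Set.mem_singleton_iff] at hnot
        have pa : ¬(a = x ∨ a = m x) := by
          rintro (rfl | rfl)
          · exact hnot rfl
          · refine hnot ?_
            show ({m x, m (m x)} : Set V) = {x, m x}
            rw [hmm]
            exact Set.pair_comm _ _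
        exact ⟨a, hfAeval' a pa⟩
    exact hdrop H2 fA hsfA hcountA hrangeA
  · -- Case B : two stars, centered at y (leaves m y, x) and z (leaves m z, m x)
    have hyx : y ≠ x := hxy.ne.symm
    have hmyx : m y ≠ x := fun h => hxmy h.symm
    have hmymx : m y ≠ m x := fun h => hmxmy h.symm
    have hmyy : m y ≠ y := hmne y
    have hmzx : m z ≠ x := fun h => hzmx (by rw [← hmm z, h])
    have hmzmx : m z ≠ m x := fun h => hzx (by rw [← hmm z, h, hmm])
    have hmzy : m z ≠ y := fun h => hzmy (by rw [← hmm z, h])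
    have hmzmy : m z ≠ m y := fun h => hzy (by rw [← hmm z, h, hmm])
    have hmzz : m z ≠ z := hmne z
    have hmyz : m y ≠ z := fun h => hmzy.symm (by rw [← hmm y, h])
    have hxmx : x ≠ m x := (hmne x).symm
    set NS : V → Prop := fun a =>
      a ≠ x ∧ a ≠ m x ∧ a ≠ y ∧ a ≠ m y ∧ a ≠ z ∧ a ≠ m z with hNS
    have nsClosed : ∀ a, NS a → NS (m a) := by
      rintro a ⟨h1, h2, h3, h4, h5, h6⟩
      refine ⟨fun h => h2 ?_, fun h => h1 ?_, fun h => h4 ?_, fun h => h3 ?_,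
        fun h => h6 ?_, fun h => h5 ?_⟩
      · rw [← hmm a, h]
      · rw [← hmm a, h, hmm]
      · rw [← hmm a, h]
      · rw [← hmm a, h, hmm]
      · rw [← hmm a, h]
      · rw [← hmm a, h, hmm]
    set RB : V → V → Prop := fun a b =>
      (a = y ∧ (b = m y ∨ b = x)) ∨
      (b = y ∧ (a = m y ∨ a = x)) ∨
      (a = z ∧ (b = m z ∨ b = m x)) ∨
      (b = z ∧ (a = m z ∨ a = m x)) ∨
      (NS a ∧ NS b ∧ b = m a) with hRB
    have hsub : ∀ {a b : V}, RB a b → G.Adj a b := by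
      rintro a b (⟨ha, hb | hb⟩ | ⟨hb, ha | ha⟩ | ⟨ha, hb | hb⟩ | ⟨hb, ha | ha⟩ | ⟨-, -, hb⟩)
      · rw [ha, hb]; exact hadjG y
      · rw [ha, hb]; exact hxy.symm
      · rw [ha, hb]; exact (hadjG y).symm
      · rw [ha, hb]; exact hxy
      · rw [ha, hb]; exact hadjG z
      · rw [ha, hb]; exact hz.symm
      · rw [ha, hb]; exact (hadjG z).symm
      · rw [ha, hb]; exact hz
      · rw [hb]; exact hadjG a
    have hsymm : ∀ {a b : V}, RB a b → RB b a := by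
      rintro a b (⟨ha, hb⟩ | ⟨hb, ha⟩ | ⟨ha, hb⟩ | ⟨hb, ha⟩ | ⟨hna, hnb, rfl⟩)
      · exact Or.inr (Or.inl ⟨ha, hb⟩)
      · exact Or.inl ⟨hb, ha⟩
      · exact Or.inr (Or.inr (Or.inr (Or.inl ⟨ha, hb⟩)))
      · exact Or.inr (Or.inr (Or.inl ⟨hb, ha⟩))
      · exact Or.inr (Or.inr (Or.inr (Or.inr ⟨hnb, hna, (hmm a).symm⟩)))
    set H2 : G.Subgraph :=
      ⟨Set.univ, RB, fun h => hsub h, fun _ => trivial, ⟨fun _ _ h => hsymm h⟩⟩ with hH2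
    have uniqY : ∀ a, (a = m y ∨ a = x) → ∀ c, RB a c → c = y := by
      rintro a ha c (⟨ha', -⟩ | ⟨hc, -⟩ | ⟨ha', -⟩ | ⟨hc', ha''⟩ | ⟨hna, -, -⟩)
      · rcases ha with h | h
        · exact absurd (h.symm.trans ha') hmyy
        · exact absurd (h.symm.trans ha') hxy.ne
      · exact hc
      · rcases ha with h | h
        · exact absurd (h.symm.trans ha') hmyz
        · exact absurd (h.symm.trans ha') hzx.symm
      · rcases ha with h | h <;> rcases ha'' with h' | h'
        · exact absurd (h.symm.trans h') hmzmy.symm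
        · exact absurd (h.symm.trans h') hmymx
        · exact absurd (h.symm.trans h') hmzx.symm
        · exact absurd (h.symm.trans h') hxmx
      · rcases ha with h | h
        · exact absurd h hna.2.2.2.1
        · exact absurd h hna.1
    have uniqZ : ∀ a, (a = m z ∨ a = m x) → ∀ c, RB a c → c = z := by
      rintro a ha c (⟨ha', -⟩ | ⟨hc', ha''⟩ | ⟨ha', -⟩ | ⟨hc, -⟩ | ⟨hna, -, -⟩)
      · rcases ha with h | h
        · exact absurd (h.symm.trans ha') hmzy
        · exact absurd (h.symm.trans ha') hyne.symm
      · rcases ha with h | h <;> rcases ha'' with h' | h'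
        · exact absurd (h.symm.trans h') hmzmy
        · exact absurd (h.symm.trans h') hmzx
        · exact absurd (h.symm.trans h') hmxmy
        · exact absurd (h.symm.trans h') (hmne x)
      · rcases ha with h | h
        · exact absurd (h.symm.trans ha') hmzz
        · exact absurd (h.symm.trans ha') hzmx.symm
      · exact hc
      · rcases ha with h | h
        · exact absurd h hna.2.2.2.2.2
        · exact absurd h hna.2.1
    have hsfB : H2.IsStarFactor := by
      refine ⟨fun a => trivial, ?_, ?_⟩
      · intro a
        by_cases h1 : a = y
        · exact ⟨m y, Or.inl ⟨h1, Or.inl rfl⟩⟩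
        by_cases h2 : a = m y
        · exact ⟨y, Or.inr (Or.inl ⟨rfl, Or.inl h2⟩)⟩
        by_cases h3 : a = x
        · exact ⟨y, Or.inr (Or.inl ⟨rfl, Or.inr h3⟩)⟩
        by_cases h4 : a = z
        · exact ⟨m z, Or.inr (Or.inr (Or.inl ⟨h4, Or.inl rfl⟩))⟩
        by_cases h5 : a = m z
        · exact ⟨z, Or.inr (Or.inr (Or.inr (Or.inl ⟨rfl, Or.inl h5⟩)))⟩
        by_cases h6 : a = m x
        · exact ⟨z, Or.inr (Or.inr (Or.inr (Or.inl ⟨rfl, Or.inr h6⟩)))⟩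
        · have ns : NS a := ⟨h3, h6, h1, h2, h4, h5⟩
          exact ⟨m a, Or.inr (Or.inr (Or.inr (Or.inr ⟨ns, nsClosed a ns, rfl⟩)))⟩
      · rintro a b (⟨ha, hb⟩ | ⟨hb, ha⟩ | ⟨ha, hb⟩ | ⟨hb, ha⟩ | ⟨hna, hnb, hb⟩)
        · exact Or.inr (fun c hc => (uniqY b hb c hc).trans ha.symm)
        · exact Or.inl (fun c hc => (uniqY a ha c hc).trans hb.symm)
        · exact Or.inr (fun c hc => (uniqZ b hb c hc).trans ha.symm)
        · exact Or.inl (fun c hc => (uniqZ a ha c hc).trans hb.symm)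
        · left
          rintro c (⟨ha', -⟩ | ⟨-, ha'⟩ | ⟨ha', -⟩ | ⟨-, ha'⟩ | ⟨-, -, hc⟩)
          · exact absurd ha' hna.2.2.1
          · rcases ha' with h | h
            · exact absurd h hna.2.2.2.1
            · exact absurd h hna.1
          · exact absurd ha' hna.2.2.2.2.1
          · rcases ha' with h | h
            · exact absurd h hna.2.2.2.2.2
            · exact absurd h hna.2.1
          · exact hc.trans hb.symm
    set fB : V → Set V := fun a =>
      if a = x then ({y, m y} : Set V) else if a = m x then ({z, m z} : Set V) else {a, m a}
      with hfB
    have hfBx : fB x = {y, m y} := by simp [hfB]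
    have hfBmx : fB (m x) = {z, m z} := by
      simp only [hfB]
      rw [if_neg (hmne x)]
      simp
    have hfBo : ∀ a, a ≠ x → a ≠ m x → fB a = {a, m a} := by
      intro a h1 h2
      simp only [hfB]; rw [if_neg h1, if_neg h2]
    have memBY : ∀ a, (a = y ∨ a = m y ∨ a = x) → fB a = {y, m y} := by
      have e1 : fB y = {y, m y} := hfBo y hyx hyne
      have e2 : fB (m y) = {y, m y} := by
        rw [hfBo (m y) hmyx hmymx, hmm]
        exact Set.pair_comm _ _
      rintro a (ha | ha | ha)
      · rw [ha]; exact e1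
      · rw [ha]; exact e2
      · rw [ha]; exact hfBx
    have memBZ : ∀ a, (a = z ∨ a = m z ∨ a = m x) → fB a = {z, m z} := by
      have e1 : fB z = {z, m z} := hfBo z hzx hzmx
      have e2 : fB (m z) = {z, m z} := by
        rw [hfBo (m z) hmzx hmzmx, hmm]
        exact Set.pair_comm _ _
      rintro a (ha | ha | ha)
      · rw [ha]; exact e1
      · rw [ha]; exact e2
      · rw [ha]; exact hfBmx
    have fibBY : ∀ c, fB c = ({y, m y} : Set V) → (c = y ∨ c = m y ∨ c = x) := by
      intro c hc
      by_cases p1 : c = x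
      · tauto
      by_cases p2 : c = m x
      · rw [p2, hfBmx] at hc
        rcases pairmem hc with h | h
        exacts [absurd h hzy, absurd h hzmy]
      · rw [hfBo c p1 p2] at hc
        rcases pairmem hc with h | h
        exacts [Or.inl h, Or.inr (Or.inl h)]
    have fibBZ : ∀ c, fB c = ({z, m z} : Set V) → (c = z ∨ c = m z ∨ c = m x) := by
      intro c hc
      by_cases p2 : c = m x
      · tauto
      by_cases p1 : c = x
      · rw [p1, hfBx] at hc
        rcases pairmem hc with h | h
        exacts [absurd h (fun h' => hzy h'.symm) , absurd h (fun h' => hmzy h'.symm)]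
      · rw [hfBo c p1 p2] at hc
        rcases pairmem hc with h | h
        exacts [Or.inl h, Or.inr (Or.inl h)]
    have h1B : ∀ a b, H2.Adj a b → fB a = fB b := by
      rintro a b (⟨ha, hb⟩ | ⟨hb, ha⟩ | ⟨ha, hb⟩ | ⟨hb, ha⟩ | ⟨hna, hnb, rfl⟩)
      · exact (memBY a (Or.inl ha)).trans (memBY b (Or.inr hb)).symm
      · exact (memBY a (Or.inr ha)).trans (memBY b (Or.inl hb)).symm
      · exact (memBZ a (Or.inl ha)).trans (memBZ b (Or.inr hb)).symm
      · exact (memBZ a (Or.inr ha)).trans (memBZ b (Or.inl hb)).symm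
      · rw [hfBo a hna.1 hna.2.1,
          hfBo (m a) (nsClosed a hna).1 (nsClosed a hna).2.1, hmm]
        exact Set.pair_comm _ _
    have hsB : H2.IsSpanning := fun a => trivial
    have hubBY : ∀ a, (a = y ∨ a = m y ∨ a = x) →
        H2.coe.Reachable ⟨y, hsB y⟩ ⟨a, hsB a⟩ := by
      rintro a (rfl | ha)
      · exact Reachable.refl _
      · exact aux_reach_s11 _ _ (Or.inl ⟨rfl, ha.symm.symm⟩)
    have hubBZ : ∀ a, (a = z ∨ a = m z ∨ a = m x) →
        H2.coe.Reachable ⟨z, hsB z⟩ ⟨a, hsB a⟩ := by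
      rintro a (rfl | ha)
      · exact Reachable.refl _
      · exact aux_reach_s11 _ _ (Or.inr (Or.inr (Or.inl ⟨rfl, ha⟩)))
    have h2B : ∀ a b, fB a = fB b → H2.coe.Reachable ⟨a, hsB a⟩ ⟨b, hsB b⟩ := by
      intro a b heq
      by_cases ha : a = y ∨ a = m y ∨ a = x
      · have hb := fibBY b (heq.symm.trans (memBY a ha))
        exact (hubBY a ha).symm.trans (hubBY b hb)
      by_cases haz : a = z ∨ a = m z ∨ a = m x
      · have hb := fibBZ b (heq.symm.trans (memBZ a haz))
        exact (hubBZ a haz).symm.trans (hubBZ b hb)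
      · push_neg at ha haz
        obtain ⟨ha3, ha4, ha1⟩ := ha
        obtain ⟨ha5, ha6, ha2⟩ := haz
        have hfa : fB a = {a, m a} := hfBo a ha1 ha2
        by_cases hbY : b = y ∨ b = m y ∨ b = x
        · exact absurd (fibBY a (heq.trans (memBY b hbY))) (by tauto)
        by_cases hbZ : b = z ∨ b = m z ∨ b = m x
        · exact absurd (fibBZ a (heq.trans (memBZ b hbZ))) (by tauto)
        · push_neg at hbY hbZ
          have hfb : fB b = {b, m b} := hfBo b hbY.2.2 hbZ.2.2
          rw [hfa, hfb] at heq
          rcases pairmem heq.symm with rfl | rfl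
          · exact Reachable.refl _
          · have ns : NS a := ⟨ha1, ha2, ha3, ha4, ha5, ha6⟩
            exact aux_reach_s11 _ _
              (Or.inr (Or.inr (Or.inr (Or.inr ⟨ns, nsClosed a ns, rfl⟩))))
    have hcountB : H2.numComponents = Nat.card (Set.range fB) :=
      numComponents_eq_card_range H2 hsB fB h1B h2B
    have hrangeB : Set.range fB = Set.range f1 \ {({x, m x} : Set V)} := by
      ext s
      constructor
      · rintro ⟨a, rfl⟩
        by_cases p1 : a = x
        · refine ⟨⟨y, ?_⟩, ?_⟩
          · rw [p1]; exact hfBx.symm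
          · rw [Set.mem_singleton_iff, p1, hfBx]
            intro h
            rcases pairmem h with h' | h'
            exacts [hyx h', hyne h']
        by_cases p2 : a = m x
        · refine ⟨⟨z, ?_⟩, ?_⟩
          · rw [p2]; exact hfBmx.symm
          · rw [Set.mem_singleton_iff, p2, hfBmx]
            intro h
            rcases pairmem h with h' | h'
            exacts [hzx h', hzmx h']
        · refine ⟨⟨a, (hfBo a p1 p2).symm⟩, ?_⟩
          rw [Set.mem_singleton_iff, hfBo a p1 p2]
          intro h
          rcases pairmem h with h' | h'
          exacts [p1 h', p2 h']
      · rintro ⟨⟨a, rfl⟩, hnot⟩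
        rw [Set.mem_singleton_iff] at hnot
        have p12 : ¬(a = x ∨ a = m x) := by
          rintro (rfl | rfl)
          · exact hnot rfl
          · refine hnot ?_
            show ({m x, m (m x)} : Set V) = {x, m x}
            rw [hmm]
            exact Set.pair_comm _ _
        exact ⟨a, hfBo a (fun h => p12 (Or.inl h)) (fun h => p12 (Or.inr h))⟩
    exact hdrop H2 fB hsfB hcountB hrangeB

theorem starUniform_with_perfectMatching_is_C4 {V : Type*} [Fintype V]
    (G : SimpleGraph V) (hconn : G.Connected)
    (hdeg : ∀ v : V, 2 ≤ (G.neighborSet v).ncard)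
    (hpm : ∃ M : G.Subgraph, M.IsPerfectMatching)
    (hsu : G.IsStarUniform) :
    Nonempty (G ≃g SimpleGraph.cycleGraph 4) := by
  classical
  obtain ⟨M, hM⟩ := hpm
  have hex : ∀ v : V, ∃! w, M.Adj v w := fun v => hM.1 (hM.2 v)
  set m : V → V := fun v => (hex v).choose with hm_def
  have hadj : ∀ v, M.Adj v (m v) := fun v => (hex v).choose_spec.1
  have huniq : ∀ v w, M.Adj v w → w = m v := fun v w h => (hex v).choose_spec.2 w h
  have hadjG : ∀ v, G.Adj v (m v) := fun v => M.adj_sub (hadj v)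
  have hmm : ∀ v, m (m v) = v := fun v => ((huniq (m v) v (hadj v).symm)).symm
  have hmne : ∀ v, m v ≠ v := fun v => (hadjG v).ne'
  -- key structural lemma
  have key : ∀ x y z : V, G.Adj x y → y ≠ m x → G.Adj (m x) z → z = x ∨ z = m y :=
    fun x y z hxy hyne hz => key_lemma hsu M hM m hadj huniq hxy hyne hz
  -- every vertex has a neighbor other than its partner
  have hnb : ∀ a : V, ∃ b, G.Adj a b ∧ b ≠ m a := by
    intro a
    by_contra h
    push_neg at h
    have hsub : G.neighborSet a ⊆ {m a} := fun b hb => h b hb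
    have hle := Set.ncard_le_ncard hsub (Set.finite_singleton _)
    rw [Set.ncard_singleton] at hle
    have := hdeg a
    omega
  obtain ⟨u⟩ := hconn.nonempty
  obtain ⟨v, huv, hvne⟩ := hnb u
  have k1 : ∀ z, G.Adj (m u) z → z = u ∨ z = m v := fun z hz => key u v z huv hvne hz
  obtain ⟨b, hb, hbne⟩ := hnb (m u)
  have hbne' : b ≠ u := by rw [hmm u] at hbne; exact hbne
  have hb' : b = m v := (k1 b hb).resolve_left hbne'
  have huv' : G.Adj (m u) (m v) := hb' ▸ hb
  have hunv : u ≠ m v := fun h => hvne (by rw [← hmm v, ← h])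
  have k2 : ∀ z, G.Adj (m v) z → z = v ∨ z = m u :=
    fun z hz => key v u z huv.symm (fun h => hunv h) hz
  have k3 : ∀ z, G.Adj u z → z = m u ∨ z = v := by
    intro z hz
    have h1 : G.Adj (m (m u)) z := by rw [hmm]; exact hz
    have h2 : m v ≠ m (m u) := by rw [hmm]; exact fun h => hunv h.symm
    rcases key (m u) (m v) z huv' h2 h1 with h | h
    · exact Or.inl h
    · right; rw [h, hmm]
  have k4 : ∀ z, G.Adj v z → z = m v ∨ z = u := by
    intro z hz
    have h1 : G.Adj (m (m v)) z := by rw [hmm]; exact hz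
    have h2 : m u ≠ m (m v) := by rw [hmm]; exact fun h => hvne h.symm
    rcases key (m v) (m u) z huv'.symm h2 h1 with h | h
    · exact Or.inl h
    · right; rw [h, hmm]
  -- distinctness
  have d_uv : u ≠ v := huv.ne
  have d_umu : u ≠ m u := (hmne u).symm
  have d_vmv : v ≠ m v := (hmne v).symm
  have d_umv : u ≠ m v := hunv
  have d_muv : m u ≠ v := fun h => hvne h.symm
  have d_mumv : m u ≠ m v := fun h => d_uv (by rw [← hmm u, h, hmm])
  -- all vertices are among the four
  have hall : ∀ a : V, a = u ∨ a = m u ∨ a = v ∨ a = m v := by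
    have step : ∀ (b c : V), G.Walk b c →
        (b = u ∨ b = m u ∨ b = v ∨ b = m v) → (c = u ∨ c = m u ∨ c = v ∨ c = m v) := by
      intro b c p
      induction p with
      | nil => exact id
      | cons h q ih =>
        rename_i b' c' d' _
        intro hb
        apply ih
        rcases hb with rfl | rfl | rfl | rfl
        · rcases k3 _ h with h' | h'
          · exact Or.inr (Or.inl h')
          · exact Or.inr (Or.inr (Or.inl h'))
        · rcases k1 _ h with h' | h'
          · exact Or.inl h'
          · exact Or.inr (Or.inr (Or.inr h'))
        · rcases k4 _ h with h' | h'
          · exact Or.inr (Or.inr (Or.inr h'))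
          · exact Or.inl h'
        · rcases k2 _ h with h' | h'
          · exact Or.inr (Or.inr (Or.inl h'))
          · exact Or.inr (Or.inl h')
    intro a
    obtain ⟨p⟩ := hconn.preconnected u a
    exact step u a p (Or.inl rfl)
  -- adjacency facts
  have nadj1 : ¬ G.Adj u (m v) := by
    intro h
    rcases k3 _ h with h' | h'
    · exact d_mumv h'.symm
    · exact d_vmv h'.symm
  have nadj2 : ¬ G.Adj v (m u) := by
    intro h
    rcases k4 _ h with h' | h'
    · exact d_mumv h'
    · exact d_umu h'.symm
  -- build the isomorphism
  let e : Fin 4 → V := fun i => if i = 0 then u else if i = 1 then v else if i = 2 then m v else m u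
  let g : V → Fin 4 := fun a => if a = u then 0 else if a = v then 1 else if a = m v then 2 else 3
  have he0 : e 0 = u := rfl
  have he1 : e 1 = v := rfl
  have he2 : e 2 = m v := rfl
  have he3 : e 3 = m u := rfl
  have hleft : Function.LeftInverse g e := by
    intro i
    fin_cases i <;> simp [e, g, d_uv, d_umu, d_vmv, d_umv, d_muv, d_mumv,
      d_uv.symm, d_umu.symm, d_vmv.symm, d_umv.symm, d_muv.symm, d_mumv.symm]
  have hright : Function.RightInverse g e := by
    intro a
    rcases hall a with rfl | rfl | rfl | rfl <;>
      simp [e, g, d_uv, d_umu, d_vmv, d_umv, d_muv, d_mumv,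
        d_uv.symm, d_umu.symm, d_vmv.symm, d_umv.symm, d_muv.symm, d_mumv.symm]
  let E : Fin 4 ≃ V := ⟨e, g, hleft, hright⟩
  have hmap : ∀ a b : Fin 4, G.Adj (E a) (E b) ↔ (cycleGraph 4).Adj a b := by
    intro a b
    fin_cases a <;> fin_cases b <;>
      simp only [E, Equiv.coe_fn_mk, he0, he1, he2, he3] <;>
      [skip; skip; skip; skip; skip; skip; skip; skip; skip; skip; skip; skip; skip; skip; skip; skip]
    · exact iff_of_false (G.irrefl) (by decide)
    · exact iff_of_true huv (by decide)
    · exact iff_of_false nadj1 (by decide)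
    · exact iff_of_true (hadjG u) (by decide)
    · exact iff_of_true huv.symm (by decide)
    · exact iff_of_false (G.irrefl) (by decide)
    · exact iff_of_true (hadjG v) (by decide)
    · exact iff_of_false nadj2 (by decide)
    · exact iff_of_false (fun h => nadj1 h.symm) (by decide)
    · exact iff_of_true (hadjG v).symm (by decide)
    · exact iff_of_false (G.irrefl) (by decide)
    · exact iff_of_true huv'.symm (by decide)
    · exact iff_of_true (hadjG u).symm (by decide)
    · exact iff_of_false (fun h => nadj2 h.symm) (by decide)
    · exact iff_of_true huv' (by decide)
    · exact iff_of_false (G.irrefl) (by decide)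
  exact ⟨(⟨E, fun {a b} => hmap a b⟩ : cycleGraph 4 ≃g G).symm⟩
end

section
/- Let G be a connected graph with perfect matching M and minimum degree at least 2, with |V(G)| > 4. Then there exist three distinct edges v1v2, v3v4, v5v6 of M such that v2v3 and v4v5 are edges of G. -/
open SimpleGraph

private lemma assemble {V : Type*} (G : SimpleGraph V) (M : G.Subgraph)
    (hm : M.IsMatching) (a b c d e f : V)
    (hab : M.Adj a b) (hcd : M.Adj c d) (hef : M.Adj e f)
    (hbc : G.Adj b c) (hde : G.Adj d e)
    (hac : a ≠ c) (hce : c ≠ e) (hbe : b ≠ e) (hbf : b ≠ f) :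
    ∃ v₁ v₂ v₃ v₄ v₅ v₆ : V,
      ([v₁, v₂, v₃, v₄, v₅, v₆] : List V).Nodup ∧
      M.Adj v₁ v₂ ∧ M.Adj v₃ v₄ ∧ M.Adj v₅ v₆ ∧
      G.Adj v₂ v₃ ∧ G.Adj v₄ v₅ := by
  have huniq : ∀ {x y z : V}, M.Adj x y → M.Adj x z → y = z := by
    intro x y z h1 h2
    exact (hm (M.edge_vert h1)).unique h1 h2
  have hab' := hab.ne
  have hcd' := hcd.ne
  have hef' := hef.ne
  have hbc' := hbc.ne
  have hde' := hde.ne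
  have had : a ≠ d := by
    intro h; subst h; exact hbc' (huniq hab hcd.symm)
  have hae : a ≠ e := by
    intro h; subst h; exact hbf (huniq hab hef)
  have haf : a ≠ f := by
    intro h; subst h; exact hbe (huniq hab hef.symm)
  have hbd : b ≠ d := by
    intro h; subst h; exact hac (huniq hab.symm hcd.symm)
  have hcf : c ≠ f := by
    intro h; subst h; exact hde' (huniq hcd hef.symm)
  have hdf : d ≠ f := by
    intro h; subst h; exact hce (huniq hcd.symm hef.symm)
  refine ⟨a, b, c, d, e, f, ?_, hab, hcd, hef, hbc, hde⟩
  simp only [List.nodup_cons, List.mem_cons, List.mem_singleton, List.not_mem_nil,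
    List.nodup_nil]
  push_neg
  tauto

theorem three_matching_edges_linked {V : Type*} [Fintype V]
    (G : SimpleGraph V) (hconn : G.Connected)
    (hdeg : ∀ v : V, 2 ≤ (G.neighborSet v).ncard)
    (M : G.Subgraph) (hM : M.IsPerfectMatching)
    (hcard : 4 < Fintype.card V) :
    ∃ v₁ v₂ v₃ v₄ v₅ v₆ : V,
      ([v₁, v₂, v₃, v₄, v₅, v₆] : List V).Nodup ∧
      M.Adj v₁ v₂ ∧ M.Adj v₃ v₄ ∧ M.Adj v₅ v₆ ∧
      G.Adj v₂ v₃ ∧ G.Adj v₄ v₅ := by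
  classical
  have hm := hM.1
  have hsp := hM.2
  have hpart : ∀ v : V, ∃ w, M.Adj v w := fun v => (hm (hsp v)).exists
  choose p hp using hpart
  have huniq : ∀ {x y : V}, M.Adj x y → y = p x := by
    intro x y h
    exact (hm (hsp x)).unique h (hp x)
  have hpp : ∀ v : V, p (p v) = v := fun v => (huniq (hp v).symm).symm
  -- every vertex has a neighbor avoiding any prescribed vertex
  have hnbr : ∀ v u : V, ∃ w, G.Adj v w ∧ w ≠ u := by
    intro v u
    by_contra h
    push_neg at h
    have hsub : G.neighborSet v ⊆ {u} := fun w hw => h w hw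
    have := Set.ncard_le_ncard hsub (Set.toFinite _)
    rw [Set.ncard_singleton] at this
    have := hdeg v
    omega
  have : Nonempty V := Fintype.card_pos_iff.mp (by omega)
  obtain ⟨v3⟩ := this
  obtain ⟨v4, hv4⟩ : ∃ x, x = p v3 := ⟨_, rfl⟩
  have h34 : M.Adj v3 v4 := hv4 ▸ hp v3
  obtain ⟨v2, h32, h24⟩ := hnbr v3 v4
  obtain ⟨v1, hv1⟩ : ∃ x, x = p v2 := ⟨_, rfl⟩
  have h21 : M.Adj v2 v1 := hv1 ▸ hp v2
  have h13 : v1 ≠ v3 := by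
    intro h; apply h24; rw [hv4, ← h, hv1, hpp]
  have h23 : v2 ≠ v3 := h32.ne.symm
  obtain ⟨w, hw4, hw3⟩ := hnbr v4 v3
  by_cases hw : w ≠ v1 ∧ w ≠ v2
  · -- case A: third edge found directly
    refine assemble G M hm v1 v2 v3 v4 w (p w) h21.symm h34 (hp w) h32.symm hw4
      h13 (Ne.symm hw3) (Ne.symm hw.2) ?_
    intro h; apply hw.1; rw [← hpp w, ← h, ← hv1]
  · push_neg at hw
    -- w ∈ {v1, v2}
    have hwS : w = v1 ∨ w = v2 := by
      by_cases h1 : w = v1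
      · exact Or.inl h1
      · exact Or.inr (hw h1)
    -- find a boundary edge leaving S = {v1,v2,v3,v4}
    have hex : ∃ t : V, t ∉ ({v1, v2, v3, v4} : Set V) := by
      by_contra h
      push_neg at h
      have hsub : (Set.univ : Set V) ⊆ {v1, v2, v3, v4} := fun t _ => h t
      have hle := Set.ncard_le_ncard hsub (Set.toFinite _)
      have h4 : ({v1, v2, v3, v4} : Set V).ncard ≤ 4 := by
        apply le_trans (Set.ncard_insert_le _ _)
        have h3 : ({v2, v3, v4} : Set V).ncard ≤ 3 := by
          apply Nat.le_trans (Set.ncard_insert_le _ _)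
          have h2 : ({v3, v4} : Set V).ncard ≤ 2 := by
            apply Nat.le_trans (Set.ncard_insert_le _ _)
            simp [Set.ncard_singleton]
          omega
        omega
      rw [Set.ncard_univ, Nat.card_eq_fintype_card] at hle
      omega
    obtain ⟨t0, ht0⟩ := hex
    obtain ⟨wk⟩ := hconn.preconnected v1 t0
    obtain ⟨d, -, hsS, htS⟩ := wk.exists_boundary_dart ({v1, v2, v3, v4} : Set V)
      (by simp) ht0
    obtain ⟨s, hsdef⟩ : ∃ x, x = d.fst := ⟨_, rfl⟩
    obtain ⟨t, htdef⟩ : ∃ x, x = d.snd := ⟨_, rfl⟩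
    rw [← hsdef] at hsS
    rw [← htdef] at htS
    have hst : G.Adj s t := hsdef ▸ htdef ▸ d.adj
    have ht1 : t ≠ v1 := by intro h; exact htS (by simp [h])
    have ht2 : t ≠ v2 := by intro h; exact htS (by simp [h])
    have ht3 : t ≠ v3 := by intro h; exact htS (by simp [h])
    have ht4 : t ≠ v4 := by intro h; exact htS (by simp [h])
    obtain ⟨u, hu⟩ : ∃ x, x = p t := ⟨_, rfl⟩
    have hut : M.Adj u t := hu ▸ (hp t).symm
    have hu1 : u ≠ v1 := by
      intro h; apply ht2; rw [← hpp t, ← hu, h, hv1, hpp]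
    have hu2 : u ≠ v2 := by
      intro h; apply ht1; rw [← hpp t, ← hu, h, ← hv1]
    have hu3 : u ≠ v3 := by
      intro h; apply ht4; rw [← hpp t, ← hu, h, ← hv4]
    have hu4 : u ≠ v4 := by
      intro h; apply ht3; rw [← hpp t, ← hu, h, hv4, hpp]
    have hsS' : s = v1 ∨ s = v2 ∨ s = v3 ∨ s = v4 := by simpa using hsS
    rcases hsS' with hs | hs | hs | hs
    · -- s = v1 : (u, t, v1, v2, v3, v4)
      exact assemble G M hm u t v1 v2 v3 v4 hut h21.symm h34 (hs ▸ hst.symm)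
        h32.symm hu1 h13 ht3 ht4
    · -- s = v2
      rcases hwS with hwv | hwv
      · -- w = v1 : (u, t, v2, v1, v4, v3)
        exact assemble G M hm u t v2 v1 v4 v3 hut h21 h34.symm (hs ▸ hst.symm)
          (hwv ▸ hw4.symm) hu2 (fun h => h24 h) ht4 ht3
      · -- w = v2 : look at a second neighbor of v1
        obtain ⟨y, hy1, hy2⟩ := hnbr v1 v2
        by_cases hy3 : y = v3
        · exact assemble G M hm u t v2 v1 v3 v4 hut h21 h34 (hs ▸ hst.symm)
            (hy3 ▸ hy1) hu2 h23 ht3 ht4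
        · by_cases hy4 : y = v4
          · exact assemble G M hm u t v2 v1 v4 v3 hut h21 h34.symm (hs ▸ hst.symm)
              (hy4 ▸ hy1) hu2 (fun h => h24 h) ht4 ht3
          · -- y ∉ S : (p y, y, v1, v2, v3, v4)
            have hpy1 : p y ≠ v1 := by
              intro h; apply hy2; rw [← hpp y, h, hv1, hpp]
            exact assemble G M hm (p y) y v1 v2 v3 v4 (hp y).symm h21.symm h34
              hy1.symm h32.symm hpy1 h13 hy3 hy4
    · -- s = v3 : (u, t, v3, v4, w, p w)
      have h3w : v3 ≠ w := Ne.symm hw3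
      have htw : t ≠ w := by
        rcases hwS with h | h <;> rw [h]
        · exact ht1
        · exact ht2
      have htpw : t ≠ p w := by
        rcases hwS with h | h
        · rw [h, hv1, hpp]; exact ht2
        · rw [h, ← hv1]; exact ht1
      exact assemble G M hm u t v3 v4 w (p w) hut h34 (hp w) (hs ▸ hst.symm) hw4
        hu3 h3w htw htpw
    · -- s = v4 : (v1, v2, v3, v4, t, u)
      exact assemble G M hm v1 v2 v3 v4 t u h21.symm h34 hut.symm h32.symm
        (hs ▸ hst) h13 (Ne.symm ht3) (Ne.symm ht2) (Ne.symm hu2)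
end

section
/- If G is a factor-critical graph, then for every edge xy of G, there exist perfect matchings Mx of G − x and My of G − y such that the symmetric-difference structure Mx ∪ My contains an alternating path of odd order connecting x and y. -/
open SimpleGraph

/-- A graph is factor-critical if deleting any vertex leaves a graph
with a perfect matching (expressed as a matching of `G` covering all
vertices except `v`). -/
def SimpleGraph.IsFactorCritical {V : Type*} (G : SimpleGraph V) : Prop :=
  ∀ v : V, ∃ M : G.Subgraph, M.IsMatching ∧ M.verts = {v}ᶜ

namespace FCAux

variable {V : Type*} {G : SimpleGraph V}

/-- Alternating walks ending at `x`: `Alt Mx My x v c q` means `q : G.Walk v x`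
alternates between `My` and `Mx` edges, the edge at the `x` end being in `My`,
and the next edge to be prepended at `v` should be in `cond c My Mx`. -/
inductive Alt (Mx My : G.Subgraph) (x : V) : (v : V) → Bool → G.Walk v x → Prop
  | nil : Alt Mx My x x true SimpleGraph.Walk.nil
  | cons {c : Bool} {v v' : V} {q : G.Walk v' x} (h : G.Adj v v')
      (hm : (cond c My Mx).Adj v v') (hq : Alt Mx My x v' c q) :
      Alt Mx My x v (!c) (SimpleGraph.Walk.cons h q)

variable {Mx My : G.Subgraph} {x y : V}

lemma matching_unique {M : G.Subgraph} (hM : M.IsMatching) {u z1 z2 : V}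
    (h1 : M.Adj u z1) (h2 : M.Adj u z2) : z1 = z2 := by
  obtain ⟨w, _, huniq⟩ := hM (M.edge_vert h1)
  rw [huniq z1 h1, huniq z2 h2]

lemma alt_sat (hMx : Mx.IsMatching) (hMy : My.IsMatching) (hx : x ∉ Mx.verts)
    {v : V} {c : Bool} {q : G.Walk v x} (halt : Alt Mx My x v c q) :
    (∀ u ∈ q.support, u ≠ v → ∀ z, (cond c My Mx).Adj u z → s(u, z) ∈ q.edges) ∧
    (∀ u ∈ q.support, ∀ z, (cond (!c) My Mx).Adj u z → s(u, z) ∈ q.edges) := by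
  induction halt with
  | nil =>
      refine ⟨?_, ?_⟩
      · intro u hu hne
        simp only [Walk.support_nil, List.mem_singleton] at hu
        exact absurd hu hne
      · intro u hu z hz
        simp only [Walk.support_nil, List.mem_singleton] at hu
        subst hu
        exact absurd (Mx.edge_vert (by simpa using hz)) hx
  | @cons c v v' q h hm hq ih =>
      obtain ⟨ih1, ih2⟩ := ih
      refine ⟨?_, ?_⟩
      · intro u hu hne z hz
        simp only [Walk.support_cons, List.mem_cons] at hu
        rcases hu with rfl | hu
        · exact absurd rfl hne
        · exact List.mem_cons_of_mem _ (ih2 u hu z hz)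
      · intro u hu z hz
        simp only [Bool.not_not] at hz
        simp only [Walk.support_cons, List.mem_cons] at hu
        rcases hu with rfl | hu
        · have := matching_unique (by cases c <;> [exact hMx; exact hMy])
            (show (cond c My Mx).Adj u z from hz) hm
          subst this
          simp [Walk.edges_cons]
        · by_cases huv : u = v'
          · subst huv
            have := matching_unique (by cases c <;> [exact hMx; exact hMy])
              (show (cond c My Mx).Adj u z from hz) hm.symm
            subst this
            simp [Walk.edges_cons, Sym2.eq_swap]
          · exact List.mem_cons_of_mem _ (ih1 u hu huv z hz)

lemma noRevisit (hMx : Mx.IsMatching) (hMy : My.IsMatching) (hx : x ∉ Mx.verts)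
    {v w : V} {c : Bool} {q : G.Walk v x} (halt : Alt Mx My x v c q) (hp : q.IsPath)
    (hm : (cond c My Mx).Adj v w) : w ∉ q.support := by
  intro hw
  have hwv : w ≠ v := (hm.adj_sub).ne'
  have hedge : s(w, v) ∈ q.edges :=
    (alt_sat hMx hMy hx halt).1 w hw hwv v hm.symm
  cases halt with
  | nil => simp [Walk.edges_nil] at hedge
  | @cons c' v v' q' h hm' hq' =>
      rw [Walk.cons_isPath_iff] at hp
      simp only [Walk.edges_cons, List.mem_cons] at hedge
      rcases hedge with heq | hmem
      · rw [Sym2.eq_iff] at heq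
        rcases heq with ⟨rfl, rfl⟩ | ⟨rfl, -⟩
        · exact hwv rfl
        · -- w = v', use saturation of q' for the matching `cond (!c')`
          have := (alt_sat hMx hMy hx hq').2 w (Walk.start_mem_support q') v
            (by simpa using hm.symm)
          exact hp.2 (Walk.snd_mem_support_of_mem_edges q' this)
      · exact hp.2 (Walk.snd_mem_support_of_mem_edges q' hmem)

lemma alt_nil_bool {c : Bool} (halt : Alt Mx My x x c Walk.nil) : c = true := by
  cases halt
  rfl

lemma extend (hMx : Mx.IsMatching) (hMy : My.IsMatching)
    (hVx : Mx.verts = {x}ᶜ) (hVy : My.verts = {y}ᶜ)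
    {v : V} {c : Bool} {q : G.Walk v x} (halt : Alt Mx My x v c q) (hp : q.IsPath)
    (hstop : ¬ (v = y ∧ c = true)) :
    ∃ (w : V) (h : G.Adj w v), Alt Mx My x w (!c) (Walk.cons h q) ∧
      (Walk.cons h q).IsPath := by
  have hx : x ∉ Mx.verts := by rw [hVx]; simp
  have hvmem : v ∈ (cond c My Mx).verts := by
    cases c with
    | true =>
        have hvy : v ≠ y := fun hvy => hstop ⟨hvy, rfl⟩
        rw [show cond true My Mx = My from rfl, hVy]
        simpa using hvy
    | false =>
        have hvx : v ≠ x := by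
          rintro rfl
          cases q with
          | nil => exact absurd (alt_nil_bool halt) (by simp)
          | cons h' q' =>
              rw [Walk.cons_isPath_iff] at hp
              exact hp.2 (Walk.end_mem_support q')
        rw [show cond false My Mx = Mx from rfl, hVx]
        simpa using hvx
  obtain ⟨w, hw, -⟩ := (by cases c <;> [exact hMx; exact hMy] :
    (cond c My Mx).IsMatching) hvmem
  have hwns : w ∉ q.support := noRevisit hMx hMy hx halt hp hw
  refine ⟨w, (hw.adj_sub).symm, Alt.cons _ hw.symm halt, hp.cons hwns⟩

lemma build (hMx : Mx.IsMatching) (hMy : My.IsMatching)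
    (hVx : Mx.verts = {x}ᶜ) (hVy : My.verts = {y}ᶜ) [Fintype V] :
    ∀ (n : ℕ) {v : V} {c : Bool} (q : G.Walk v x), Alt Mx My x v c q → q.IsPath →
      Fintype.card V ≤ n + q.support.length →
      ∃ p : G.Walk y x, Alt Mx My x y true p ∧ p.IsPath := by
  intro n
  induction n with
  | zero =>
      intro v c q halt hp hcard
      by_cases hstop : v = y ∧ c = true
      · obtain ⟨rfl, rfl⟩ := hstop
        exact ⟨q, halt, hp⟩
      · obtain ⟨w, h, halt', hp'⟩ := extend hMx hMy hVx hVy halt hp hstop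
        have h1 : (Walk.cons h q).support.length ≤ Fintype.card V :=
          hp'.support_nodup.length_le_card
        simp only [Walk.support_cons, List.length_cons] at h1
        omega
  | succ n ih =>
      intro v c q halt hp hcard
      by_cases hstop : v = y ∧ c = true
      · obtain ⟨rfl, rfl⟩ := hstop
        exact ⟨q, halt, hp⟩
      · obtain ⟨w, h, halt', hp'⟩ := extend hMx hMy hVx hVy halt hp hstop
        refine ih (Walk.cons h q) halt' hp' ?_
        simp only [Walk.support_cons, List.length_cons]
        omega

lemma alt_props (halt : Alt Mx My x v c q) :
    (∀ e ∈ q.edges, e ∈ Mx.edgeSet ∨ e ∈ My.edgeSet) ∧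
    List.Chain' (fun e f =>
      (e ∈ Mx.edgeSet ∧ f ∈ My.edgeSet) ∨
      (e ∈ My.edgeSet ∧ f ∈ Mx.edgeSet)) q.edges ∧
    (c = true → Even q.length) ∧ (c = false → Odd q.length) ∧
    (∀ e, q.edges.head? = some e → e ∈ (cond (!c) My Mx).edgeSet) := by
  induction halt with
  | nil => simp [Walk.edges_nil, List.Chain']
  | @cons c v v' q h hm hq ih =>
      obtain ⟨ih1, ih2, ih3, ih4, ih5⟩ := ih
      have hmem : s(v, v') ∈ (cond c My Mx).edgeSet := hm
      refine ⟨?_, ?_, ?_, ?_, ?_⟩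
      · intro e he
        simp only [Walk.edges_cons, List.mem_cons] at he
        rcases he with rfl | he
        · cases c
          · exact Or.inl hmem
          · exact Or.inr hmem
        · exact ih1 e he
      · rw [Walk.edges_cons, List.Chain', List.isChain_cons]
        refine ⟨?_, ih2⟩
        intro f hf
        have hf' := ih5 f hf
        cases c
        · exact Or.inl ⟨hmem, hf'⟩
        · exact Or.inr ⟨hmem, hf'⟩
      · intro hc
        have : c = false := by cases c <;> simp_all
        subst this
        exact (ih4 rfl).add_one
      · intro hc
        have : c = true := by cases c <;> simp_all
        subst this
        exact (ih3 rfl).add_one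
      · intro e he
        simp only [Walk.edges_cons, List.head?_cons, Option.some.injEq] at he
        subst he
        simpa [Bool.not_not] using hmem

end FCAux

theorem factorCritical_alternating_path {V : Type*} [Fintype V]
    (G : SimpleGraph V) (hfc : G.IsFactorCritical)
    {x y : V} (hxy : G.Adj x y) :
    ∃ (Mx My : G.Subgraph), Mx.IsMatching ∧ Mx.verts = {x}ᶜ ∧
      My.IsMatching ∧ My.verts = {y}ᶜ ∧
      ∃ p : G.Walk x y, p.IsPath ∧ Odd (p.length + 1) ∧
        (∀ e ∈ p.edges, e ∈ Mx.edgeSet ∨ e ∈ My.edgeSet) ∧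
        List.Chain' (fun e f =>
          (e ∈ Mx.edgeSet ∧ f ∈ My.edgeSet) ∨
          (e ∈ My.edgeSet ∧ f ∈ Mx.edgeSet)) p.edges := by
  obtain ⟨Mx, hMx, hVx⟩ := hfc x
  obtain ⟨My, hMy, hVy⟩ := hfc y
  refine ⟨Mx, My, hMx, hVx, hMy, hVy, ?_⟩
  obtain ⟨P, hPalt, hPpath⟩ := FCAux.build hMx hMy hVx hVy (Fintype.card V)
    (Walk.nil : G.Walk x x) FCAux.Alt.nil (Walk.IsPath.nil)
    (by simp)
  obtain ⟨h1, h2, h3, -, -⟩ := FCAux.alt_props hPalt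
  refine ⟨P.reverse, hPpath.reverse, ?_, ?_, ?_⟩
  · rw [Walk.length_reverse]
    exact (h3 rfl).add_one
  · intro e he
    rw [Walk.edges_reverse, List.mem_reverse] at he
    exact h1 e he
  · rw [Walk.edges_reverse, List.Chain', List.isChain_reverse]
    exact List.IsChain.imp (fun a b hab => by tauto) h2
end

section
/- Let G be a connected star-uniform graph with minimum degree at least 2 and no perfect matching, with Gallai–Edmonds decomposition D(G), A(G), C(G). Then A(G) is an independent set in G. -/
open SimpleGraph

/-- A matching is maximum if no matching of `G` has more edges. -/
def SimpleGraph.Subgraph.IsMaximumMatching {V : Type*} {G : SimpleGraph V}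
    (M : G.Subgraph) : Prop :=
  M.IsMatching ∧ ∀ M' : G.Subgraph, M'.IsMatching → M'.edgeSet.ncard ≤ M.edgeSet.ncard

/-- `D(G)`: the vertices missed by at least one maximum matching of `G`. -/
def SimpleGraph.geD {V : Type*} (G : SimpleGraph V) : Set V :=
  {v | ∃ M : G.Subgraph, M.IsMaximumMatching ∧ v ∉ M.verts}

/-- `A(G)`: the vertices outside `D(G)` adjacent to some vertex of `D(G)`. -/
def SimpleGraph.geA {V : Type*} (G : SimpleGraph V) : Set V :=
  {v | v ∉ G.geD ∧ ∃ u ∈ G.geD, G.Adj v u}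

/-- `C(G) = V(G) − A(G) − D(G)`. -/
def SimpleGraph.geC {V : Type*} (G : SimpleGraph V) : Set V :=
  (G.geD ∪ G.geA)ᶜ

open SimpleGraph.Subgraph

section Infra
variable {V : Type*} {G : SimpleGraph V}

lemma SU_partner_unique {M : G.Subgraph} (hM : M.IsMatching) {a b c : V}
    (hab : M.Adj a b) (hac : M.Adj a c) : c = b := by
  obtain ⟨w, _, huniq⟩ := hM (M.edge_vert hab)
  rw [huniq c hac, huniq b hab]

lemma SU_del_pair_matching {M : G.Subgraph} (hM : M.IsMatching) {a b : V} (hab : M.Adj a b) :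
    (M.deleteVerts {a, b}).IsMatching := by
  intro v hv
  rw [deleteVerts_verts, Set.mem_diff] at hv
  obtain ⟨hv1, hv2⟩ := hv
  obtain ⟨w, hw, huniq⟩ := hM hv1
  have hwab : w ∉ ({a, b} : Set V) := by
    rintro (rfl | rfl)
    · exact hv2 (by simp [SU_partner_unique hM hab hw.symm])
    · exact hv2 (by simp [SU_partner_unique hM hab.symm hw.symm])
  refine ⟨w, ?_, ?_⟩
  · show (M.deleteVerts {a, b}).Adj v w
    rw [Subgraph.deleteVerts_adj]
    exact ⟨hv1, hv2, M.edge_vert hw.symm, hwab, hw⟩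
  · intro y hy
    rw [Subgraph.deleteVerts_adj] at hy
    exact huniq y hy.2.2.2.2

lemma SU_del_pair_edgeSet {M : G.Subgraph} (hM : M.IsMatching) {a b : V} (hab : M.Adj a b) :
    (M.deleteVerts {a, b}).edgeSet = M.edgeSet \ {s(a, b)} := by
  ext e
  induction e with
  | _ x y =>
    simp only [Subgraph.mem_edgeSet, Subgraph.deleteVerts_adj, Set.mem_diff,
      Set.mem_singleton_iff, Set.mem_insert_iff]
    constructor
    · rintro ⟨hx, hx2, hy, hy2, hadj⟩
      refine ⟨hadj, ?_⟩
      intro he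
      rw [Sym2.eq_iff] at he
      rcases he with ⟨rfl, rfl⟩ | ⟨rfl, rfl⟩
      · exact hx2 (by simp)
      · exact hx2 (by simp)
    · rintro ⟨hadj, hne⟩
      refine ⟨M.edge_vert hadj, ?_, M.edge_vert hadj.symm, ?_, hadj⟩
      · rintro (rfl | rfl)
        · exact hne (by rw [SU_partner_unique hM hab hadj])
        · exact hne (by rw [SU_partner_unique hM hab.symm hadj]; exact Sym2.eq_swap)
      · rintro (rfl | rfl)
        · exact hne (by rw [SU_partner_unique hM hab hadj.symm]; exact Sym2.eq_swap)
        · exact hne (by rw [SU_partner_unique hM hab.symm hadj.symm])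

lemma SU_add_edge_matching {M : G.Subgraph} (hM : M.IsMatching) {x y : V}
    (hx : x ∉ M.verts) (hy : y ∉ M.verts) (hxy : G.Adj x y) :
    (M ⊔ G.subgraphOfAdj hxy).IsMatching := by
  refine hM.sup (SimpleGraph.Subgraph.IsMatching.subgraphOfAdj hxy) ?_
  rw [hM.support_eq_verts, SimpleGraph.support_subgraphOfAdj]
  rw [Set.disjoint_right]
  rintro z (rfl | rfl) <;> assumption

end Infra

section Max
variable {V : Type*} [Fintype V] {G : SimpleGraph V} {M : G.Subgraph}


/-- Swap lemma: replace matched edge `ab` by `bx` where `x` uncovered; `a` becomes exposed. -/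
lemma SU_swap_mem_geD (hM : M.IsMaximumMatching) {a b x : V} (hab : M.Adj a b)
    (hx : x ∉ M.verts) (hbx : G.Adj b x) : a ∈ G.geD := by
  classical
  have hmd := SU_del_pair_matching hM.1 hab
  have hbd : b ∉ (M.deleteVerts {a, b}).verts := by simp [Subgraph.deleteVerts_verts]
  have hxd : x ∉ (M.deleteVerts {a, b}).verts := by
    simp only [Subgraph.deleteVerts_verts, Set.mem_diff]
    tauto
  have hm' := SU_add_edge_matching hmd hbd hxd hbx
  have hedge : (M.deleteVerts {a, b} ⊔ G.subgraphOfAdj hbx).edgeSet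
      = insert s(b, x) (M.edgeSet \ {s(a, b)}) := by
    rw [Subgraph.edgeSet_sup, SU_del_pair_edgeSet hM.1 hab, SimpleGraph.edgeSet_subgraphOfAdj]
    rw [Set.union_singleton]
  have hbxnot : s(b, x) ∉ M.edgeSet := fun h1 =>
    hx (M.edge_vert (Subgraph.mem_edgeSet.mp h1).symm)
  have hcard : (M.deleteVerts {a, b} ⊔ G.subgraphOfAdj hbx).edgeSet.ncard = M.edgeSet.ncard := by
    rw [hedge]
    exact Set.ncard_exchange hbxnot (Subgraph.mem_edgeSet.mpr hab)
  refine ⟨_, ⟨hm', fun M'' hM'' => hcard ▸ hM.2 M'' hM''⟩, ?_⟩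
  rw [Subgraph.verts_sup, Set.mem_union]
  rintro (h | h)
  · rw [Subgraph.deleteVerts_verts, Set.mem_diff] at h
    exact h.2 (by simp)
  · simp only [SimpleGraph.subgraphOfAdj_verts, Set.mem_insert_iff, Set.mem_singleton_iff] at h
    rcases h with rfl | rfl
    · exact hab.ne rfl
    · exact hx (M.edge_vert hab)

/-- Two exposed vertices are never adjacent. -/
lemma SU_uncov_indep (hM : M.IsMaximumMatching) {x y : V} (hx : x ∉ M.verts)
    (hy : y ∉ M.verts) (hxy : G.Adj x y) : False := by
  have hm' := SU_add_edge_matching hM.1 hx hy hxy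
  have := hM.2 _ hm'
  rw [Subgraph.edgeSet_sup, SimpleGraph.edgeSet_subgraphOfAdj, Set.union_singleton,
    Set.ncard_insert_of_notMem (fun h => hx (M.edge_vert (Subgraph.mem_edgeSet.mp h)))] at this
  omega

/-- No "double pendant" on a matched edge: an augmenting path of length 3. -/
lemma SU_aug2 (hM : M.IsMaximumMatching) {a b x y : V} (hab : M.Adj a b) (hx : x ∉ M.verts)
    (hy : y ∉ M.verts) (hxy : x ≠ y) (hxa : G.Adj x a) (hyb : G.Adj y b) : False := by
  classical
  have hmd := SU_del_pair_matching hM.1 hab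
  set M1 := M.deleteVerts {a, b} with hM1
  have hv1 : M1.verts = M.verts \ {a, b} := Subgraph.deleteVerts_verts
  have ha1 : a ∉ M1.verts := by rw [hv1]; simp
  have hx1 : x ∉ M1.verts := by rw [hv1]; rintro ⟨h, -⟩; exact hx h
  have hm2 := SU_add_edge_matching hmd ha1 hx1 hxa.symm
  set M2 := M1 ⊔ G.subgraphOfAdj hxa.symm with hM2
  have hv2 : M2.verts = M1.verts ∪ {a, x} := Subgraph.verts_sup M1 _
  have hb2 : b ∉ M2.verts := by
    rw [hv2, hv1]
    rintro (⟨-, h⟩ | h)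
    · exact h (by simp)
    · rcases h with rfl | rfl
      · exact hab.ne rfl
      · exact hx (M.edge_vert hab.symm)
  have hy2 : y ∉ M2.verts := by
    rw [hv2, hv1]
    rintro (⟨h, -⟩ | h)
    · exact hy h
    · rcases h with rfl | rfl
      · exact hy (M.edge_vert hab)
      · exact hxy rfl
  have hm3 := SU_add_edge_matching hm2 hb2 hy2 hyb.symm
  have hE : (M2 ⊔ G.subgraphOfAdj hyb.symm).edgeSet
      = insert s(b, y) (insert s(a, x) (M.edgeSet \ {s(a, b)})) := by
    rw [Subgraph.edgeSet_sup, Subgraph.edgeSet_sup, SU_del_pair_edgeSet hM.1 hab,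
      SimpleGraph.edgeSet_subgraphOfAdj, SimpleGraph.edgeSet_subgraphOfAdj,
      Set.union_singleton, Set.union_singleton]
  have hax : s(a, x) ∉ M.edgeSet \ {s(a, b)} := by
    rintro ⟨h, -⟩
    exact hx (M.edge_vert (Subgraph.mem_edgeSet.mp h).symm)
  have hby : s(b, y) ∉ insert s(a, x) (M.edgeSet \ {s(a, b)}) := by
    rintro (h | ⟨h, -⟩)
    · rw [Sym2.eq_iff] at h
      rcases h with ⟨rfl, rfl⟩ | ⟨rfl, rfl⟩
      · exact hab.ne rfl
      · exact hy (M.edge_vert hab)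
    · exact hy (M.edge_vert (Subgraph.mem_edgeSet.mp h).symm)
  have hcard := hM.2 _ hm3
  rw [hE, Set.ncard_insert_of_notMem hby, Set.ncard_insert_of_notMem hax,
    Set.ncard_diff_singleton_add_one (Subgraph.mem_edgeSet.mpr hab)] at hcard
  omega

/-- Key configuration: matched edges `ab`, `uu'`, `vv'`, exposed `p, d`, with
`p~a`, `b~v'`, `u~d`.  Rematching exposes `v`, so `v ∈ D(G)`. -/
lemma SU_A4 (hM : M.IsMaximumMatching) {a b u u' v v' d p : V}
    (hab : M.Adj a b) (huu' : M.Adj u u') (hvv' : M.Adj v v')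
    (hd : d ∉ M.verts) (hp : p ∉ M.verts) (hpd : p ≠ d)
    (hau : a ∉ ({u, u', v, v'} : Set V)) (hbu : b ∉ ({u, u', v, v'} : Set V))
    (huv : u ≠ v) (huv' : u ≠ v') (hu'v : u' ≠ v) (hu'v' : u' ≠ v')
    (hpa : G.Adj p a) (hbv' : G.Adj b v') (hud : G.Adj u d) : v ∈ G.geD := by
  classical
  simp only [Set.mem_insert_iff, Set.mem_singleton_iff, not_or] at hau hbu
  obtain ⟨hau1, hau2, hau3, hau4⟩ := hau
  obtain ⟨hbu1, hbu2, hbu3, hbu4⟩ := hbu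
  have hav : a ∈ M.verts := M.edge_vert hab
  have hbv : b ∈ M.verts := M.edge_vert hab.symm
  have huV : u ∈ M.verts := M.edge_vert huu'
  have hu'V : u' ∈ M.verts := M.edge_vert huu'.symm
  have hvV : v ∈ M.verts := M.edge_vert hvv'
  have hv'V : v' ∈ M.verts := M.edge_vert hvv'.symm
  -- delete the three matched edges
  have hm1 := SU_del_pair_matching hM.1 hab
  have hadj1 : (M.deleteVerts {a, b}).Adj u u' := by
    rw [Subgraph.deleteVerts_adj]
    refine ⟨huV, ?_, hu'V, ?_, huu'⟩ <;> simp_all [eq_comm]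
  have hm2 := SU_del_pair_matching hm1 hadj1
  have hadj2 : ((M.deleteVerts {a, b}).deleteVerts {u, u'}).Adj v v' := by
    rw [Subgraph.deleteVerts_adj, Subgraph.deleteVerts_verts]
    refine ⟨⟨hvV, ?_⟩, ?_, ⟨hv'V, ?_⟩, ?_, ?_⟩
    · simp_all [eq_comm]
    · simp_all [eq_comm]
    · simp_all [eq_comm]
    · simp_all [eq_comm]
    · rw [Subgraph.deleteVerts_adj]
      refine ⟨hvV, ?_, hv'V, ?_, hvv'⟩ <;> simp_all [eq_comm]
  have hm3 := SU_del_pair_matching hm2 hadj2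
  set M3 := ((M.deleteVerts {a, b}).deleteVerts {u, u'}).deleteVerts {v, v'} with hM3
  have hv3 : M3.verts = ((M.verts \ {a, b}) \ {u, u'}) \ {v, v'} := by
    simp only [hM3, Subgraph.deleteVerts_verts]
  -- add the three new edges
  have hm4 := SU_add_edge_matching hm3 (show p ∉ M3.verts by rw [hv3]; rintro ⟨⟨⟨h, -⟩, -⟩, -⟩; exact hp h)
    (show a ∉ M3.verts by rw [hv3]; rintro ⟨⟨⟨-, h⟩, -⟩, -⟩; exact h (by simp)) hpa
  set M4 := M3 ⊔ G.subgraphOfAdj hpa with hM4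
  have hv4 : M4.verts = M3.verts ∪ {p, a} := Subgraph.verts_sup _ _
  have hm5 := SU_add_edge_matching hm4
    (show b ∉ M4.verts by
      rw [hv4, hv3]
      rintro (⟨⟨⟨-, h⟩, -⟩, -⟩ | h)
      · exact h (by simp)
      · rcases h with rfl | rfl
        · exact hp hbv
        · exact hab.ne rfl)
    (show v' ∉ M4.verts by
      rw [hv4, hv3]
      rintro (⟨-, h⟩ | h)
      · exact h (by simp)
      · rcases h with rfl | rfl
        · exact hp hv'V
        · exact hau4 rfl) hbv'
  set M5 := M4 ⊔ G.subgraphOfAdj hbv' with hM5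
  have hv5 : M5.verts = M4.verts ∪ {b, v'} := Subgraph.verts_sup _ _
  have hm6 := SU_add_edge_matching hm5
    (show u ∉ M5.verts by
      rw [hv5, hv4, hv3]
      rintro ((⟨⟨-, h⟩, -⟩ | h) | h)
      · exact h (by simp)
      · rcases h with rfl | rfl
        · exact hp huV
        · exact hau1 rfl
      · rcases h with rfl | rfl
        · exact hbu1 rfl
        · exact huv' rfl)
    (show d ∉ M5.verts by
      rw [hv5, hv4, hv3]
      rintro ((⟨⟨⟨h, -⟩, -⟩, -⟩ | h) | h)
      · exact hd h
      · rcases h with rfl | rfl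
        · exact hpd rfl
        · exact hd hav
      · rcases h with rfl | rfl
        · exact hd hbv
        · exact hd hv'V) hud
  set M6 := M5 ⊔ G.subgraphOfAdj hud with hM6
  -- edge count
  have hE3 : M3.edgeSet = ((M.edgeSet \ {s(a, b)}) \ {s(u, u')}) \ {s(v, v')} := by
    rw [hM3, SU_del_pair_edgeSet hm2 hadj2, SU_del_pair_edgeSet hm1 hadj1,
      SU_del_pair_edgeSet hM.1 hab]
  have hE6 : M6.edgeSet = insert s(u, d) (insert s(b, v') (insert s(p, a)
      (((M.edgeSet \ {s(a, b)}) \ {s(u, u')}) \ {s(v, v')}))) := by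
    rw [hM6, hM5, hM4, Subgraph.edgeSet_sup, Subgraph.edgeSet_sup, Subgraph.edgeSet_sup, hE3]
    simp only [SimpleGraph.edgeSet_subgraphOfAdj]
    rw [Set.union_singleton, Set.union_singleton, Set.union_singleton]
  have hsuu' : s(u, u') ∈ M.edgeSet \ {s(a, b)} := by
    refine ⟨Subgraph.mem_edgeSet.mpr huu', ?_⟩
    simp only [Set.mem_singleton_iff, Sym2.eq_iff]
    rintro (⟨rfl, rfl⟩ | ⟨rfl, rfl⟩) <;> simp_all
  have hsvv' : s(v, v') ∈ (M.edgeSet \ {s(a, b)}) \ {s(u, u')} := by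
    refine ⟨⟨Subgraph.mem_edgeSet.mpr hvv', ?_⟩, ?_⟩ <;>
      · simp only [Set.mem_singleton_iff, Sym2.eq_iff]
        rintro (⟨rfl, rfl⟩ | ⟨rfl, rfl⟩) <;> simp_all
  have hspa : s(p, a) ∉ ((M.edgeSet \ {s(a, b)}) \ {s(u, u')}) \ {s(v, v')} := by
    rintro ⟨⟨⟨h, -⟩, -⟩, -⟩
    exact hp (M.edge_vert (Subgraph.mem_edgeSet.mp h))
  have hsbv' : s(b, v') ∉ insert s(p, a)
      (((M.edgeSet \ {s(a, b)}) \ {s(u, u')}) \ {s(v, v')}) := by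
    rintro (h | ⟨⟨⟨h, -⟩, -⟩, -⟩)
    · rw [Sym2.eq_iff] at h
      rcases h with ⟨rfl, rfl⟩ | ⟨rfl, rfl⟩
      · exact hp hbv
      · exact hab.ne rfl
    · exact hau4 (SU_partner_unique hM.1 hab.symm (Subgraph.mem_edgeSet.mp h)).symm
  have hsud : s(u, d) ∉ insert s(b, v') (insert s(p, a)
      (((M.edgeSet \ {s(a, b)}) \ {s(u, u')}) \ {s(v, v')})) := by
    rintro (h | h | ⟨⟨⟨h, -⟩, -⟩, -⟩)
    · rw [Sym2.eq_iff] at h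
      rcases h with ⟨rfl, rfl⟩ | ⟨rfl, rfl⟩
      · exact hbu1 rfl
      · exact huv' rfl
    · rw [Sym2.eq_iff] at h
      rcases h with ⟨rfl, rfl⟩ | ⟨rfl, rfl⟩
      · exact hp huV
      · exact hau1 rfl
    · exact hd (M.edge_vert (Subgraph.mem_edgeSet.mp h).symm)
  have hcard : M6.edgeSet.ncard = M.edgeSet.ncard := by
    rw [hE6, Set.ncard_insert_of_notMem hsud, Set.ncard_insert_of_notMem hsbv',
      Set.ncard_insert_of_notMem hspa]
    have e3 := Set.ncard_diff_singleton_add_one hsvv'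
      (Set.toFinite ((M.edgeSet \ {s(a, b)}) \ {s(u, u')}))
    have e2 := Set.ncard_diff_singleton_add_one hsuu'
      (Set.toFinite (M.edgeSet \ {s(a, b)}))
    have e1 := Set.ncard_diff_singleton_add_one (Subgraph.mem_edgeSet.mpr hab)
      (Set.toFinite M.edgeSet)
    omega
  refine ⟨M6, ⟨hm6, fun M'' hM'' => hcard ▸ hM.2 M'' hM''⟩, ?_⟩
  rw [hM6, Subgraph.verts_sup, hv5, hv4, hv3]
  rintro (((⟨-, h⟩ | h) | h) | h)
  · exact h (by simp)
  · rcases h with rfl | rfl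
    · exact hp hvV
    · exact hau3 rfl
  · rcases h with rfl | rfl
    · exact hbu3 rfl
    · exact hvv'.ne rfl
  · rcases h with rfl | rfl
    · exact huv rfl
    · exact hd hvV

/-- Double swap: matched `uu'`, `vv'` with `u~v`, `u'~v'`, and `u~d` for exposed `d`:
then `v ∈ D(G)`. -/
lemma SU_A3 (hM : M.IsMaximumMatching) {u u' v v' d : V}
    (huu' : M.Adj u u') (hvv' : M.Adj v v') (hd : d ∉ M.verts)
    (huv : u ≠ v) (huv' : u ≠ v') (hu'v : u' ≠ v) (hu'v' : u' ≠ v')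
    (huvA : G.Adj u v) (hu'v'A : G.Adj u' v') (hud : G.Adj u d) : v ∈ G.geD := by
  classical
  have huV : u ∈ M.verts := M.edge_vert huu'
  have hu'V : u' ∈ M.verts := M.edge_vert huu'.symm
  have hvV : v ∈ M.verts := M.edge_vert hvv'
  have hv'V : v' ∈ M.verts := M.edge_vert hvv'.symm
  have hm1 := SU_del_pair_matching hM.1 huu'
  have hadj1 : (M.deleteVerts {u, u'}).Adj v v' := by
    rw [Subgraph.deleteVerts_adj]
    refine ⟨hvV, ?_, hv'V, ?_, hvv'⟩ <;> simp_all [eq_comm]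
  have hm2 := SU_del_pair_matching hm1 hadj1
  set M2 := (M.deleteVerts {u, u'}).deleteVerts {v, v'} with hM2
  have hv2 : M2.verts = (M.verts \ {u, u'}) \ {v, v'} := by
    simp only [hM2, Subgraph.deleteVerts_verts]
  have hm3 := SU_add_edge_matching hm2
    (show u ∉ M2.verts by rw [hv2]; rintro ⟨⟨-, h⟩, -⟩; exact h (by simp))
    (show v ∉ M2.verts by rw [hv2]; rintro ⟨-, h⟩; exact h (by simp)) huvA
  set M3 := M2 ⊔ G.subgraphOfAdj huvA with hM3
  have hv3 : M3.verts = M2.verts ∪ {u, v} := Subgraph.verts_sup _ _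
  have hm4 := SU_add_edge_matching hm3
    (show u' ∉ M3.verts by
      rw [hv3, hv2]
      rintro (⟨⟨-, h⟩, -⟩ | h)
      · exact h (by simp)
      · rcases h with rfl | rfl
        · exact huu'.ne rfl
        · exact hu'v rfl)
    (show v' ∉ M3.verts by
      rw [hv3, hv2]
      rintro (⟨-, h⟩ | h)
      · exact h (by simp)
      · rcases h with rfl | rfl
        · exact huv' rfl
        · exact hvv'.ne rfl) hu'v'A
  set M4 := M3 ⊔ G.subgraphOfAdj hu'v'A with hM4
  have hE4 : M4.edgeSet = insert s(u', v') (insert s(u, v)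
      ((M.edgeSet \ {s(u, u')}) \ {s(v, v')})) := by
    rw [hM4, hM3, Subgraph.edgeSet_sup, Subgraph.edgeSet_sup,
      SU_del_pair_edgeSet hm1 hadj1, SU_del_pair_edgeSet hM.1 huu']
    simp only [SimpleGraph.edgeSet_subgraphOfAdj]
    rw [Set.union_singleton, Set.union_singleton]
  have hsvv' : s(v, v') ∈ M.edgeSet \ {s(u, u')} := by
    refine ⟨Subgraph.mem_edgeSet.mpr hvv', ?_⟩
    simp only [Set.mem_singleton_iff, Sym2.eq_iff]
    rintro (⟨rfl, rfl⟩ | ⟨rfl, rfl⟩) <;> simp_all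
  have hsuv : s(u, v) ∉ (M.edgeSet \ {s(u, u')}) \ {s(v, v')} := by
    rintro ⟨⟨h, h2⟩, -⟩
    exact h2 (by simp [SU_partner_unique hM.1 huu' (Subgraph.mem_edgeSet.mp h)])
  have hsu'v' : s(u', v') ∉ insert s(u, v) ((M.edgeSet \ {s(u, u')}) \ {s(v, v')}) := by
    rintro (h | ⟨⟨h, h2⟩, -⟩)
    · rw [Sym2.eq_iff] at h
      rcases h with ⟨rfl, rfl⟩ | ⟨rfl, rfl⟩
      · exact huu'.ne rfl
      · exact huv' rfl
    · exact h2 (by simp [SU_partner_unique hM.1 huu'.symm (Subgraph.mem_edgeSet.mp h),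
        Sym2.eq_swap])
  have hcard : M4.edgeSet.ncard = M.edgeSet.ncard := by
    rw [hE4, Set.ncard_insert_of_notMem hsu'v', Set.ncard_insert_of_notMem hsuv]
    have e2 := Set.ncard_diff_singleton_add_one hsvv'
      (Set.toFinite (M.edgeSet \ {s(u, u')}))
    have e1 := Set.ncard_diff_singleton_add_one (Subgraph.mem_edgeSet.mpr huu')
      (Set.toFinite M.edgeSet)
    omega
  have hM4max : M4.IsMaximumMatching := ⟨hm4, fun M'' hM'' => hcard ▸ hM.2 M'' hM''⟩
  have hd4 : d ∉ M4.verts := by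
    rw [hM4, Subgraph.verts_sup, hv3, hv2]
    rintro ((⟨⟨h, -⟩, -⟩ | h) | h)
    · exact hd h
    · rcases h with rfl | rfl
      · exact hd huV
      · exact hd hvV
    · rcases h with rfl | rfl
      · exact hd hu'V
      · exact hd hv'V
  have hadjvu : M4.Adj v u := by
    rw [hM4, Subgraph.sup_adj, hM3, Subgraph.sup_adj]
    exact Or.inl (Or.inr (by simp))
  exact SU_swap_mem_geD hM4max hadjvu hd4 hud

end Max

section Star
variable {V : Type*} {G : SimpleGraph V}

/-- The spanning subgraph consisting of a matching `N` together with, for each vertex `x`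
outside the matching, the "pendant" edge from `x` to `f x`. -/
def SU_factor (N : G.Subgraph) (f : V → V) (hf : ∀ x, x ∉ N.verts → G.Adj x (f x)) :
    G.Subgraph where
  verts := Set.univ
  Adj x y := N.Adj x y ∨ (x ∉ N.verts ∧ f x = y) ∨ (y ∉ N.verts ∧ f y = x)
  adj_sub := by
    rintro x y (h | ⟨hx, rfl⟩ | ⟨hy, rfl⟩)
    · exact N.adj_sub h
    · exact hf x hx
    · exact (hf y hy).symm
  edge_vert := fun _ => Set.mem_univ _
  symm := by
    constructor
    rintro x y (h | h | h)
    · exact Or.inl h.symm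
    · exact Or.inr (Or.inr h)
    · exact Or.inr (Or.inl h)

@[simp] lemma SU_factor_verts {N : G.Subgraph} {f : V → V} {hf : ∀ x, x ∉ N.verts → G.Adj x (f x)} :
    (SU_factor N f hf).verts = Set.univ := rfl

lemma SU_factor_adj {N : G.Subgraph} {f : V → V} {hf : ∀ x, x ∉ N.verts → G.Adj x (f x)}
    {x y : V} : (SU_factor N f hf).Adj x y ↔
      N.Adj x y ∨ (x ∉ N.verts ∧ f x = y) ∨ (y ∉ N.verts ∧ f y = x) := Iff.rfl

variable {N : G.Subgraph} {f : V → V} {hf : ∀ x, x ∉ N.verts → G.Adj x (f x)}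

lemma SU_factor_isStarFactor (hN : N.IsMatching)
    (hfin : ∀ x, x ∉ N.verts → f x ∈ N.verts)
    (hconf : ∀ a b, N.Adj a b →
      ¬((∃ x, x ∉ N.verts ∧ f x = a) ∧ (∃ y, y ∉ N.verts ∧ f y = b))) :
    (SU_factor N f hf).IsStarFactor := by
  refine ⟨fun v => Set.mem_univ v, fun v => ?_, ?_⟩
  · by_cases hv : v ∈ N.verts
    · obtain ⟨w, hw, -⟩ := hN hv
      exact ⟨w, Or.inl hw⟩
    · exact ⟨f v, Or.inr (Or.inl ⟨hv, rfl⟩)⟩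
  · rintro x y (h | ⟨hx, rfl⟩ | ⟨hy, rfl⟩)
    · rcases not_and_or.mp (hconf x y h) with hc | hc
      · left
        rintro w (hw | ⟨hxv, -⟩ | ⟨hwv, hwx⟩)
        · exact SU_partner_unique hN h hw
        · exact absurd (N.edge_vert h) hxv
        · exact absurd ⟨w, hwv, hwx⟩ hc
      · right
        rintro w (hw | ⟨hyv, -⟩ | ⟨hwv, hwy⟩)
        · exact SU_partner_unique hN h.symm hw
        · exact absurd (N.edge_vert h.symm) hyv
        · exact absurd ⟨w, hwv, hwy⟩ hc
    · left
      rintro w (hw | ⟨-, rfl⟩ | ⟨hwv, hwx⟩)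
      · exact absurd (N.edge_vert hw) hx
      · rfl
      · exact absurd (hwx ▸ hfin w hwv) hx
    · right
      rintro w (hw | ⟨-, rfl⟩ | ⟨hwv, hwy⟩)
      · exact absurd (N.edge_vert hw) hy
      · rfl
      · exact absurd (hwy ▸ hfin w hwv) hy

open Classical in
/-- The host of a vertex: itself if matched, otherwise its pendant target. -/
noncomputable def SU_host (N : G.Subgraph) (f : V → V) (x : V) : V :=
  if x ∈ N.verts then x else f x

lemma SU_host_of_mem {x : V} (hx : x ∈ N.verts) : SU_host N f x = x := by
  simp [SU_host, hx]

lemma SU_host_of_not_mem {x : V} (hx : x ∉ N.verts) : SU_host N f x = f x := by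
  simp [SU_host, hx]

lemma SU_host_mem (hfin : ∀ x, x ∉ N.verts → f x ∈ N.verts) (x : V) :
    SU_host N f x ∈ N.verts := by
  by_cases h : x ∈ N.verts
  · rw [SU_host_of_mem h]; exact h
  · rw [SU_host_of_not_mem h]; exact hfin x h

/-- Map each vertex to the matching edge of its host. -/
noncomputable def SU_edgeOf (hN : N.IsMatching) (f : V → V)
    (hfin : ∀ x, x ∉ N.verts → f x ∈ N.verts) (x : V) : N.edgeSet :=
  hN.toEdge ⟨SU_host N f x, SU_host_mem hfin x⟩

lemma SU_edgeOf_adj (hN : N.IsMatching) (hfin : ∀ x, x ∉ N.verts → f x ∈ N.verts)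
    {x y : V} (h : (SU_factor N f hf).Adj x y) :
    SU_edgeOf hN f hfin x = SU_edgeOf hN f hfin y := by
  rcases h with h | ⟨hx, rfl⟩ | ⟨hy, rfl⟩
  · unfold SU_edgeOf
    have hx' : SU_host N f x = x := SU_host_of_mem (N.edge_vert h)
    have hy' : SU_host N f y = y := SU_host_of_mem (N.edge_vert h.symm)
    rw [show (⟨SU_host N f x, SU_host_mem hfin x⟩ : N.verts) = ⟨x, N.edge_vert h⟩ from
        Subtype.ext hx',
      show (⟨SU_host N f y, SU_host_mem hfin y⟩ : N.verts) = ⟨y, N.edge_vert h.symm⟩ from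
        Subtype.ext hy']
    exact hN.toEdge_eq_toEdge_of_adj h
  · unfold SU_edgeOf
    congr 1
    exact Subtype.ext (by
      show SU_host N f x = SU_host N f (f x)
      rw [SU_host_of_not_mem hx, SU_host_of_mem (hfin x hx)])
  · unfold SU_edgeOf
    congr 1
    exact Subtype.ext (by
      show SU_host N f (f y) = SU_host N f y
      rw [SU_host_of_not_mem hy, SU_host_of_mem (hfin y hy)])

lemma SU_reach_host (hN : N.IsMatching) (hfin : ∀ x, x ∉ N.verts → f x ∈ N.verts) (x : V) :
    (SU_factor N f hf).coe.Reachable ⟨x, Set.mem_univ x⟩ ⟨SU_host N f x, Set.mem_univ _⟩ := by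
  by_cases hx : x ∈ N.verts
  · rw [show (⟨SU_host N f x, Set.mem_univ _⟩ : (SU_factor N f hf).verts)
        = ⟨x, Set.mem_univ x⟩ from Subtype.ext (SU_host_of_mem hx)]
  · have : (SU_factor N f hf).coe.Adj ⟨x, Set.mem_univ x⟩ ⟨SU_host N f x, Set.mem_univ _⟩ := by
      show (SU_factor N f hf).Adj x (SU_host N f x)
      exact Or.inr (Or.inl ⟨hx, (SU_host_of_not_mem hx).symm⟩)
    exact this.reachable

lemma SU_factor_numComponents (hN : N.IsMatching)
    (hfin : ∀ x, x ∉ N.verts → f x ∈ N.verts) :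
    (SU_factor N f hf).numComponents = N.edgeSet.ncard := by
  classical
  set H := SU_factor N f hf with hH
  -- the lift of `SU_edgeOf` to connected components
  have hwalk : ∀ (a b : H.verts) (p : H.coe.Walk a b),
      SU_edgeOf hN f hfin a.val = SU_edgeOf hN f hfin b.val := by
    intro a b p
    induction p with
    | nil => rfl
    | cons hadj _ ih =>
      exact (SU_edgeOf_adj (hf := hf) hN hfin hadj).trans ih
  let Φ : H.coe.ConnectedComponent → N.edgeSet :=
    SimpleGraph.ConnectedComponent.lift (fun a => SU_edgeOf hN f hfin a.val)
      (fun a b p _ => hwalk a b p)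
  have hreach : ∀ (x : V) (e : N.edgeSet), SU_edgeOf hN f hfin x = e →
      ∀ z, z ∈ (e : Sym2 V) → H.coe.Reachable ⟨z, Set.mem_univ z⟩ ⟨x, Set.mem_univ x⟩ := by
    intro x e he z hz
    obtain ⟨w, hw, -⟩ := hN (SU_host_mem hfin x)
    have hte : e = ⟨s(SU_host N f x, w), hw⟩ := by
      rw [← he]
      exact hN.toEdge_eq_of_adj hw
    have hzmem : z = SU_host N f x ∨ z = w := by
      have := hz
      rw [hte] at this
      simpa [Sym2.mem_iff] using this
    have hreach2 : H.coe.Reachable ⟨SU_host N f x, Set.mem_univ _⟩ ⟨x, Set.mem_univ x⟩ :=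
      (SU_reach_host hN hfin x).symm
    rcases hzmem with rfl | rfl
    · exact hreach2
    · refine SimpleGraph.Reachable.trans ?_ hreach2
      have : H.coe.Adj ⟨z, Set.mem_univ z⟩ ⟨SU_host N f x, Set.mem_univ _⟩ := by
        show H.Adj z (SU_host N f x)
        exact Or.inl hw.symm
      exact this.reachable
  have hbij : Function.Bijective Φ := by
    constructor
    · intro c d
      refine SimpleGraph.ConnectedComponent.ind₂ (fun a b => ?_) c d
      intro heq
      have h1 : SU_edgeOf hN f hfin a.val = Φ (H.coe.connectedComponentMk a) := rfl
      have h2 : SU_edgeOf hN f hfin b.val = Φ (H.coe.connectedComponentMk b) := rfl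
      apply SimpleGraph.ConnectedComponent.sound
      set e := SU_edgeOf hN f hfin a.val with hea
      have heb : SU_edgeOf hN f hfin b.val = e := by rw [h2, ← heq, ← h1]
      have hz : (e : Sym2 V).out.1 ∈ (e : Sym2 V) := Sym2.out_fst_mem _
      set z := (e : Sym2 V).out.1
      have ra := hreach a.val e rfl z hz
      have rb := hreach b.val e heb z hz
      have ha : a = (⟨a.val, Set.mem_univ _⟩ : H.verts) := Subtype.ext rfl
      have hb : b = (⟨b.val, Set.mem_univ _⟩ : H.verts) := Subtype.ext rfl
      rw [ha, hb]
      exact ra.symm.trans rb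
    · rintro ⟨e, he⟩
      induction e with
      | _ x y =>
        have hxy : N.Adj x y := SimpleGraph.Subgraph.mem_edgeSet.mp he
        refine ⟨H.coe.connectedComponentMk ⟨x, Set.mem_univ x⟩, ?_⟩
        show SU_edgeOf hN f hfin x = ⟨s(x, y), he⟩
        unfold SU_edgeOf
        rw [show (⟨SU_host N f x, SU_host_mem hfin x⟩ : N.verts)
            = ⟨x, N.edge_vert hxy⟩ from Subtype.ext (if_pos (N.edge_vert hxy))]
        exact hN.toEdge_eq_of_adj hxy
  rw [SimpleGraph.Subgraph.numComponents, Nat.card_congr (Equiv.ofBijective Φ hbij),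
    Nat.card_coe_set_eq]

end Star


theorem starUniform_no_perfectMatching_geA_independent {V : Type*} [Fintype V]
    (G : SimpleGraph V) (hconn : G.Connected) (hsu : G.IsStarUniform)
    (hdeg : ∀ v : V, 2 ≤ (G.neighborSet v).ncard)
    (hnpm : ¬ ∃ M : G.Subgraph, M.IsPerfectMatching) :
    ∀ u ∈ G.geA, ∀ v ∈ G.geA, ¬ G.Adj u v := by
  classical
  intro u hu v hv huvA
  obtain ⟨huD, d, hdD, hud⟩ := hu
  obtain ⟨hvD, -⟩ := hv
  obtain ⟨M, hM, hdM⟩ := hdD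
  -- every vertex has a neighbour distinct from v
  have hex : ∀ x : V, ∃ c, G.Adj x c ∧ c ≠ v := by
    intro x
    by_contra hcon
    push_neg at hcon
    have hsub : G.neighborSet x ⊆ {v} := fun c hc => hcon c hc
    have := Set.ncard_le_ncard hsub (Set.finite_singleton v)
    rw [Set.ncard_singleton] at this
    have h2 := hdeg x
    omega
  -- u and v are covered by M
  have huM : u ∈ M.verts := by
    by_contra h
    exact huD ⟨M, hM, h⟩
  have hvM : v ∈ M.verts := by
    by_contra h
    exact hvD ⟨M, hM, h⟩
  obtain ⟨u', huu', -⟩ := hM.1 huM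
  obtain ⟨v', hvv', -⟩ := hM.1 hvM
  -- if uv were a matching edge, a swap would expose v
  have huvM : ¬ M.Adj u v := fun h => hvD (SU_swap_mem_geD hM h.symm hdM hud)
  -- distinctness
  have hu'v : u' ≠ v := fun h => huvM (h ▸ huu')
  have hv'u : v' ≠ u := fun h => huvM ((h ▸ hvv').symm)
  have hu'v' : u' ≠ v' := by
    intro h
    exact huvA.ne (SU_partner_unique hM.1 hvv'.symm (h ▸ huu').symm)
  have huv : u ≠ v := huvA.ne
  have huu'ne : u ≠ u' := (M.adj_sub huu').ne
  have hvv'ne : v ≠ v' := (M.adj_sub hvv').ne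
  have hu'M : u' ∈ M.verts := M.edge_vert huu'.symm
  have hv'M : v' ∈ M.verts := M.edge_vert hvv'.symm
  -- pendant function for the first star factor
  have hex1 : ∀ x, x ∉ M.verts → ∃ c, G.Adj x c ∧ c ∈ M.verts := by
    intro x hx
    obtain ⟨c, hc, -⟩ := hex x
    refine ⟨c, hc, ?_⟩
    by_contra hcM
    exact SU_uncov_indep hM hx hcM hc
  set f₁ : V → V := fun x =>
    if h : ∃ c, G.Adj x c ∧ c ∈ M.verts then h.choose else x with hf₁def
  have hf₁ : ∀ x, x ∉ M.verts → G.Adj x (f₁ x) := by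
    intro x hx
    rw [hf₁def]
    simp only [dif_pos (hex1 x hx)]
    exact (hex1 x hx).choose_spec.1
  have hfin₁ : ∀ x, x ∉ M.verts → f₁ x ∈ M.verts := by
    intro x hx
    rw [hf₁def]
    simp only [dif_pos (hex1 x hx)]
    exact (hex1 x hx).choose_spec.2
  have hconf₁ : ∀ a b, M.Adj a b →
      ¬((∃ x, x ∉ M.verts ∧ f₁ x = a) ∧ (∃ y, y ∉ M.verts ∧ f₁ y = b)) := by
    rintro a b hab ⟨⟨x, hx, hxa⟩, ⟨y, hy, hyb⟩⟩
    have hxy : x ≠ y := by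
      rintro rfl
      exact (M.adj_sub hab).ne (hxa ▸ hyb ▸ rfl)
    exact SU_aug2 hM hab hx hy hxy (hxa ▸ hf₁ x hx) (hyb ▸ hf₁ y hy)
  have hH₁ := SU_factor_isStarFactor (hf := hf₁) hM.1 hfin₁ hconf₁
  have hH₁c := SU_factor_numComponents (hf := hf₁) hM.1 hfin₁
  -- the second matching N₂ : remove uu' and vv', add ud
  have hm1 := SU_del_pair_matching hM.1 huu'
  have hadj1 : (M.deleteVerts {u, u'}).Adj v v' := by
    rw [SimpleGraph.Subgraph.deleteVerts_adj]
    refine ⟨hvM, ?_, hv'M, ?_, hvv'⟩ <;> simp_all [eq_comm]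
  have hm2 := SU_del_pair_matching hm1 hadj1
  have hm3 := SU_add_edge_matching hm2
    (show u ∉ ((M.deleteVerts {u, u'}).deleteVerts {v, v'}).verts by
      simp only [SimpleGraph.Subgraph.deleteVerts_verts]
      rintro ⟨⟨-, h⟩, -⟩; exact h (by simp))
    (show d ∉ ((M.deleteVerts {u, u'}).deleteVerts {v, v'}).verts by
      simp only [SimpleGraph.Subgraph.deleteVerts_verts]
      rintro ⟨⟨h, -⟩, -⟩; exact hdM h) hud
  set N₂ := (M.deleteVerts {u, u'}).deleteVerts {v, v'} ⊔ G.subgraphOfAdj hud with hN₂def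
  have hv₂ : N₂.verts = ((M.verts \ {u, u'}) \ {v, v'}) ∪ {u, d} := by
    rw [hN₂def, SimpleGraph.Subgraph.verts_sup]
    simp only [SimpleGraph.Subgraph.deleteVerts_verts, SimpleGraph.subgraphOfAdj_verts]
  have hdN₂ : d ∈ N₂.verts := by rw [hv₂]; right; simp
  have huN₂ : u ∈ N₂.verts := by rw [hv₂]; right; simp
  have hnotin : ∀ x, x ∉ N₂.verts → x ≠ u ∧ x ≠ d ∧ (x = u' ∨ x = v ∨ x = v' ∨ x ∉ M.verts) := by
    intro x hx
    rw [hv₂] at hx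
    have hxd : x ∉ ({u, d} : Set V) := fun h => hx (Set.mem_union_right _ h)
    have hxdiff : x ∉ (M.verts \ {u, u'}) \ {v, v'} := fun h => hx (Set.mem_union_left _ h)
    have hxu : x ≠ u := fun h => hxd (by rw [h]; simp)
    have hxdne : x ≠ d := fun h => hxd (by rw [h]; simp)
    refine ⟨hxu, hxdne, ?_⟩
    by_cases hA : x = u'
    · exact Or.inl hA
    by_cases hB : x = v
    · exact Or.inr (Or.inl hB)
    by_cases hC : x = v'
    · exact Or.inr (Or.inr (Or.inl hC))
    by_cases hD : x ∈ M.verts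
    · exfalso
      refine hxdiff ⟨⟨hD, ?_⟩, ?_⟩
      · rintro (rfl | rfl)
        · exact hxu rfl
        · exact hA rfl
      · rintro (rfl | rfl)
        · exact hB rfl
        · exact hC rfl
    · exact Or.inr (Or.inr (Or.inr hD))
  -- the pendant function for the second star factor
  set f₂ : V → V := fun x => if x = u' ∨ x = v then u else (hex x).choose with hf₂def
  have hf₂u : ∀ x, (x = u' ∨ x = v) → f₂ x = u := by
    intro x hx
    rw [hf₂def]
    simp only [if_pos hx]
  have hf₂c : ∀ x, ¬(x = u' ∨ x = v) → f₂ x = (hex x).choose := by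
    intro x hx
    rw [hf₂def]
    simp only [if_neg hx]
  have hkey : ∀ x, x ∉ N₂.verts → ¬(x = u' ∨ x = v) →
      (x = v' ∨ x ∉ M.verts) ∧ G.Adj x (f₂ x) ∧ f₂ x ∈ M.verts ∧
        f₂ x ≠ u' ∧ f₂ x ≠ v ∧ f₂ x ≠ v' := by
    intro x hx hno
    obtain ⟨hxu, hxd, hcase⟩ := hnotin x hx
    have hcase' : x = v' ∨ x ∉ M.verts := by
      rcases hcase with h | h | h | h
      · exact absurd (Or.inl h) hno
      · exact absurd (Or.inr h) hno
      · exact Or.inl h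
      · exact Or.inr h
    have hadj : G.Adj x (f₂ x) := by rw [hf₂c x hno]; exact (hex x).choose_spec.1
    have hfv : f₂ x ≠ v := by rw [hf₂c x hno]; exact (hex x).choose_spec.2
    have hfM : f₂ x ∈ M.verts := by
      by_contra hcM
      rcases hcase' with rfl | hxM
      · exact hvD (SU_swap_mem_geD hM hvv' hcM hadj)
      · exact SU_uncov_indep hM hxM hcM hadj
    have hfu' : f₂ x ≠ u' := by
      intro he
      rcases hcase' with rfl | hxM
      · exact hvD (SU_A3 hM huu' hvv' hdM huv (Ne.symm hv'u) hu'v hu'v' huvA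
          (he ▸ hadj).symm hud)
      · exact SU_aug2 hM huu' hdM hxM hxd.symm hud.symm (he ▸ hadj)
    have hfv' : f₂ x ≠ v' := by
      intro he
      rcases hcase' with rfl | hxM
      · exact (he ▸ hadj).ne rfl
      · exact hvD (SU_swap_mem_geD hM hvv' hxM (he ▸ hadj).symm)
    exact ⟨hcase', hadj, hfM, hfu', hfv, hfv'⟩
  have hf₂ : ∀ x, x ∉ N₂.verts → G.Adj x (f₂ x) := by
    intro x hx
    by_cases hno : x = u' ∨ x = v
    · rw [hf₂u x hno]
      rcases hno with rfl | rfl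
      · exact (M.adj_sub huu').symm
      · exact huvA.symm
    · exact (hkey x hx hno).2.1
  have hfin₂ : ∀ x, x ∉ N₂.verts → f₂ x ∈ N₂.verts := by
    intro x hx
    by_cases hno : x = u' ∨ x = v
    · rw [hf₂u x hno]; exact huN₂
    · obtain ⟨-, -, hfM, hfu', hfv, hfv'⟩ := hkey x hx hno
      rw [hv₂]
      by_cases hfu : f₂ x = u
      · right; rw [hfu]; simp
      · left
        refine ⟨⟨hfM, ?_⟩, ?_⟩
        · rintro (h | h)
          · exact hfu h
          · exact hfu' h
        · rintro (h | h)
          · exact hfv h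
          · exact hfv' h
  have hconf₂ : ∀ a b, N₂.Adj a b →
      ¬((∃ x, x ∉ N₂.verts ∧ f₂ x = a) ∧ (∃ y, y ∉ N₂.verts ∧ f₂ y = b)) := by
    rintro a b hab ⟨⟨x, hx, hxa⟩, ⟨y, hy, hyb⟩⟩
    have hnopend_d : ∀ z, z ∉ N₂.verts → f₂ z ≠ d := by
      intro z hz he
      by_cases hno : z = u' ∨ z = v
      · rw [hf₂u z hno] at he
        exact hdM (he ▸ huM)
      · exact hdM (he ▸ (hkey z hz hno).2.2.1)
    rw [hN₂def, SimpleGraph.Subgraph.sup_adj] at hab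
    rcases hab with hab | hab
    · -- a matching edge of M away from u,u',v,v'
      rw [SimpleGraph.Subgraph.deleteVerts_adj] at hab
      obtain ⟨ha1, ha2, hb1, hb2, hab⟩ := hab
      rw [SimpleGraph.Subgraph.deleteVerts_adj] at hab
      obtain ⟨ha3, ha4, hb3, hb4, hab⟩ := hab
      simp only [Set.mem_insert_iff, Set.mem_singleton_iff, not_or] at ha2 ha4 hb2 hb4
      -- neither a nor b can be `u`, so neither pendant comes from {u', v}
      have hxno : ¬(x = u' ∨ x = v) := by
        intro hno
        rw [hf₂u x hno] at hxa
        exact ha4.1 hxa.symm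
      have hyno : ¬(y = u' ∨ y = v) := by
        intro hno
        rw [hf₂u y hno] at hyb
        exact hb4.1 hyb.symm
      obtain ⟨hxc, hxadj, -, -, -, -⟩ := hkey x hx hxno
      obtain ⟨hyc, hyadj, -, -, -, -⟩ := hkey y hy hyno
      have hxyne : x ≠ y := by
        rintro rfl
        exact (M.adj_sub hab).ne (hxa ▸ hyb ▸ rfl)
      have haS : a ∉ ({u, u', v, v'} : Set V) := by
        simp only [Set.mem_insert_iff, Set.mem_singleton_iff, not_or]
        exact ⟨ha4.1, ha4.2, ha2.1, ha2.2⟩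
      have hbS : b ∉ ({u, u', v, v'} : Set V) := by
        simp only [Set.mem_insert_iff, Set.mem_singleton_iff, not_or]
        exact ⟨hb4.1, hb4.2, hb2.1, hb2.2⟩
      rcases hxc with rfl | hxM <;> rcases hyc with rfl | hyM
      · exact hxyne rfl
      · -- x = v' pendant at a, y uncovered pendant at b
        exact hvD (SU_A4 hM hab.symm huu' hvv' hdM hyM ((hnotin y hy).2.1) hbS haS
          huv (Ne.symm hv'u) hu'v hu'v' (hyb ▸ hyadj) (hxa ▸ hxadj).symm hud)
      · -- y = v' pendant at b, x uncovered pendant at a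
        exact hvD (SU_A4 hM hab huu' hvv' hdM hxM ((hnotin x hx).2.1) haS hbS
          huv (Ne.symm hv'u) hu'v hu'v' (hxa ▸ hxadj) (hyb ▸ hyadj).symm hud)
      · exact SU_aug2 hM hab hxM hyM hxyne (hxa ▸ hxadj) (hyb ▸ hyadj)
    · -- the edge ud : no pendant can land on d
      rw [SimpleGraph.subgraphOfAdj_adj, Sym2.eq_iff] at hab
      rcases hab with ⟨rfl, rfl⟩ | ⟨rfl, rfl⟩
      · exact hnopend_d y hy hyb
      · exact hnopend_d x hx hxa
  have hH₂ := SU_factor_isStarFactor (hf := hf₂) hm3 hfin₂ hconf₂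
  have hH₂c := SU_factor_numComponents (hf := hf₂) hm3 hfin₂
  -- edge counts
  have hsvv'mem : s(v, v') ∈ M.edgeSet \ {s(u, u')} := by
    refine ⟨SimpleGraph.Subgraph.mem_edgeSet.mpr hvv', ?_⟩
    simp only [Set.mem_singleton_iff, Sym2.eq_iff]
    rintro (⟨rfl, rfl⟩ | ⟨rfl, rfl⟩) <;> simp_all
  have hE₂ : N₂.edgeSet = insert s(u, d) ((M.edgeSet \ {s(u, u')}) \ {s(v, v')}) := by
    rw [hN₂def, SimpleGraph.Subgraph.edgeSet_sup, SU_del_pair_edgeSet hm1 hadj1,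
      SU_del_pair_edgeSet hM.1 huu', SimpleGraph.edgeSet_subgraphOfAdj, Set.union_singleton]
  have hsudnot : s(u, d) ∉ (M.edgeSet \ {s(u, u')}) \ {s(v, v')} := by
    rintro ⟨⟨h, -⟩, -⟩
    exact hdM (M.edge_vert (SimpleGraph.Subgraph.mem_edgeSet.mp h).symm)
  have hN₂card : N₂.edgeSet.ncard = ((M.edgeSet \ {s(u, u')}) \ {s(v, v')}).ncard + 1 := by
    rw [hE₂, Set.ncard_insert_of_notMem hsudnot]
  have e1 := Set.ncard_diff_singleton_add_one (SimpleGraph.Subgraph.mem_edgeSet.mpr huu')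
    (Set.toFinite M.edgeSet)
  have e2 := Set.ncard_diff_singleton_add_one hsvv'mem
    (Set.toFinite (M.edgeSet \ {s(u, u')}))
  have hfinal := hsu _ _ hH₁ hH₂
  rw [hH₁c, hH₂c, hN₂card] at hfinal
  omega
end
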